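/- arXiv:1410.3988 — 12 statements merged into one kernel-verified Lean document; each statement's English description precedes it below -/
import Mathlib

section
/- Let 𝒳 and 𝒴 be finite sets, p_X an input pmf on 𝒳, and W a strictly positive channel from 𝒳 to 𝒴, with joint pmf p(x,y) = p_X(x)·W(y|x) and output pmf p_Y(y) = Σ_x p_X(x)·W(y|x). Then the mutual information satisfies I(p_X, W) ≤ Σ_{x,y} [p(x,y) − p_X(x)·p_Y(y)] · log W(y|x). -/
open scoped BigOperators

/-- The mutual information of an input pmf `pX` over a strictly positive channel
`W` is bounded above by `∑ (x,y), (p(x,y) - pX x * pY y) * log (W x y)`, where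
`p(x,y) = pX x * W x y` is the joint pmf and `pY` the output pmf. -/
theorem stmt_1 {𝒳 𝒴 : Type*} [Fintype 𝒳] [Fintype 𝒴]
    (pX : 𝒳 → ℝ) (W : 𝒳 → 𝒴 → ℝ)
    (hpX0 : ∀ x, 0 ≤ pX x) (hpX1 : ∀ x, pX x ≤ 1) (hpXsum : ∑ x, pX x = 1)
    (hWpos : ∀ x y, 0 < W x y) (hWle : ∀ x y, W x y ≤ 1)
    (hWsum : ∀ x, ∑ y, W x y = 1) :
    (∑ x, ∑ y, pX x * W x y *
        Real.log (pX x * W x y / (pX x * (∑ x', pX x' * W x' y))))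
      ≤ ∑ x, ∑ y, (pX x * W x y - pX x * (∑ x', pX x' * W x' y)) * Real.log (W x y) := by
  set pY : 𝒴 → ℝ := fun y => ∑ x', pX x' * W x' y with hpY_def
  have hpYpos : ∀ y, 0 < pY y := by
    intro y
    obtain ⟨x0, hx0⟩ : ∃ x, 0 < pX x := by
      by_contra h
      push_neg at h
      have h0 : ∑ x, pX x = 0 :=
        Finset.sum_eq_zero fun x _ => le_antisymm (h x) (hpX0 x)
      rw [h0] at hpXsum; norm_num at hpXsum
    have h1 : 0 < pX x0 * W x0 y := mul_pos hx0 (hWpos x0 y)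
    exact h1.trans_le (Finset.single_le_sum
      (fun x _ => mul_nonneg (hpX0 x) (hWpos x y).le) (Finset.mem_univ x0))
  -- Rewrite the LHS term
  have hL : ∀ x y, pX x * W x y * Real.log (pX x * W x y / (pX x * pY y))
      = pX x * W x y * Real.log (W x y) - pX x * W x y * Real.log (pY y) := by
    intro x y
    rcases eq_or_lt_of_le (hpX0 x) with h | h
    · simp [← h]
    · have : pX x * W x y / (pX x * pY y) = W x y / pY y := by
        rw [mul_div_mul_left _ _ h.ne']
      rw [this, Real.log_div (hWpos x y).ne' (hpYpos y).ne']
      ring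
  -- Key Jensen-type inequality
  have key : ∀ y, ∑ x, pX x * Real.log (W x y) ≤ Real.log (pY y) := by
    intro y
    have h1 : ∀ x, pX x * Real.log (W x y)
        ≤ pX x * (Real.log (pY y) + (W x y / pY y - 1)) := by
      intro x
      refine mul_le_mul_of_nonneg_left ?_ (hpX0 x)
      have hlog := Real.log_le_sub_one_of_pos (div_pos (hWpos x y) (hpYpos y))
      have heq : Real.log (W x y)
          = Real.log (pY y) + Real.log (W x y / pY y) := by
        rw [Real.log_div (hWpos x y).ne' (hpYpos y).ne']; ring
      linarith
    have hs : ∑ x, pX x * (W x y / pY y) = 1 := by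
      have : ∑ x, pX x * (W x y / pY y) = (∑ x, pX x * W x y) / pY y := by
        rw [Finset.sum_div]
        exact Finset.sum_congr rfl fun x _ => (mul_div_assoc _ _ _).symm
      rw [this]
      exact div_self (hpYpos y).ne'
    calc ∑ x, pX x * Real.log (W x y)
        ≤ ∑ x, pX x * (Real.log (pY y) + (W x y / pY y - 1)) :=
          Finset.sum_le_sum fun x _ => h1 x
      _ = (∑ x, pX x) * Real.log (pY y) + (∑ x, pX x * (W x y / pY y))
            - ∑ x, pX x := by
          rw [Finset.sum_mul]
          rw [← Finset.sum_add_distrib, ← Finset.sum_sub_distrib]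
          exact Finset.sum_congr rfl fun x _ => by ring
      _ = Real.log (pY y) := by rw [hpXsum, hs]; ring
  -- Reduce to comparing the cross terms
  have hLHS : (∑ x, ∑ y, pX x * W x y * Real.log (pX x * W x y / (pX x * pY y)))
      = (∑ x, ∑ y, pX x * W x y * Real.log (W x y))
        - ∑ x, ∑ y, pX x * W x y * Real.log (pY y) := by
    rw [← Finset.sum_sub_distrib]
    refine Finset.sum_congr rfl fun x _ => ?_
    rw [← Finset.sum_sub_distrib]
    exact Finset.sum_congr rfl fun y _ => hL x y
  have hRHS : (∑ x, ∑ y, (pX x * W x y - pX x * pY y) * Real.log (W x y))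
      = (∑ x, ∑ y, pX x * W x y * Real.log (W x y))
        - ∑ x, ∑ y, pX x * pY y * Real.log (W x y) := by
    rw [← Finset.sum_sub_distrib]
    refine Finset.sum_congr rfl fun x _ => ?_
    rw [← Finset.sum_sub_distrib]
    exact Finset.sum_congr rfl fun y _ => by ring
  rw [hLHS, hRHS]
  have hcross : (∑ x, ∑ y, pX x * pY y * Real.log (W x y))
      ≤ ∑ x, ∑ y, pX x * W x y * Real.log (pY y) := by
    have hB : (∑ x, ∑ y, pX x * W x y * Real.log (pY y))
        = ∑ y, pY y * Real.log (pY y) := by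
      rw [Finset.sum_comm]
      refine Finset.sum_congr rfl fun y _ => ?_
      rw [hpY_def, Finset.sum_mul]
    have hC : (∑ x, ∑ y, pX x * pY y * Real.log (W x y))
        = ∑ y, pY y * ∑ x, pX x * Real.log (W x y) := by
      rw [Finset.sum_comm]
      refine Finset.sum_congr rfl fun y _ => ?_
      rw [Finset.mul_sum]
      exact Finset.sum_congr rfl fun x _ => by ring
    rw [hB, hC]
    exact Finset.sum_le_sum fun y _ =>
      mul_le_mul_of_nonneg_left (key y) (hpYpos y).le
  linarith
end

section
/- Let X be a real random variable with finite second moment, let N be independent of X with N distributed as a Gaussian with mean μ and variance σ² > 0, and set Y = X + N. Let X′ be a random variable independent of Y with the same distribution as X and finite second moment. Denote by φ(y|x) the Gaussian density with mean x + μ and variance σ² evaluated at y. Then E[log φ(Y|X)] − E[log φ(Y|X′)] = Var(X)/σ². -/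
open MeasureTheory ProbabilityTheory
open scoped NNReal ENNReal

open Real in
lemma my_integrable_sq_gaussianReal (μ : ℝ) {v : ℝ≥0} (hv : v ≠ 0) :
    Integrable (fun x => x ^ 2) (gaussianReal μ v) := by
  have hv' : (0:ℝ) < (v:ℝ) := by positivity
  have hb : (0:ℝ) < (2 * (v:ℝ))⁻¹ := by positivity
  set b : ℝ := (2 * (v:ℝ))⁻¹ with hb_def
  have hrp : ∀ x : ℝ, x ^ (2:ℝ) = x ^ 2 := fun x => by
    rw [show (2:ℝ) = ((2:ℕ):ℝ) by norm_num, Real.rpow_natCast]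
  have I2 : Integrable (fun x : ℝ => x ^ 2 * rexp (-b * x ^ 2)) := by
    have := integrable_rpow_mul_exp_neg_mul_sq hb (s := 2) (by norm_num)
    simpa [hrp] using this
  have I1 : Integrable (fun x : ℝ => x * rexp (-b * x ^ 2)) := by
    have := integrable_rpow_mul_exp_neg_mul_sq hb (s := 1) (by norm_num)
    simpa using this
  have I0 : Integrable (fun x : ℝ => rexp (-b * x ^ 2)) := integrable_exp_neg_mul_sq hb
  have Ishift : Integrable (fun x : ℝ => (x + μ) ^ 2 * rexp (-b * x ^ 2)) := by
    have heq : (fun x : ℝ => (x + μ) ^ 2 * rexp (-b * x ^ 2))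
        = fun x => x ^ 2 * rexp (-b * x ^ 2) + (2 * μ) * (x * rexp (-b * x ^ 2))
            + μ ^ 2 * rexp (-b * x ^ 2) := by
      funext x; ring
    rw [heq]
    exact (I2.add (I1.const_mul _)).add (I0.const_mul _)
  have Ifin : Integrable (fun x : ℝ => x ^ 2 * rexp (-b * (x - μ) ^ 2)) := by
    have := Ishift.comp_sub_right μ
    simpa [sub_add_cancel] using this
  rw [gaussianReal_of_var_ne_zero μ hv,
    integrable_withDensity_iff (measurable_gaussianPDF μ v)
      (ae_of_all _ fun x => ENNReal.ofReal_lt_top)]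
  have heq2 : (fun x : ℝ => x ^ 2 * (gaussianPDF μ v x).toReal)
      = fun x => (√(2 * π * v))⁻¹ * (x ^ 2 * rexp (-b * (x - μ) ^ 2)) := by
    funext x
    rw [gaussianPDF, ENNReal.toReal_ofReal (gaussianPDFReal_nonneg μ v x), gaussianPDFReal,
      show -(x - μ) ^ 2 / (2 * (v:ℝ)) = -b * (x - μ) ^ 2 by rw [hb_def]; field_simp]
    ring
  rw [heq2]
  exact Ifin.const_mul _

/-- For the additive Gaussian noise channel `Y = X + N`, with
`N ~ 𝒩(μ, v)` independent of `X`, and `X'` an independent copy of `X` that is independent of `Y`,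
the symmetrized KL divergence `E[log φ(Y|X)] - E[log φ(Y|X')]` equals `Var(X) / v`, where
`φ(y|x)` is the Gaussian density with mean `x + μ` and variance `v` at `y`. -/
theorem stmt_4 {Ω : Type*} [MeasureSpace Ω] [IsProbabilityMeasure (ℙ : Measure Ω)]
    (X N X' : Ω → ℝ) (μ : ℝ) (v : ℝ≥0) (hv : 0 < v)
    (hX : Measurable X) (hN : Measurable N) (hX' : Measurable X')
    (hX2 : MemLp X 2 ℙ) (hX'2 : MemLp X' 2 ℙ)
    (hNlaw : Measure.map N ℙ = gaussianReal μ v)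
    (hXN : IndepFun X N ℙ)
    (hX'Y : IndepFun X' (fun ω => X ω + N ω) ℙ)
    (hlaw : Measure.map X' ℙ = Measure.map X ℙ) :
    (∫ ω, Real.log ((1 / (Real.sqrt v * Real.sqrt (2 * Real.pi))) *
        Real.exp (-(X ω + N ω - X ω - μ) ^ 2 / (2 * v))) ∂ℙ)
      - (∫ ω, Real.log ((1 / (Real.sqrt v * Real.sqrt (2 * Real.pi))) *
          Real.exp (-(X ω + N ω - X' ω - μ) ^ 2 / (2 * v))) ∂ℙ)
      = variance X ℙ / v := by
  have hv' : (0:ℝ) < (v:ℝ) := hv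
  have hc : (0:ℝ) < 1 / (Real.sqrt v * Real.sqrt (2 * Real.pi)) :=
    div_pos one_pos (mul_pos (Real.sqrt_pos.2 hv') (Real.sqrt_pos.2 (by positivity)))
  set c : ℝ := 1 / (Real.sqrt v * Real.sqrt (2 * Real.pi)) with hc_def
  -- N is L²
  have hN2 : MemLp N 2 ℙ := by
    have h0 : MemLp id 2 (gaussianReal μ v) :=
      (memLp_two_iff_integrable_sq aestronglyMeasurable_id).2
        (by simpa using my_integrable_sq_gaussianReal μ hv.ne')
    have h1 : MemLp id 2 (Measure.map N ℙ) := hNlaw ▸ h0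
    have := (memLp_map_measure_iff aestronglyMeasurable_id hN.aemeasurable).1 h1
    simpa [Function.comp] using this
  have iX : Integrable X ℙ := hX2.integrable one_le_two
  have iN : Integrable N ℙ := hN2.integrable one_le_two
  have iX' : Integrable X' ℙ := hX'2.integrable one_le_two
  -- L² of the two centered quantities
  have hG2 : MemLp (fun ω => N ω - μ) 2 ℙ := hN2.sub (memLp_const μ)
  have hF2 : MemLp (fun ω => X ω + N ω - X' ω - μ) 2 ℙ :=
    ((hX2.add hN2).sub hX'2).sub (memLp_const μ)
  have iG : Integrable (fun ω => (N ω - μ) ^ 2) ℙ := hG2.integrable_sq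
  have iF : Integrable (fun ω => (X ω + N ω - X' ω - μ) ^ 2) ℙ := hF2.integrable_sq
  have itG : Integrable (fun ω => -(N ω - μ) ^ 2 / (2 * (v:ℝ))) ℙ := iG.neg.div_const _
  have itF : Integrable (fun ω => -(X ω + N ω - X' ω - μ) ^ 2 / (2 * (v:ℝ))) ℙ :=
    iF.neg.div_const _
  -- rewrite the first integrand
  have e0 : (fun ω => Real.log (c * Real.exp (-(X ω + N ω - X ω - μ) ^ 2 / (2 * (v:ℝ)))))
      = fun ω => Real.log (c * Real.exp (-(N ω - μ) ^ 2 / (2 * (v:ℝ)))) := by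
    funext ω; rw [show X ω + N ω - X ω - μ = N ω - μ by ring]
  rw [show (∫ ω, Real.log (c * Real.exp (-(X ω + N ω - X ω - μ) ^ 2 / (2 * (v:ℝ)))) ∂ℙ)
      = ∫ ω, Real.log (c * Real.exp (-(N ω - μ) ^ 2 / (2 * (v:ℝ)))) ∂ℙ from by rw [e0]]
  simp_rw [Real.log_mul hc.ne' (Real.exp_ne_zero _), Real.log_exp]
  rw [integral_add (integrable_const _) itG, integral_add (integrable_const _) itF,
    integral_const]
  simp only [measure_univ, probReal_univ, ENNReal.toReal_one, one_smul]
  -- now: (log c + ∫ tG) - (log c + ∫ tF) = Var X / v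
  simp_rw [neg_div]
  rw [integral_neg, integral_neg, integral_div, integral_div]
  -- key moment identity
  have hmX' : ∫ ω, X' ω ∂ℙ = ∫ ω, X ω ∂ℙ := by
    have h1 : ∫ x, x ∂(Measure.map X' ℙ) = ∫ ω, X' ω ∂ℙ :=
      integral_map hX'.aemeasurable aestronglyMeasurable_id
    have h2 : ∫ x, x ∂(Measure.map X ℙ) = ∫ ω, X ω ∂ℙ :=
      integral_map hX.aemeasurable aestronglyMeasurable_id
    rw [← h1, ← h2, hlaw]
  have hsX' : ∫ ω, X' ω ^ 2 ∂ℙ = ∫ ω, X ω ^ 2 ∂ℙ := by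
    have h1 : ∫ x, x ^ 2 ∂(Measure.map X' ℙ) = ∫ ω, X' ω ^ 2 ∂ℙ :=
      integral_map hX'.aemeasurable (f := fun x => x ^ 2) (by fun_prop)
    have h2 : ∫ x, x ^ 2 ∂(Measure.map X ℙ) = ∫ ω, X ω ^ 2 ∂ℙ :=
      integral_map hX.aemeasurable (f := fun x => x ^ 2) (by fun_prop)
    rw [← h1, ← h2, hlaw]
  have hXNmul : ∫ ω, X ω * N ω ∂ℙ = (∫ ω, X ω ∂ℙ) * ∫ ω, N ω ∂ℙ := by
    have := hXN.integral_mul_eq_mul_integral hX.aestronglyMeasurable hN.aestronglyMeasurable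
    simpa [Pi.mul_apply] using this
  have hYX'mul : ∫ ω, X' ω * (X ω + N ω) ∂ℙ
      = (∫ ω, X' ω ∂ℙ) * ∫ ω, (X ω + N ω) ∂ℙ := by
    have := hX'Y.integral_mul_eq_mul_integral hX'.aestronglyMeasurable (hX.add hN).aestronglyMeasurable
    simpa [Pi.mul_apply] using this
  have iXN : Integrable (fun ω => X ω * N ω) ℙ := by
    have := hXN.integrable_mul iX iN; exact this
  have iYX' : Integrable (fun ω => X' ω * (X ω + N ω)) ℙ := by
    have := hX'Y.integrable_mul iX' (iX.add iN); exact this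
  have iX2sq : Integrable (fun ω => X ω ^ 2) ℙ := hX2.integrable_sq
  have iX'2sq : Integrable (fun ω => X' ω ^ 2) ℙ := hX'2.integrable_sq
  have hKey : (∫ ω, (X ω + N ω - X' ω - μ) ^ 2 ∂ℙ) - ∫ ω, (N ω - μ) ^ 2 ∂ℙ
      = 2 * ((∫ ω, X ω ^ 2 ∂ℙ) - (∫ ω, X ω ∂ℙ) ^ 2) := by
    rw [← integral_sub iF iG]
    have e1 : (fun ω => (X ω + N ω - X' ω - μ) ^ 2 - (N ω - μ) ^ 2)
        = fun ω => X ω ^ 2 + X' ω ^ 2 + 2 * (X ω * N ω) - 2 * μ * X ω + 2 * μ * X' ω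
            - 2 * (X' ω * (X ω + N ω)) := by
      funext ω; ring
    rw [e1]
    have iE : Integrable (fun ω => X ω ^ 2 + X' ω ^ 2) ℙ := iX2sq.add iX'2sq
    have iD : Integrable (fun ω => X ω ^ 2 + X' ω ^ 2 + 2 * (X ω * N ω)) ℙ :=
      iE.add (iXN.const_mul 2)
    have iC : Integrable
        (fun ω => X ω ^ 2 + X' ω ^ 2 + 2 * (X ω * N ω) - 2 * μ * X ω) ℙ :=
      iD.sub (iX.const_mul (2 * μ))
    have iB : Integrable
        (fun ω => X ω ^ 2 + X' ω ^ 2 + 2 * (X ω * N ω) - 2 * μ * X ω + 2 * μ * X' ω) ℙ :=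
      iC.add (iX'.const_mul (2 * μ))
    rw [integral_sub iB (iYX'.const_mul 2),
      integral_add iC (iX'.const_mul (2 * μ)),
      integral_sub iD (iX.const_mul (2 * μ)),
      integral_add iE (iXN.const_mul 2),
      integral_add iX2sq iX'2sq,
      integral_const_mul, integral_const_mul, integral_const_mul, integral_const_mul,
      hsX', hmX', hXNmul, hYX'mul, hmX',
      integral_add iX iN]
    ring
  have hvar : variance X ℙ = (∫ ω, X ω ^ 2 ∂ℙ) - (∫ ω, X ω ∂ℙ) ^ 2 := by
    rw [variance_eq_sub hX2]; simp [Pi.pow_apply]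
  rw [hvar]
  have h2v : (2 * (v:ℝ)) ≠ 0 := by positivity
  field_simp
  linear_combination hKey
end

section
/- Let λ₀ > 0 and A > 0, let X be a random variable with 0 ≤ X ≤ A almost surely, and let Y be a random variable that, conditionally on X = x, is Poisson distributed with parameter x + λ₀ (i.e., P(Y = y | X = x) = e^{−(x+λ₀)} (x+λ₀)^y / y! for y ∈ ℕ). Let X′ be independent of Y with the same distribution as X, and write f(y|x) = e^{−(x+λ₀)} (x+λ₀)^y / y!. Then E[log f(Y|X)] − E[log f(Y|X′)] = Cov(X + λ₀, log(X + λ₀)), where Cov(U, V) = E[U·V] − E[U]·E[V]. -/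
open MeasureTheory ProbabilityTheory
open scoped BigOperators ENNReal

section Aux

lemma exp_div_hasSum (t : ℝ) : HasSum (fun n : ℕ => t ^ n / n.factorial) (Real.exp t) := by
  rw [Real.exp_eq_exp_ℝ]
  exact NormedSpace.expSeries_div_hasSum_exp t

lemma pois_hasSum (s : ℝ) :
    HasSum (fun y : ℕ => Real.exp (-s) * s ^ y / y.factorial) 1 := by
  have h := (exp_div_hasSum s).mul_left (Real.exp (-s))
  have : Real.exp (-s) * Real.exp s = 1 := by
    rw [← Real.exp_add]; simp
  rw [this] at h
  convert h using 2 with y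
  · rfl
  ring

lemma pois_hasSum_mul (s : ℝ) :
    HasSum (fun y : ℕ => (y : ℝ) * (Real.exp (-s) * s ^ y / y.factorial)) s := by
  have h := (pois_hasSum s).mul_left s
  rw [mul_one] at h
  have h2 : HasSum (fun y : ℕ => ((y + 1 : ℕ) : ℝ) *
      (Real.exp (-s) * s ^ (y + 1) / (y + 1).factorial)) s := by
    convert h using 2 with y
    · rfl
    have hf : ((y + 1).factorial : ℝ) = (y + 1) * y.factorial := by
      rw [Nat.factorial_succ]; push_cast; ring
    rw [hf]
    have h1 : ((y:ℝ) + 1) ≠ 0 := by positivity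
    push_cast
    field_simp
    ring
  have := (hasSum_nat_add_iff (f := fun y : ℕ => (y : ℝ) *
      (Real.exp (-s) * s ^ y / y.factorial)) 1).mp h2
  simpa using this

lemma pois_hasSum_sq (s : ℝ) :
    HasSum (fun y : ℕ => (y : ℝ)^2 * (Real.exp (-s) * s ^ y / y.factorial)) (s * (s + 1)) := by
  have h1 := ((pois_hasSum_mul s).add (pois_hasSum s)).mul_left s
  have h2 : HasSum (fun y : ℕ => ((y + 1 : ℕ) : ℝ)^2 *
      (Real.exp (-s) * s ^ (y + 1) / (y + 1).factorial)) (s * (s + 1)) := by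
    convert h1 using 2 with y
    · rfl
    have hf : ((y + 1).factorial : ℝ) = (y + 1) * y.factorial := by
      rw [Nat.factorial_succ]; push_cast; ring
    rw [hf]
    have h1 : ((y:ℝ) + 1) ≠ 0 := by positivity
    push_cast
    field_simp
    ring
  have := (hasSum_nat_add_iff (f := fun y : ℕ => (y : ℝ)^2 *
      (Real.exp (-s) * s ^ y / y.factorial)) 1).mp h2
  simpa using this

lemma tsum_ofReal_of_hasSum {f : ℕ → ℝ} {a : ℝ} (hf : ∀ n, 0 ≤ f n) (h : HasSum f a) :
    ∑' n, ENNReal.ofReal (f n) = ENNReal.ofReal a := by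
  rw [← ENNReal.ofReal_tsum_of_nonneg hf h.summable, h.tsum_eq]

lemma pois_tsum_enn (s : ℝ) (hs : 0 ≤ s) (h : ℕ → ℝ) (hh : ∀ n, 0 ≤ h n) {a : ℝ}
    (hsum : HasSum (fun y : ℕ => h y * (Real.exp (-s) * s ^ y / y.factorial)) a) :
    ∑' y : ℕ, ENNReal.ofReal (h y) *
      ENNReal.ofReal (Real.exp (-s) * s ^ y / y.factorial) = ENNReal.ofReal a := by
  have hnn : ∀ y : ℕ, 0 ≤ Real.exp (-s) * s ^ y / y.factorial := by
    intro y; positivity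
  rw [← tsum_ofReal_of_hasSum (fun y => mul_nonneg (hh y) (hnn y)) hsum]
  congr 1 with y
  rw [ENNReal.ofReal_mul (hh y)]

lemma channel_lintegral {Ω : Type*} [MeasureSpace Ω] [IsProbabilityMeasure (ℙ : Measure Ω)]
    (lam0 : ℝ) (X : Ω → ℝ) (Y : Ω → ℕ) (hX : Measurable X) (hY : Measurable Y)
    (hcond : ∀ (y : ℕ) (B : Set ℝ), MeasurableSet B →
      ℙ {ω | X ω ∈ B ∧ Y ω = y}
        = ∫⁻ x in B, ENNReal.ofReal (Real.exp (-(x + lam0)) * (x + lam0) ^ y / (Nat.factorial y))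
            ∂(Measure.map X ℙ))
    (h : ℕ → ℝ≥0∞) (g : ℝ → ℝ≥0∞) (hg : Measurable g) :
    ∫⁻ ω, h (Y ω) * g (X ω) ∂ℙ
      = ∫⁻ x, (∑' y : ℕ, h y *
          ENNReal.ofReal (Real.exp (-(x + lam0)) * (x + lam0) ^ y / (Nat.factorial y))) * g x
          ∂(Measure.map X ℙ) := by
  set μ := Measure.map X ℙ with hμ
  set p : ℕ → ℝ → ℝ≥0∞ := fun y x =>
    ENNReal.ofReal (Real.exp (-(x + lam0)) * (x + lam0) ^ y / (Nat.factorial y)) with hp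
  have hpm : ∀ y, Measurable (p y) := by
    intro y
    apply ENNReal.measurable_ofReal.comp
    fun_prop
  have hmap : ∀ y : ℕ, Measure.map X (Measure.restrict ℙ {ω | Y ω = y})
      = μ.withDensity (p y) := by
    intro y
    refine Measure.ext fun s hs => ?_
    rw [Measure.map_apply hX hs, Measure.restrict_apply (hX hs), withDensity_apply _ hs]
    have hset : X ⁻¹' s ∩ {ω | Y ω = y} = {ω | X ω ∈ s ∧ Y ω = y} := by
      ext ω
      simp only [Set.mem_inter_iff, Set.mem_preimage, Set.mem_setOf_eq]
    rw [hset, hcond y s hs]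
  have hYs : ∀ y : ℕ, MeasurableSet {ω | Y ω = y} := fun y => hY (measurableSet_singleton y)
  have step : ∀ y : ℕ, ∫⁻ ω in {ω | Y ω = y}, g (X ω) ∂ℙ = ∫⁻ x, p y x * g x ∂μ := by
    intro y
    rw [← lintegral_map hg hX, hmap y, lintegral_withDensity_eq_lintegral_mul _ (hpm y) hg]
    rfl
  have hpt : ∀ ω, h (Y ω) * g (X ω)
      = ∑' y : ℕ, Set.indicator {ω' | Y ω' = y} (fun ω' => h y * g (X ω')) ω := by
    intro ω
    rw [tsum_eq_single (Y ω)]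
    · rw [Set.indicator_of_mem (by simp : ω ∈ {ω' | Y ω' = Y ω})]
    · intro b hb
      exact Set.indicator_of_notMem (by simpa using fun hc => hb hc.symm) _
  calc ∫⁻ ω, h (Y ω) * g (X ω) ∂ℙ
      = ∫⁻ ω, ∑' y : ℕ, Set.indicator {ω' | Y ω' = y} (fun ω' => h y * g (X ω')) ω ∂ℙ := by
        exact lintegral_congr hpt
    _ = ∑' y : ℕ, ∫⁻ ω, Set.indicator {ω' | Y ω' = y} (fun ω' => h y * g (X ω')) ω ∂ℙ :=
        lintegral_tsum fun y =>
          (Measurable.indicator ((hg.comp hX).const_mul (h y)) (hYs y)).aemeasurable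
    _ = ∑' y : ℕ, ∫⁻ ω in {ω' | Y ω' = y}, h y * g (X ω) ∂ℙ := by
        congr 1 with y
        exact lintegral_indicator (hYs y) _
    _ = ∑' y : ℕ, h y * ∫⁻ x, p y x * g x ∂μ := by
        congr 1 with y
        rw [lintegral_const_mul _ (show Measurable fun ω => g (X ω) from hg.comp hX), step y]
    _ = ∑' y : ℕ, ∫⁻ x, h y * (p y x * g x) ∂μ := by
        congr 1 with y
        rw [lintegral_const_mul _ (show Measurable fun x => p y x * g x from (hpm y).mul hg)]
    _ = ∫⁻ x, ∑' y : ℕ, h y * (p y x * g x) ∂μ :=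
        (lintegral_tsum fun y => (((hpm y).mul hg).const_mul (h y)).aemeasurable).symm
    _ = ∫⁻ x, (∑' y : ℕ, h y * p y x) * g x ∂μ := by
        congr 1 with x
        rw [← ENNReal.tsum_mul_right]
        congr 1 with y
        rw [mul_assoc]

end Aux


/-- For the Poisson channel `Y ~ Poisson(X + λ₀)` with input `X` bounded in
`[0, A]`, and `X'` an independent copy of `X` that is independent of `Y`, the symmetrized KL
divergence `E[log f(Y|X)] - E[log f(Y|X')]` equals `Cov(X + λ₀, log (X + λ₀))`, where
`f(y|x) = exp (-(x+λ₀)) * (x+λ₀)^y / y!`. -/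
theorem stmt_5 {Ω : Type*} [MeasureSpace Ω] [IsProbabilityMeasure (ℙ : Measure Ω)]
    (lam0 A : ℝ) (hlam0 : 0 < lam0) (hA : 0 < A)
    (X X' : Ω → ℝ) (Y : Ω → ℕ)
    (hX : Measurable X) (hX' : Measurable X') (hY : Measurable Y)
    (hXbd : ∀ᵐ ω ∂ℙ, 0 ≤ X ω ∧ X ω ≤ A)
    (hcond : ∀ (y : ℕ) (B : Set ℝ), MeasurableSet B →
      ℙ {ω | X ω ∈ B ∧ Y ω = y}
        = ∫⁻ x in B,
            ENNReal.ofReal (Real.exp (-(x + lam0)) * (x + lam0) ^ y / (Nat.factorial y))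
            ∂(Measure.map X ℙ))
    (hindep : IndepFun X' Y ℙ)
    (hlaw : Measure.map X' ℙ = Measure.map X ℙ) :
    (∫ ω, Real.log (Real.exp (-(X ω + lam0)) * (X ω + lam0) ^ (Y ω)
          / (Nat.factorial (Y ω))) ∂ℙ)
      - (∫ ω, Real.log (Real.exp (-(X' ω + lam0)) * (X' ω + lam0) ^ (Y ω)
          / (Nat.factorial (Y ω))) ∂ℙ)
      = (∫ ω, (X ω + lam0) * Real.log (X ω + lam0) ∂ℙ)
        - (∫ ω, (X ω + lam0) ∂ℙ) * (∫ ω, Real.log (X ω + lam0) ∂ℙ) := by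
  set μ := Measure.map X ℙ with hμdef
  haveI : IsProbabilityMeasure μ := Measure.isProbabilityMeasure_map hX.aemeasurable
  have hmeasIcc : MeasurableSet {x : ℝ | 0 ≤ x ∧ x ≤ A} := measurableSet_Icc
  have hae_μ : ∀ᵐ x ∂μ, 0 ≤ x ∧ x ≤ A :=
    (MeasureTheory.ae_map_iff hX.aemeasurable hmeasIcc).mpr hXbd
  have hX'bd : ∀ᵐ ω ∂ℙ, 0 ≤ X' ω ∧ X' ω ≤ A := by
    refine (MeasureTheory.ae_map_iff hX'.aemeasurable hmeasIcc).mp ?_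
    rw [hlaw]; exact hae_μ
  -- measurability of basic maps
  have hYr : Measurable fun ω => (Y ω : ℝ) :=
    Measurable.comp (f := Y) (g := fun n : ℕ => (n : ℝ)) measurable_from_top hY
  have hL : Measurable fun x : ℝ => Real.log (x + lam0) :=
    Real.measurable_log.comp (measurable_id.add_const lam0)
  -- uniform bound on the log
  set M : ℝ := |Real.log lam0| + |Real.log (A + lam0)| with hMdef
  have hMbd : ∀ x : ℝ, 0 ≤ x → x ≤ A → |Real.log (x + lam0)| ≤ M := by
    intro x h0 h1
    have hx : 0 < x + lam0 := by linarith
    have l1 : Real.log lam0 ≤ Real.log (x + lam0) :=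
      Real.log_le_log hlam0 (by linarith)
    have l2 : Real.log (x + lam0) ≤ Real.log (A + lam0) :=
      Real.log_le_log hx (by linarith)
    rw [abs_le]
    constructor
    · have := neg_abs_le (Real.log lam0)
      have := abs_nonneg (Real.log (A + lam0))
      simp only [hMdef]
      linarith
    · have := le_abs_self (Real.log (A + lam0))
      have := abs_nonneg (Real.log lam0)
      simp only [hMdef]
      linarith
  -- lintegral channel identity for E[Y g(X)]
  have HBl : ∀ (G : ℝ → ℝ), Measurable G → (∀ᵐ x ∂μ, 0 ≤ G x) →
      ∫⁻ ω, (Y ω : ℝ≥0∞) * ENNReal.ofReal (G (X ω)) ∂ℙ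
        = ∫⁻ ω, ENNReal.ofReal ((X ω + lam0) * G (X ω)) ∂ℙ := by
    intro G hG hGnn
    rw [channel_lintegral lam0 X Y hX hY hcond (fun y => (y : ℝ≥0∞))
      (fun x => ENNReal.ofReal (G x)) (ENNReal.measurable_ofReal.comp hG)]
    rw [← lintegral_map (show Measurable fun x : ℝ => ENNReal.ofReal ((x + lam0) * G x) from
      ENNReal.measurable_ofReal.comp ((measurable_id.add_const lam0).mul hG)) hX]
    apply lintegral_congr_ae
    filter_upwards [hae_μ, hGnn] with x hx hGx
    have hs : (0:ℝ) ≤ x + lam0 := by linarith [hx.1, hlam0.le]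
    have ht : ∑' y : ℕ, (y : ℝ≥0∞) *
        ENNReal.ofReal (Real.exp (-(x + lam0)) * (x + lam0) ^ y / (Nat.factorial y))
        = ENNReal.ofReal (x + lam0) := by
      have h2 := pois_tsum_enn (x + lam0) hs (fun y => (y : ℝ))
        (fun y => Nat.cast_nonneg y) (pois_hasSum_mul (x + lam0))
      rw [← h2]
      congr 1 with y
      rw [ENNReal.ofReal_natCast]
    rw [ht, ← ENNReal.ofReal_mul hs]
  -- transfer nonnegativity to Ω
  have hGnnΩ : ∀ (G : ℝ → ℝ), Measurable G → (∀ᵐ x ∂μ, 0 ≤ G x) →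
      (∀ᵐ ω ∂ℙ, 0 ≤ G (X ω)) := by
    intro G hG hGnn
    exact (MeasureTheory.ae_map_iff hX.aemeasurable (hG measurableSet_Ici)).mp hGnn
  -- Bochner version
  have HBr : ∀ (G : ℝ → ℝ), Measurable G → (∀ᵐ x ∂μ, 0 ≤ G x) →
      ∫ ω, (Y ω : ℝ) * G (X ω) ∂ℙ = ∫ ω, (X ω + lam0) * G (X ω) ∂ℙ := by
    intro G hG hGnn
    have hGΩ := hGnnΩ G hG hGnn
    have h1 : (0:Ω → ℝ) ≤ᵐ[ℙ] fun ω => (Y ω : ℝ) * G (X ω) := by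
      filter_upwards [hGΩ] with ω hω
      exact mul_nonneg (Nat.cast_nonneg _) hω
    have h2 : (0:Ω → ℝ) ≤ᵐ[ℙ] fun ω => (X ω + lam0) * G (X ω) := by
      filter_upwards [hGΩ, hXbd] with ω hω hb
      exact mul_nonneg (by linarith [hb.1, hlam0.le]) hω
    have m1 : AEStronglyMeasurable (fun ω => (Y ω : ℝ) * G (X ω)) ℙ :=
      (hYr.mul (hG.comp hX)).aestronglyMeasurable
    have m2 : AEStronglyMeasurable (fun ω => (X ω + lam0) * G (X ω)) ℙ :=
      (((hX.add_const lam0)).mul (hG.comp hX)).aestronglyMeasurable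
    rw [integral_eq_lintegral_of_nonneg_ae h1 m1, integral_eq_lintegral_of_nonneg_ae h2 m2]
    congr 1
    have hpt : ∀ ω, ENNReal.ofReal ((Y ω : ℝ) * G (X ω))
        = (Y ω : ℝ≥0∞) * ENNReal.ofReal (G (X ω)) := by
      intro ω
      rw [ENNReal.ofReal_mul (Nat.cast_nonneg _), ENNReal.ofReal_natCast]
    rw [lintegral_congr hpt]
    exact HBl G hG hGnn
  -- integrability of Y
  have hYnn : (0:Ω → ℝ) ≤ᵐ[ℙ] fun ω => (Y ω : ℝ) :=
    Filter.Eventually.of_forall fun ω => Nat.cast_nonneg _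
  have hK1 : ∫⁻ ω, ENNReal.ofReal ((Y ω : ℝ)) ∂ℙ ≤ ENNReal.ofReal (A + lam0) := by
    have h0 := HBl 1 measurable_one (Filter.Eventually.of_forall fun x => zero_le_one)
    simp only [Pi.one_apply, ENNReal.ofReal_one, mul_one] at h0
    have hpt : ∀ ω, ENNReal.ofReal ((Y ω : ℝ)) = (Y ω : ℝ≥0∞) := fun ω =>
      ENNReal.ofReal_natCast _
    rw [lintegral_congr hpt, h0]
    calc ∫⁻ ω, ENNReal.ofReal (X ω + lam0) ∂ℙ
        ≤ ∫⁻ _, ENNReal.ofReal (A + lam0) ∂ℙ := by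
          refine lintegral_mono_ae ?_
          filter_upwards [hXbd] with ω hb
          exact ENNReal.ofReal_le_ofReal (by linarith [hb.2])
      _ = ENNReal.ofReal (A + lam0) := by simp
  have int_Y : Integrable (fun ω => (Y ω : ℝ)) ℙ := by
    refine ⟨hYr.aestronglyMeasurable, ?_⟩
    rw [hasFiniteIntegral_iff_ofReal hYnn]
    exact lt_of_le_of_lt hK1 ENNReal.ofReal_lt_top
  -- integrability of Y^2
  have hY2m : Measurable fun ω => (Y ω : ℝ)^2 := hYr.pow_const 2
  have hK2 : ∫⁻ ω, ENNReal.ofReal ((Y ω : ℝ)^2) ∂ℙ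
      ≤ ENNReal.ofReal ((A + lam0) * ((A + lam0) + 1)) := by
    have h0 := channel_lintegral lam0 X Y hX hY hcond
      (fun y => ENNReal.ofReal ((y : ℝ)^2)) 1 measurable_one
    simp only [Pi.one_apply, mul_one] at h0
    rw [h0]
    calc ∫⁻ x, (∑' y : ℕ, ENNReal.ofReal ((y : ℝ)^2) *
          ENNReal.ofReal (Real.exp (-(x + lam0)) * (x + lam0) ^ y / (Nat.factorial y))) ∂μ
        ≤ ∫⁻ _, ENNReal.ofReal ((A + lam0) * ((A + lam0) + 1)) ∂μ := by
          refine lintegral_mono_ae ?_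
          filter_upwards [hae_μ] with x hx
          have hs : (0:ℝ) ≤ x + lam0 := by linarith [hx.1, hlam0.le]
          rw [pois_tsum_enn (x + lam0) hs (fun y => (y : ℝ)^2)
            (fun y => sq_nonneg _) (pois_hasSum_sq (x + lam0))]
          refine ENNReal.ofReal_le_ofReal ?_
          have h1 : x + lam0 ≤ A + lam0 := by linarith [hx.2]
          nlinarith [hs]
      _ = ENNReal.ofReal ((A + lam0) * ((A + lam0) + 1)) := by simp
  have int_Y2 : Integrable (fun ω => (Y ω : ℝ)^2) ℙ := by
    refine ⟨hY2m.aestronglyMeasurable, ?_⟩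
    rw [hasFiniteIntegral_iff_ofReal (Filter.Eventually.of_forall fun ω => sq_nonneg _)]
    exact lt_of_le_of_lt hK2 ENNReal.ofReal_lt_top
  -- integrability of log (Y!)
  have hlogfact_bd : ∀ y : ℕ, 0 ≤ Real.log (Nat.factorial y) ∧
      Real.log (Nat.factorial y) ≤ (y : ℝ)^2 := by
    intro y
    constructor
    · exact Real.log_nonneg (by exact_mod_cast Nat.one_le_iff_ne_zero.mpr y.factorial_ne_zero)
    · rcases Nat.eq_zero_or_pos y with hy | hy
      · simp [hy]
      · have hfp : (0:ℝ) < (Nat.factorial y : ℝ) := by positivity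
        have h1 : Real.log (Nat.factorial y) ≤ Real.log ((y:ℝ)^y) := by
          apply Real.log_le_log hfp
          exact_mod_cast Nat.factorial_le_pow y
        rw [Real.log_pow] at h1
        have h2 : Real.log y ≤ (y:ℝ) := by
          have := Real.log_le_sub_one_of_pos (show (0:ℝ) < y by exact_mod_cast hy)
          linarith
        calc Real.log (Nat.factorial y) ≤ (y:ℝ) * Real.log y := h1
          _ ≤ (y:ℝ) * (y:ℝ) := by
              exact mul_le_mul_of_nonneg_left h2 (Nat.cast_nonneg _)
          _ = (y:ℝ)^2 := by ring
  have hlogfactm : Measurable fun ω => Real.log (Nat.factorial (Y ω)) :=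
    Measurable.comp (f := Y) (g := fun n : ℕ => Real.log (Nat.factorial n))
      measurable_from_top hY
  have int_logfact : Integrable (fun ω => Real.log (Nat.factorial (Y ω))) ℙ := by
    refine int_Y2.mono' hlogfactm.aestronglyMeasurable ?_
    refine Filter.Eventually.of_forall fun ω => ?_
    rw [Real.norm_eq_abs, abs_of_nonneg (hlogfact_bd (Y ω)).1]
    exact (hlogfact_bd (Y ω)).2
  -- bounded-variable integrabilities
  have int_Xc : Integrable (fun ω => X ω + lam0) ℙ := by
    refine (integrable_const (A + lam0)).mono'
      ((hX.add_const lam0)).aestronglyMeasurable ?_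
    filter_upwards [hXbd] with ω hb
    rw [Real.norm_eq_abs, abs_of_nonneg (by linarith [hb.1, hlam0.le])]
    linarith [hb.2]
  have int_LX : Integrable (fun ω => Real.log (X ω + lam0)) ℙ := by
    refine (integrable_const M).mono' ((hL.comp hX)).aestronglyMeasurable ?_
    filter_upwards [hXbd] with ω hb
    exact hMbd _ hb.1 hb.2
  have int_LX' : Integrable (fun ω => Real.log (X' ω + lam0)) ℙ := by
    refine (integrable_const M).mono' ((hL.comp hX')).aestronglyMeasurable ?_
    filter_upwards [hX'bd] with ω hb
    exact hMbd _ hb.1 hb.2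
  have int_YLX : Integrable (fun ω => (Y ω : ℝ) * Real.log (X ω + lam0)) ℙ := by
    refine (int_Y.const_mul M).mono' ((hYr.mul (hL.comp hX))).aestronglyMeasurable ?_
    filter_upwards [hXbd] with ω hb
    rw [Real.norm_eq_abs, abs_mul, Nat.abs_cast, mul_comm M]
    exact mul_le_mul_of_nonneg_left (hMbd _ hb.1 hb.2) (Nat.cast_nonneg _)
  have int_YLX' : Integrable (fun ω => (Y ω : ℝ) * Real.log (X' ω + lam0)) ℙ := by
    refine (int_Y.const_mul M).mono' ((hYr.mul (hL.comp hX'))).aestronglyMeasurable ?_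
    filter_upwards [hX'bd] with ω hb
    rw [Real.norm_eq_abs, abs_mul, Nat.abs_cast, mul_comm M]
    exact mul_le_mul_of_nonneg_left (hMbd _ hb.1 hb.2) (Nat.cast_nonneg _)
  have int_XcLX : Integrable (fun ω => (X ω + lam0) * Real.log (X ω + lam0)) ℙ := by
    refine (integrable_const ((A + lam0) * M)).mono'
      (((hX.add_const lam0)).mul (hL.comp hX)).aestronglyMeasurable ?_
    filter_upwards [hXbd] with ω hb
    rw [Real.norm_eq_abs, abs_mul, abs_of_nonneg (by linarith [hb.1, hlam0.le] : (0:ℝ) ≤ X ω + lam0)]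
    have h1 : |Real.log (X ω + lam0)| ≤ M := hMbd _ hb.1 hb.2
    have h2 : X ω + lam0 ≤ A + lam0 := by linarith [hb.2]
    have h3 : (0:ℝ) ≤ X ω + lam0 := by linarith [hb.1, hlam0.le]
    nlinarith [abs_nonneg (Real.log (X ω + lam0))]
  -- moment identities
  have R1 : ∫ ω, (Y ω : ℝ) ∂ℙ = ∫ ω, (X ω + lam0) ∂ℙ := by
    have := HBr 1 measurable_one (Filter.Eventually.of_forall fun x => zero_le_one)
    simpa using this
  have R2 : ∫ ω, (Y ω : ℝ) * Real.log (X ω + lam0) ∂ℙ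
      = ∫ ω, (X ω + lam0) * Real.log (X ω + lam0) ∂ℙ := by
    have hGm : Measurable fun x : ℝ => Real.log (x + lam0) + M := hL.add_const M
    have hGnn : ∀ᵐ x ∂μ, 0 ≤ Real.log (x + lam0) + M := by
      filter_upwards [hae_μ] with x hx
      have := hMbd x hx.1 hx.2
      have := neg_abs_le (Real.log (x + lam0))
      linarith [abs_le.mp (hMbd x hx.1 hx.2) |>.1]
    have h0 := HBr _ hGm hGnn
    have e1 : ∫ ω, (Y ω : ℝ) * (Real.log (X ω + lam0) + M) ∂ℙ
        = ∫ ω, (Y ω : ℝ) * Real.log (X ω + lam0) ∂ℙ + M * ∫ ω, (Y ω : ℝ) ∂ℙ := by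
      rw [← integral_const_mul, ← integral_add int_YLX (int_Y.const_mul M)]
      congr 1 with ω
      ring
    have e2 : ∫ ω, (X ω + lam0) * (Real.log (X ω + lam0) + M) ∂ℙ
        = ∫ ω, (X ω + lam0) * Real.log (X ω + lam0) ∂ℙ + M * ∫ ω, (X ω + lam0) ∂ℙ := by
      rw [← integral_const_mul, ← integral_add int_XcLX (int_Xc.const_mul M)]
      congr 1 with ω
      ring
    rw [e1, e2, R1] at h0
    linarith
  -- cross terms via independence and equal law
  have C3 : ∫ ω, (X' ω + lam0) ∂ℙ = ∫ ω, (X ω + lam0) ∂ℙ := by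
    have hf : AEStronglyMeasurable (fun x : ℝ => x + lam0) μ :=
      ((measurable_id.add_const lam0)).aestronglyMeasurable
    calc ∫ ω, (X' ω + lam0) ∂ℙ
        = ∫ x, (x + lam0) ∂(Measure.map X' ℙ) :=
          (integral_map (f := fun x : ℝ => x + lam0) hX'.aemeasurable
            (by rw [hlaw]; exact hf)).symm
      _ = ∫ x, (x + lam0) ∂μ := by rw [hlaw]
      _ = ∫ ω, (X ω + lam0) ∂ℙ :=
          integral_map (f := fun x : ℝ => x + lam0) hX.aemeasurable hf
  have C2 : ∫ ω, Real.log (X' ω + lam0) ∂ℙ = ∫ ω, Real.log (X ω + lam0) ∂ℙ := by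
    have hf : AEStronglyMeasurable (fun x : ℝ => Real.log (x + lam0)) μ :=
      hL.aestronglyMeasurable
    calc ∫ ω, Real.log (X' ω + lam0) ∂ℙ
        = ∫ x, Real.log (x + lam0) ∂(Measure.map X' ℙ) :=
          (integral_map (f := fun x : ℝ => Real.log (x + lam0)) hX'.aemeasurable
            (by rw [hlaw]; exact hf)).symm
      _ = ∫ x, Real.log (x + lam0) ∂μ := by rw [hlaw]
      _ = ∫ ω, Real.log (X ω + lam0) ∂ℙ :=
          integral_map (f := fun x : ℝ => Real.log (x + lam0)) hX.aemeasurable hf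
  have C1 : ∫ ω, (Y ω : ℝ) * Real.log (X' ω + lam0) ∂ℙ
      = (∫ ω, (Y ω : ℝ) ∂ℙ) * ∫ ω, Real.log (X' ω + lam0) ∂ℙ := by
    have hind2 : IndepFun (fun ω => Real.log (X' ω + lam0)) (fun ω => (Y ω : ℝ)) ℙ :=
      hindep.comp hL (measurable_from_top : Measurable fun n : ℕ => (n : ℝ))
    have h0 := hind2.integral_fun_mul_eq_mul_integral int_LX'.aestronglyMeasurable int_Y.aestronglyMeasurable
    calc ∫ ω, (Y ω : ℝ) * Real.log (X' ω + lam0) ∂ℙ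
        = ∫ ω, Real.log (X' ω + lam0) * (Y ω : ℝ) ∂ℙ := by
          congr 1 with ω
          ring
      _ = (∫ ω, Real.log (X' ω + lam0) ∂ℙ) * ∫ ω, (Y ω : ℝ) ∂ℙ := h0
      _ = (∫ ω, (Y ω : ℝ) ∂ℙ) * ∫ ω, Real.log (X' ω + lam0) ∂ℙ := by ring
  have int_Xc' : Integrable (fun ω => X' ω + lam0) ℙ := by
    refine (integrable_const (A + lam0)).mono'
      ((hX'.add_const lam0)).aestronglyMeasurable ?_
    filter_upwards [hX'bd] with ω hb
    rw [Real.norm_eq_abs, abs_of_nonneg (by linarith [hb.1, hlam0.le])]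
    linarith [hb.2]
  -- pointwise log expansion
  have hlogexp : ∀ (s : ℝ), 0 < s → ∀ y : ℕ,
      Real.log (Real.exp (-s) * s ^ y / (Nat.factorial y))
        = -s + (y : ℝ) * Real.log s - Real.log (Nat.factorial y) := by
    intro s hs y
    have hfac : ((Nat.factorial y : ℝ)) ≠ 0 := Nat.cast_ne_zero.mpr (Nat.factorial_ne_zero y)
    rw [Real.log_div (by positivity) hfac,
      Real.log_mul (Real.exp_ne_zero _) (by positivity), Real.log_exp, Real.log_pow]
  have hs1 : ∫ ω, ((-(X ω + lam0) + (Y ω : ℝ) * Real.log (X ω + lam0))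
        - Real.log (Nat.factorial (Y ω))) ∂ℙ
      = (∫ ω, (-(X ω + lam0) + (Y ω : ℝ) * Real.log (X ω + lam0)) ∂ℙ)
        - ∫ ω, Real.log (Nat.factorial (Y ω)) ∂ℙ :=
    integral_sub (int_Xc.neg.add int_YLX) int_logfact
  have hs2 : ∫ ω, (-(X ω + lam0) + (Y ω : ℝ) * Real.log (X ω + lam0)) ∂ℙ
      = (∫ ω, -(X ω + lam0) ∂ℙ) + ∫ ω, (Y ω : ℝ) * Real.log (X ω + lam0) ∂ℙ :=
    integral_add int_Xc.neg int_YLX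
  have hs3 : ∫ ω, -(X ω + lam0) ∂ℙ = -∫ ω, (X ω + lam0) ∂ℙ := integral_neg _
  have hs1' : ∫ ω, ((-(X' ω + lam0) + (Y ω : ℝ) * Real.log (X' ω + lam0))
        - Real.log (Nat.factorial (Y ω))) ∂ℙ
      = (∫ ω, (-(X' ω + lam0) + (Y ω : ℝ) * Real.log (X' ω + lam0)) ∂ℙ)
        - ∫ ω, Real.log (Nat.factorial (Y ω)) ∂ℙ :=
    integral_sub (int_Xc'.neg.add int_YLX') int_logfact
  have hs2' : ∫ ω, (-(X' ω + lam0) + (Y ω : ℝ) * Real.log (X' ω + lam0)) ∂ℙ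
      = (∫ ω, -(X' ω + lam0) ∂ℙ) + ∫ ω, (Y ω : ℝ) * Real.log (X' ω + lam0) ∂ℙ :=
    integral_add int_Xc'.neg int_YLX'
  have hs3' : ∫ ω, -(X' ω + lam0) ∂ℙ = -∫ ω, (X' ω + lam0) ∂ℙ := integral_neg _
  have EA : ∫ ω, Real.log (Real.exp (-(X ω + lam0)) * (X ω + lam0) ^ (Y ω)
        / (Nat.factorial (Y ω))) ∂ℙ
      = ∫ ω, ((-(X ω + lam0) + (Y ω : ℝ) * Real.log (X ω + lam0))
        - Real.log (Nat.factorial (Y ω))) ∂ℙ := by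
    apply integral_congr_ae
    filter_upwards [hXbd] with ω hb
    have hsp : 0 < X ω + lam0 := by linarith [hb.1]
    rw [hlogexp _ hsp (Y ω)]
  have EA' : ∫ ω, Real.log (Real.exp (-(X' ω + lam0)) * (X' ω + lam0) ^ (Y ω)
        / (Nat.factorial (Y ω))) ∂ℙ
      = ∫ ω, ((-(X' ω + lam0) + (Y ω : ℝ) * Real.log (X' ω + lam0))
        - Real.log (Nat.factorial (Y ω))) ∂ℙ := by
    apply integral_congr_ae
    filter_upwards [hX'bd] with ω hb
    have hsp : 0 < X' ω + lam0 := by linarith [hb.1]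
    rw [hlogexp _ hsp (Y ω)]
  rw [EA, EA', hs1, hs2, hs3, hs1', hs2', hs3', R2, C3, C1, C2, R1]
  ring
end

section
/- Let λ₀ > 0, A > 0, and 0 < α ≤ A. Let X be a random variable with 0 ≤ X ≤ A almost surely and E[X] ≤ α. Then Cov(X + λ₀, log(X + λ₀)) ≤ (α/A)(A − α)·log(A/λ₀ + 1) if α ≤ A/2, and Cov(X + λ₀, log(X + λ₀)) ≤ (A/4)·log(A/λ₀ + 1) if α ≥ A/2. -/
open MeasureTheory ProbabilityTheory

/-- Chord lower bound for `log` (concavity). -/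
lemma log_chord {a b y : ℝ} (ha : 0 < a) (hab : a < b) (hy : a ≤ y) (hyb : y ≤ b) :
    Real.log a + (y - a) * ((Real.log b - Real.log a) / (b - a)) ≤ Real.log y := by
  have hba : 0 < b - a := by linarith
  have hb : 0 < b := lt_of_lt_of_le ha (le_of_lt hab)
  have hcc := strictConcaveOn_log_Ioi.concaveOn
  have hp : (0:ℝ) ≤ (b - y) / (b - a) := div_nonneg (by linarith) (by linarith)
  have hq : (0:ℝ) ≤ (y - a) / (b - a) := div_nonneg (by linarith) (by linarith)
  have hpq : (b - y) / (b - a) + (y - a) / (b - a) = 1 := by field_simp; ring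
  have h := hcc.2 (Set.mem_Ioi.mpr ha) (Set.mem_Ioi.mpr hb) hp hq hpq
  have hyeq : ((b - y) / (b - a)) • a + ((y - a) / (b - a)) • b = y := by
    simp only [smul_eq_mul]; field_simp; ring
  rw [hyeq] at h
  simp only [smul_eq_mul] at h
  have : Real.log a + (y - a) * ((Real.log b - Real.log a) / (b - a))
      = (b - y) / (b - a) * Real.log a + (y - a) / (b - a) * Real.log b := by
    field_simp; ring
  linarith [h, this.le, this.ge]

set_option maxHeartbeats 1000000 in
/-- If `0 ≤ X ≤ A` almost surely and `E[X] ≤ α` (with `0 < λ₀`, `0 < α ≤ A`),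
then `Cov(X + λ₀, log (X + λ₀)) ≤ (α/A)(A-α) log (A/λ₀ + 1)` when `α ≤ A/2`, and
`Cov(X + λ₀, log (X + λ₀)) ≤ (A/4) log (A/λ₀ + 1)` when `α ≥ A/2`. -/
theorem stmt_6 {Ω : Type*} [MeasureSpace Ω] [IsProbabilityMeasure (ℙ : Measure Ω)]
    (lam0 A α : ℝ) (hlam0 : 0 < lam0) (hA : 0 < A) (hα : 0 < α) (hαA : α ≤ A)
    (X : Ω → ℝ) (hX : Measurable X)
    (hXbd : ∀ᵐ ω ∂ℙ, 0 ≤ X ω ∧ X ω ≤ A)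
    (hmean : ∫ ω, X ω ∂ℙ ≤ α) :
    (α ≤ A / 2 →
      (∫ ω, (X ω + lam0) * Real.log (X ω + lam0) ∂ℙ)
          - (∫ ω, (X ω + lam0) ∂ℙ) * (∫ ω, Real.log (X ω + lam0) ∂ℙ)
        ≤ α / A * (A - α) * Real.log (A / lam0 + 1)) ∧
    (A / 2 ≤ α →
      (∫ ω, (X ω + lam0) * Real.log (X ω + lam0) ∂ℙ)
          - (∫ ω, (X ω + lam0) ∂ℙ) * (∫ ω, Real.log (X ω + lam0) ∂ℙ)
        ≤ A / 4 * Real.log (A / lam0 + 1)) := by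
  set a : ℝ := lam0 with ha_def
  set b : ℝ := A + lam0 with hb_def
  have hab : a < b := by simp [ha_def, hb_def]; linarith
  have hb0 : 0 < b := by simp [hb_def]; positivity
  set L : ℝ := Real.log (A / lam0 + 1) with hL_def
  have hLeq : L = Real.log b - Real.log a := by
    rw [hL_def, ha_def, hb_def, ← Real.log_div (by positivity) (ne_of_gt hlam0)]
    congr 1
    field_simp
    rw [ha_def, add_mul, div_mul_cancel₀ _ (ne_of_gt hlam0 : lam0 ≠ 0), one_mul]
  have hL0 : 0 ≤ L := by
    rw [hL_def]
    apply Real.log_nonneg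
    have : 0 ≤ A / lam0 := by positivity
    linarith
  set s : ℝ := L / A with hs_def
  have hs0 : 0 ≤ s := by positivity
  -- bounds on log term
  set M : ℝ := max |Real.log a| |Real.log b| with hM_def
  have hlogbd : ∀ᵐ ω ∂ℙ, |Real.log (X ω + lam0)| ≤ M := by
    filter_upwards [hXbd] with ω h
    have h1 : Real.log a ≤ Real.log (X ω + lam0) :=
      Real.log_le_log hlam0 (by simp [ha_def]; linarith [h.1])
    have h2 : Real.log (X ω + lam0) ≤ Real.log b :=
      Real.log_le_log (by linarith [h.1]) (by simp [hb_def]; linarith [h.2])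
    rw [abs_le]
    constructor
    · calc -M ≤ -|Real.log a| := by simp [hM_def]
        _ ≤ Real.log a := neg_abs_le _
        _ ≤ _ := h1
    · calc Real.log (X ω + lam0) ≤ Real.log b := h2
        _ ≤ |Real.log b| := le_abs_self _
        _ ≤ M := le_max_right _ _
  -- integrability
  have intX : Integrable X := by
    refine (integrable_const A).mono' hX.aestronglyMeasurable ?_
    filter_upwards [hXbd] with ω h
    rw [Real.norm_eq_abs, abs_le]; constructor <;> linarith [h.1, h.2]
  have intY : Integrable (fun ω => X ω + lam0) := intX.add (integrable_const lam0)
  have hlogmeas : Measurable (fun ω => Real.log (X ω + lam0)) :=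
    Real.measurable_log.comp (hX.add_const lam0)
  have intlog : Integrable (fun ω => Real.log (X ω + lam0)) := by
    refine (integrable_const M).mono' hlogmeas.aestronglyMeasurable ?_
    filter_upwards [hlogbd] with ω h
    rwa [Real.norm_eq_abs]
  have intprod : Integrable (fun ω => (X ω + lam0) * Real.log (X ω + lam0)) := by
    refine (integrable_const (b * M)).mono' ((hX.add_const lam0).mul hlogmeas).aestronglyMeasurable ?_
    filter_upwards [hXbd, hlogbd] with ω h hl
    rw [Real.norm_eq_abs, abs_mul]
    have hM0 : 0 ≤ M := le_trans (abs_nonneg _) (le_max_left _ _)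
    have : |X ω + lam0| ≤ b := by
      rw [abs_le]; simp [hb_def]; constructor <;> linarith [h.1, h.2]
    exact mul_le_mul this hl (abs_nonneg _) (by linarith [h.1, h.2, hb0])
  set μ : ℝ := ∫ ω, X ω ∂ℙ with hμ_def
  have hμ0 : 0 ≤ μ := by
    apply integral_nonneg_of_ae
    filter_upwards [hXbd] with ω h using h.1
  have hEY : ∫ ω, (X ω + lam0) ∂ℙ = μ + lam0 := by
    rw [integral_add intX (integrable_const lam0), integral_const]
    simp
    exact hμ_def.symm
  set I1 : ℝ := ∫ ω, (X ω + lam0) * Real.log (X ω + lam0) ∂ℙ with hI1_def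
  set I2 : ℝ := ∫ ω, Real.log (X ω + lam0) ∂ℙ with hI2_def
  -- key step 1: E[(Y-a)(log Y - log b)] ≤ 0
  have intc1 : Integrable (fun ω => Real.log b * (X ω + lam0)) := intY.const_mul _
  have intc2 : Integrable (fun ω => a * Real.log (X ω + lam0)) := intlog.const_mul _
  have intc12 : Integrable (fun ω => Real.log b * (X ω + lam0) + a * Real.log (X ω + lam0)) :=
    intc1.add intc2
  have intcomb : Integrable (fun ω =>
      Real.log b * (X ω + lam0) + a * Real.log (X ω + lam0) - a * Real.log b) :=
    intc12.sub (integrable_const _)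
  have hcombval : ∫ ω, (Real.log b * (X ω + lam0) + a * Real.log (X ω + lam0)
      - a * Real.log b) ∂ℙ = Real.log b * (μ + lam0) + a * I2 - a * Real.log b := by
    rw [integral_sub intc12 (integrable_const _), integral_add intc1 intc2,
      integral_const_mul, integral_const_mul, integral_const, hEY]
    simp
    exact Or.inl hI2_def.symm
  have key1 : I1 - (Real.log b * (μ + lam0) + a * I2 - a * Real.log b) ≤ 0 := by
    rw [← hcombval, ← integral_sub intprod intcomb]
    apply integral_nonpos_of_ae
    filter_upwards [hXbd] with ω h
    have h2 : Real.log (X ω + lam0) ≤ Real.log b :=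
      Real.log_le_log (by linarith [h.1]) (by simp [hb_def]; linarith [h.2])
    have heq : (X ω + lam0) * Real.log (X ω + lam0) -
        (Real.log b * (X ω + lam0) + a * Real.log (X ω + lam0) - a * Real.log b)
        = (X ω + lam0 - a) * (Real.log (X ω + lam0) - Real.log b) := by
      rw [ha_def]; ring
    rw [heq]
    apply mul_nonpos_of_nonneg_of_nonpos
    · simp [ha_def]; linarith [h.1]
    · linarith
  -- key step 2: chord bound in expectation
  have key2 : Real.log a + μ * s ≤ I2 := by
    have hint : ∫ ω, (Real.log a + X ω * s) ∂ℙ = Real.log a + μ * s := by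
      rw [integral_add (integrable_const _) (intX.mul_const s), integral_const,
        integral_mul_const]
      simp
      exact Or.inl hμ_def.symm
    rw [← hint]
    apply integral_mono_ae ((integrable_const _).add (intX.mul_const s)) intlog
    filter_upwards [hXbd] with ω h
    have := log_chord (a := a) (b := b) (y := X ω + lam0) hlam0 hab
      (by simp [ha_def]; linarith [h.1]) (by simp [hb_def]; linarith [h.2])
    have hba : b - a = A := by simp [ha_def, hb_def]
    have hya : X ω + lam0 - a = X ω := by simp [ha_def]
    rw [hba, hya, ← hLeq, ← hs_def] at this
    exact this
  -- combine: Cov ≤ μ * s * (A - μ)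
  have hcov : I1 - (μ + lam0) * I2 ≤ μ * s * (A - μ) := by
    have step1 : I1 - (μ + lam0) * I2 ≤ (μ + lam0 - a) * (Real.log b - I2) := by
      nlinarith [key1]
    have hμa : μ + lam0 - a = μ := by simp [ha_def]
    rw [hμa] at step1
    have step2 : Real.log b - I2 ≤ s * (A - μ) := by
      have : Real.log b - Real.log a = L := hLeq.symm
      have hsa : L = s * A := by rw [hs_def]; field_simp
      nlinarith [key2]
    calc I1 - (μ + lam0) * I2 ≤ μ * (Real.log b - I2) := step1
      _ ≤ μ * (s * (A - μ)) := mul_le_mul_of_nonneg_left step2 hμ0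
      _ = μ * s * (A - μ) := by ring
  rw [hEY]
  have hsA : s * A = L := by rw [hs_def, div_mul_cancel₀ _ hA.ne']
  clear_value a b L s M μ I1 I2
  constructor
  · intro hhalf
    have hq : μ * (A - μ) ≤ α * (A - α) := by nlinarith
    have : μ * s * (A - μ) ≤ α / A * (A - α) * L := by
      have : α / A * (A - α) * L = α * (A - α) * s := by
        rw [hs_def]; ring
      rw [this]
      nlinarith
    linarith [hcov]
  · intro hhalf
    have hq : μ * (A - μ) ≤ A ^ 2 / 4 := by nlinarith [sq_nonneg (A - 2*μ)]
    have : μ * s * (A - μ) ≤ A / 4 * L := by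
      have h4 : A / 4 * L = A ^ 2 / 4 * s := by
        rw [← hsA]; ring
      rw [h4]
      nlinarith
    linarith [hcov]
end

section
/- Let λ₀ > 0, A > 0, and 0 < α ≤ A, and set β = min(α, A/2)/A. Let X be the two-point random variable with P(X = A) = β and P(X = 0) = 1 − β. Then 0 ≤ X ≤ A, E[X] ≤ α, and Cov(X + λ₀, log(X + λ₀)) = β(1 − β)·A·log(A/λ₀ + 1); in particular this equals (α/A)(A − α)·log(A/λ₀ + 1) when α ≤ A/2 and (A/4)·log(A/λ₀ + 1) when α ≥ A/2, so the bounds in the preceding inequality are attained. -/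
open MeasureTheory ProbabilityTheory

lemma two_point_integral {Ω : Type*} [MeasureSpace Ω] [IsProbabilityMeasure (ℙ : Measure Ω)]
    (S T : Set Ω) (hS : MeasurableSet S) (hT : MeasurableSet T) (hdisj : Disjoint S T)
    (hST : ∀ᵐ ω ∂(ℙ : Measure Ω), ω ∈ S ∪ T) (a b : ℝ) (g : Ω → ℝ)
    (hg : ∀ ω ∈ S, g ω = a) (hg' : ∀ ω ∈ T, g ω = b) :
    ∫ ω, g ω ∂ℙ = a * (ℙ S).toReal + b * (ℙ T).toReal := by
  have heq : g =ᵐ[ℙ] fun ω => S.indicator (fun _ => a) ω + T.indicator (fun _ => b) ω := by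
    filter_upwards [hST] with ω hω
    rcases hω with h | h
    · simp [Set.indicator_of_mem h, Set.indicator_of_notMem (Set.disjoint_left.mp hdisj h),
        hg ω h]
    · simp [Set.indicator_of_mem h, Set.indicator_of_notMem (Set.disjoint_right.mp hdisj h),
        hg' ω h]
  rw [integral_congr_ae heq, integral_add ((integrable_const a).indicator hS)
    ((integrable_const b).indicator hT), integral_indicator_const a hS,
    integral_indicator_const b hT, smul_eq_mul, smul_eq_mul]
  simp only [Measure.real]
  ring

/-- Let `β = min(α, A/2)/A` and let `X` be the two-point random variable with
`P(X = A) = β`, `P(X = 0) = 1 - β`. Then `0 ≤ X ≤ A` a.s., `E[X] ≤ α`, and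
`Cov(X + λ₀, log (X + λ₀)) = β(1-β) A log (A/λ₀ + 1)`; in particular this value equals
`(α/A)(A-α) log (A/λ₀ + 1)` when `α ≤ A/2` and `(A/4) log (A/λ₀ + 1)` when `α ≥ A/2`,
so the bounds of the preceding inequality are attained. -/
theorem stmt_7 {Ω : Type*} [MeasureSpace Ω] [IsProbabilityMeasure (ℙ : Measure Ω)]
    (lam0 A α : ℝ) (hlam0 : 0 < lam0) (hA : 0 < A) (hα : 0 < α) (hαA : α ≤ A)
    (β : ℝ) (hβ : β = min α (A / 2) / A)
    (X : Ω → ℝ) (hX : Measurable X)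
    (hPA : ℙ {ω | X ω = A} = ENNReal.ofReal β)
    (hP0 : ℙ {ω | X ω = 0} = ENNReal.ofReal (1 - β)) :
    (∀ᵐ ω ∂ℙ, 0 ≤ X ω ∧ X ω ≤ A) ∧
    (∫ ω, X ω ∂ℙ) ≤ α ∧
    ((∫ ω, (X ω + lam0) * Real.log (X ω + lam0) ∂ℙ)
        - (∫ ω, (X ω + lam0) ∂ℙ) * (∫ ω, Real.log (X ω + lam0) ∂ℙ)
      = β * (1 - β) * A * Real.log (A / lam0 + 1)) ∧
    (α ≤ A / 2 →
      β * (1 - β) * A * Real.log (A / lam0 + 1)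
        = α / A * (A - α) * Real.log (A / lam0 + 1)) ∧
    (A / 2 ≤ α →
      β * (1 - β) * A * Real.log (A / lam0 + 1) = A / 4 * Real.log (A / lam0 + 1)) := by
  have hβpos : 0 < β := by
    rw [hβ]; positivity
  have hβhalf : β ≤ 1 / 2 := by
    rw [hβ, div_le_div_iff₀ hA two_pos]
    have := min_le_right α (A / 2)
    nlinarith
  have hβ1 : 1 - β ≥ 0 := by linarith
  set S := {ω | X ω = A} with hSdef
  set T := {ω | X ω = 0} with hTdef
  have hS : MeasurableSet S := hX (measurableSet_singleton A)
  have hT : MeasurableSet T := hX (measurableSet_singleton 0)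
  have hdisj : Disjoint S T := by
    rw [Set.disjoint_left]
    intro ω h1 h2
    simp only [hSdef, hTdef, Set.mem_setOf_eq] at h1 h2
    rw [h2] at h1; exact hA.ne h1
  have hunion : ℙ (S ∪ T) = 1 := by
    rw [measure_union hdisj hT, hPA, hP0, ← ENNReal.ofReal_add hβpos.le hβ1]
    simp
  have hST : ∀ᵐ ω ∂(ℙ : Measure Ω), ω ∈ S ∪ T := by
    have : ℙ (S ∪ T)ᶜ = 0 := by
      rw [measure_compl (hS.union hT) (measure_ne_top _ _), hunion, measure_univ]
      simp
    filter_upwards [measure_eq_zero_iff_ae_notMem.mp this] with ω hω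
    exact or_iff_not_imp_left.mpr (by simpa using hω)
  have hPS : (ℙ S).toReal = β := by rw [hPA, ENNReal.toReal_ofReal hβpos.le]
  have hPT : (ℙ T).toReal = 1 - β := by rw [hP0, ENNReal.toReal_ofReal hβ1]
  have key : ∀ (g : Ω → ℝ) (a b : ℝ), (∀ ω ∈ S, g ω = a) → (∀ ω ∈ T, g ω = b) →
      ∫ ω, g ω ∂ℙ = a * β + b * (1 - β) := fun g a b h1 h2 => by
    rw [two_point_integral S T hS hT hdisj hST a b g h1 h2, hPS, hPT]
  have hlog : Real.log (A / lam0 + 1) = Real.log (A + lam0) - Real.log lam0 := by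
    rw [show A / lam0 + 1 = (A + lam0) / lam0 by field_simp, Real.log_div (by positivity)
      hlam0.ne']
  refine ⟨?_, ?_, ?_, ?_, ?_⟩
  · filter_upwards [hST] with ω hω
    rcases hω with h | h
    · rw [show X ω = A from h]; exact ⟨hA.le, le_refl A⟩
    · rw [show X ω = 0 from h]; exact ⟨le_refl 0, hA.le⟩
  · rw [key X A 0 (fun ω h => h) (fun ω h => h)]
    have : β * A = min α (A / 2) := by rw [hβ]; field_simp
    have h2 : min α (A / 2) ≤ α := min_le_left _ _
    nlinarith
  · rw [key (fun ω => (X ω + lam0) * Real.log (X ω + lam0))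
        ((A + lam0) * Real.log (A + lam0)) (lam0 * Real.log lam0)
        (fun ω h => by simp only [show X ω = A from h]) (fun ω h => by simp only [show X ω = 0 from h, zero_add]),
      key (fun ω => X ω + lam0) (A + lam0) lam0
        (fun ω h => by simp only [show X ω = A from h]) (fun ω h => by simp only [show X ω = 0 from h, zero_add]),
      key (fun ω => Real.log (X ω + lam0)) (Real.log (A + lam0)) (Real.log lam0)
        (fun ω h => by simp only [show X ω = A from h]) (fun ω h => by simp only [show X ω = 0 from h, zero_add])]
    rw [hlog]
    ring
  · intro h
    have : β = α / A := by rw [hβ, min_eq_left h]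
    rw [this]; field_simp
  · intro h
    have : β = 1 / 2 := by rw [hβ, min_eq_right h]; field_simp
    rw [this]; ring
end

section
/- Let λ₀ > 0, A > 0, and 0 < α ≤ A. Let μ be a probability measure on ℝ supported on [0, A] with ∫ x dμ(x) ≤ α, let X have law μ, and let Y be a random variable that, conditionally on X = x, is Poisson distributed with parameter x + λ₀. Then the mutual information I(X; Y), defined as the KL divergence of the joint law of (X, Y) from the product of its marginal laws, satisfies: I(X; Y) ≤ (α/A)(A − α)·log(A/λ₀ + 1) if α ≤ A/2, and I(X; Y) ≤ (A/4)·log(A/λ₀ + 1) if α ≥ A/2. -/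
open MeasureTheory
open scoped ENNReal Classical

/-- The Poisson distribution on `ℕ` with (real) parameter `r`. -/
noncomputable def poissonMeasure (r : ℝ) : Measure ℕ :=
  Measure.sum fun n =>
    (ENNReal.ofReal (Real.exp (-r) * r ^ n / (Nat.factorial n))) • Measure.dirac n

/-- The joint law on `ℝ × ℕ` of `(X, Y)` where `X ~ μ` and, conditionally on `X = x`,
`Y ~ Poisson(x + λ₀)`. -/
noncomputable def poissonJoint (lam0 : ℝ) (μ : Measure ℝ) : Measure (ℝ × ℕ) :=
  μ.bind fun x => (poissonMeasure (x + lam0)).map fun n => (x, n)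

/-- The Kullback–Leibler divergence `D(P‖Q) = ∫ log (dP/dQ) dP` when `P ≪ Q`, `+∞` otherwise. -/
noncomputable def klDivM {α : Type*} [MeasurableSpace α] (P Q : Measure α) : ℝ≥0∞ :=
  if P ≪ Q then ENNReal.ofReal (∫ x, Real.log ((P.rnDeriv Q x).toReal) ∂P) else ⊤

open Real
open scoped NNReal

namespace Stmt8

noncomputable def pp (r : ℝ) (n : ℕ) : ℝ := Real.exp (-r) * r ^ n / (Nat.factorial n)

lemma pp_pos {r : ℝ} (hr : 0 < r) (n : ℕ) : 0 < pp r n := by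
  unfold pp
  positivity

lemma hasSum_pp {r : ℝ} (hr : 0 < r) : HasSum (pp r) 1 := by
  have h := ProbabilityTheory.poissonPMFRealSum r.toNNReal
  have : pp r = fun n => ProbabilityTheory.poissonPMFReal r.toNNReal n := by
    funext n
    simp [pp, ProbabilityTheory.poissonPMFReal, Real.coe_toNNReal _ hr.le]
  rw [this]; exact h

lemma hasSum_npp {r : ℝ} (hr : 0 < r) : HasSum (fun n : ℕ => (n : ℝ) * pp r n) r := by
  set f : ℕ → ℝ := fun n => (n : ℝ) * pp r n with hf
  have h : HasSum (fun n => r * pp r n) r := by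
    simpa using (hasSum_pp hr).mul_left r
  have he : (fun n => f (n + 1)) = fun n => r * pp r n := by
    funext n
    have h1 : (Nat.factorial n : ℝ) ≠ 0 := by positivity
    simp only [hf, pp, Nat.factorial_succ]
    push_cast
    field_simp
    ring
  have h2 : HasSum (fun n => f (n + 1)) r := by rw [he]; exact h
  have h3 : HasSum (fun n => f (n + 1)) (r - ∑ i ∈ Finset.range 1, f i) := by
    simpa [hf] using h2
  exact (hasSum_nat_add_iff' 1).mp h3

lemma log_pp {r : ℝ} (hr : 0 < r) (n : ℕ) :
    Real.log (pp r n) = -r + n * Real.log r - Real.log (Nat.factorial n) := by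
  have h1 : (0:ℝ) < Nat.factorial n := by positivity
  rw [pp, Real.log_div (by positivity) (by positivity), Real.log_mul (by positivity) (by positivity),
    Real.log_exp, Real.log_pow]
  try ring

lemma pp_nonneg {r : ℝ} (hr : 0 ≤ r) (n : ℕ) : 0 ≤ pp r n := by unfold pp; positivity

lemma poissonMeasure_apply (r : ℝ) (s : Set ℕ) :
    poissonMeasure r s = ∑' n, ENNReal.ofReal (pp r n) * s.indicator 1 n := by
  rw [poissonMeasure, Measure.sum_apply_of_countable]
  congr 1; funext n
  rw [Measure.smul_apply, Measure.dirac_apply' _ .of_discrete, smul_eq_mul, pp]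

lemma poissonMeasure_singleton (r : ℝ) (k : ℕ) :
    poissonMeasure r {k} = ENNReal.ofReal (pp r k) := by
  rw [poissonMeasure_apply, tsum_eq_single k]
  · simp
  · intro n hn
    simp [Set.indicator_of_notMem, hn]

lemma continuous_pp (n : ℕ) : Continuous fun r => pp r n := by
  unfold pp
  exact ((Real.continuous_exp.comp continuous_neg).mul (continuous_pow n)).div_const _

lemma measurable_poissonMeasure : Measurable poissonMeasure := by
  apply Measure.measurable_of_measurable_coe
  intro s _
  simp_rw [poissonMeasure_apply]
  exact Measurable.ennreal_tsum fun n =>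
    (ENNReal.measurable_ofReal.comp (continuous_pp n).measurable).mul_const _

lemma isProbPoisson {r : ℝ} (hr : 0 < r) : IsProbabilityMeasure (poissonMeasure r) := by
  constructor
  rw [poissonMeasure_apply]
  simp only [Set.indicator_univ, Pi.one_apply, mul_one]
  rw [← ENNReal.ofReal_tsum_of_nonneg (fun n => (pp_pos hr n).le) (hasSum_pp hr).summable,
    (hasSum_pp hr).tsum_eq, ENNReal.ofReal_one]

lemma lintegral_poisson (r : ℝ) (f : ℕ → ℝ≥0∞) :
    ∫⁻ n, f n ∂(poissonMeasure r) = ∑' n, f n * ENNReal.ofReal (pp r n) := by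
  rw [lintegral_countable']
  simp_rw [poissonMeasure_singleton]

lemma integrable_poisson {r : ℝ} (hr : 0 < r) {f : ℕ → ℝ}
    (h : Summable fun n => |f n| * pp r n) : Integrable f (poissonMeasure r) := by
  refine ⟨Measurable.aestronglyMeasurable .of_discrete, ?_⟩
  have heq : ∀ n : ℕ, ‖f n‖ₑ * ENNReal.ofReal (pp r n)
      = ENNReal.ofReal (|f n| * pp r n) := fun n => by
    rw [Real.enorm_eq_ofReal_abs, ← ENNReal.ofReal_mul (abs_nonneg _)]
  simp only [HasFiniteIntegral, lintegral_poisson, heq]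
  rw [← ENNReal.ofReal_tsum_of_nonneg (fun n => mul_nonneg (abs_nonneg _) (pp_pos hr n).le) h]
  exact ENNReal.ofReal_lt_top

lemma integral_poisson {r : ℝ} (hr : 0 < r) {f : ℕ → ℝ}
    (hi : Integrable f (poissonMeasure r)) :
    ∫ n, f n ∂(poissonMeasure r) = ∑' n, pp r n * f n := by
  rw [integral_countable' hi]
  simp_rw [measureReal_def, poissonMeasure_singleton, ENNReal.toReal_ofReal (pp_pos hr _).le, smul_eq_mul]

lemma integrable_nat {r : ℝ} (hr : 0 < r) :
    Integrable (fun n : ℕ => (n : ℝ)) (poissonMeasure r) := by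
  refine integrable_poisson hr ?_
  have : (fun n : ℕ => |(n : ℝ)| * pp r n) = fun n : ℕ => (n : ℝ) * pp r n := by
    funext n; rw [Nat.abs_cast]
  rw [this]
  exact (hasSum_npp hr).summable

lemma integral_nat {r : ℝ} (hr : 0 < r) :
    ∫ n, (n : ℝ) ∂(poissonMeasure r) = r := by
  rw [integral_poisson hr (integrable_nat hr)]
  simp_rw [mul_comm]
  exact (hasSum_npp hr).tsum_eq

lemma integrable_affine {r : ℝ} (hr : 0 < r) (a b : ℝ) :
    Integrable (fun n : ℕ => a + (n : ℝ) * b) (poissonMeasure r) := by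
  haveI := isProbPoisson hr
  exact (integrable_const a).add ((integrable_nat hr).mul_const b)

lemma integral_affine {r : ℝ} (hr : 0 < r) (a b : ℝ) :
    ∫ n, (a + (n : ℝ) * b) ∂(poissonMeasure r) = a + r * b := by
  haveI := isProbPoisson hr
  rw [integral_add (integrable_const a) ((integrable_nat hr).mul_const b),
    integral_const, integral_mul_const, integral_nat hr]
  simp

lemma integral_abs_affine_le {r : ℝ} (hr : 0 < r) (a b : ℝ) :
    ∫ n, |a + (n : ℝ) * b| ∂(poissonMeasure r) ≤ |a| + r * |b| := by
  haveI := isProbPoisson hr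
  have h1 : Integrable (fun n : ℕ => |a + (n : ℝ) * b|) (poissonMeasure r) :=
    (integrable_affine hr a b).abs
  have h2 := integrable_affine hr |a| |b|
  have hb : ∀ n : ℕ, |a + (n : ℝ) * b| ≤ |a| + (n : ℝ) * |b| := fun n =>
    (abs_add_le _ _).trans (by rw [abs_mul, Nat.abs_cast])
  calc ∫ n, |a + (n : ℝ) * b| ∂(poissonMeasure r)
      ≤ ∫ n, (|a| + (n : ℝ) * |b|) ∂(poissonMeasure r) := integral_mono h1 h2 hb
    _ = |a| + r * |b| := integral_affine hr _ _

open ProbabilityTheory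
open scoped ProbabilityTheory

noncomputable def poiK (lam0 : ℝ) : Kernel ℝ ℕ where
  toFun x := poissonMeasure (max x 0 + lam0)
  measurable' := measurable_poissonMeasure.comp
    ((measurable_id.max measurable_const).add measurable_const)

lemma poiK_apply (lam0 x : ℝ) : poiK lam0 x = poissonMeasure (max x 0 + lam0) := rfl

lemma poiK_markov {lam0 : ℝ} (hlam0 : 0 < lam0) : IsMarkovKernel (poiK lam0) :=
  ⟨fun x => by
    rw [poiK_apply]
    exact isProbPoisson (by have := le_max_right x 0; linarith)⟩

lemma jointfun_apply (lam0 : ℝ) (x : ℝ) {E : Set (ℝ × ℕ)} (hE : MeasurableSet E) :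
    (poissonMeasure (x + lam0)).map (fun n => (x, n)) E
      = ∑' n, ENNReal.ofReal (pp (x + lam0) n) * E.indicator 1 (x, n) := by
  rw [Measure.map_apply measurable_prodMk_left hE, poissonMeasure_apply]
  apply tsum_congr; intro n
  by_cases h : (x, n) ∈ E <;> simp [Set.indicator_apply, h]

lemma measurable_jointfun (lam0 : ℝ) :
    Measurable fun x : ℝ => (poissonMeasure (x + lam0)).map (fun n => (x, n)) := by
  apply Measure.measurable_of_measurable_coe
  intro E hE
  simp_rw [fun x => jointfun_apply lam0 x hE]
  refine Measurable.ennreal_tsum fun n => Measurable.mul ?_ ?_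
  · exact ENNReal.measurable_ofReal.comp
      ((continuous_pp n).measurable.comp (measurable_id.add_const lam0))
  · exact (measurable_one.indicator hE).comp measurable_prodMk_right

section Joint

variable {lam0 A : ℝ} {μ : Measure ℝ} [IsProbabilityMeasure μ]

lemma joint_eq (hlam0 : 0 < lam0) (hA : 0 < A) (hsupp : ∀ᵐ x ∂μ, x ∈ Set.Icc 0 A) :
    poissonJoint lam0 μ = μ ⊗ₘ (poiK lam0) := by
  haveI := poiK_markov hlam0
  ext E hE
  rw [poissonJoint, Measure.bind_apply hE (measurable_jointfun lam0).aemeasurable,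
    Measure.compProd_apply hE]
  apply lintegral_congr_ae
  filter_upwards [hsupp] with x hx
  rw [Measure.map_apply measurable_prodMk_left hE, poiK_apply, max_eq_left hx.1]

lemma joint_prob (hlam0 : 0 < lam0) (hA : 0 < A) (hsupp : ∀ᵐ x ∂μ, x ∈ Set.Icc 0 A) :
    IsProbabilityMeasure (poissonJoint lam0 μ) := by
  haveI := poiK_markov hlam0
  rw [joint_eq hlam0 hA hsupp]
  infer_instance

lemma joint_fst (hlam0 : 0 < lam0) (hA : 0 < A) (hsupp : ∀ᵐ x ∂μ, x ∈ Set.Icc 0 A) :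
    (poissonJoint lam0 μ).fst = μ := by
  haveI := poiK_markov hlam0
  rw [joint_eq hlam0 hA hsupp]
  exact Measure.fst_compProd μ (poiK lam0)

lemma joint_snd_singleton (hlam0 : 0 < lam0) (hA : 0 < A)
    (hsupp : ∀ᵐ x ∂μ, x ∈ Set.Icc 0 A) (n : ℕ) :
    (poissonJoint lam0 μ).snd {n} = ∫⁻ x, ENNReal.ofReal (pp (x + lam0) n) ∂μ := by
  haveI := poiK_markov hlam0
  rw [joint_eq hlam0 hA hsupp, Measure.snd_apply (measurableSet_singleton n),
    Measure.compProd_apply (measurable_snd (measurableSet_singleton n))]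
  apply lintegral_congr_ae
  filter_upwards [hsupp] with x hx
  have hset : (Prod.mk x ⁻¹' (Prod.snd ⁻¹' {n}) : Set ℕ) = {n} := rfl
  rw [poiK_apply, max_eq_left hx.1, hset, poissonMeasure_singleton]

lemma joint_snd_pos (hlam0 : 0 < lam0) (hA : 0 < A)
    (hsupp : ∀ᵐ x ∂μ, x ∈ Set.Icc 0 A) (n : ℕ) :
    0 < (poissonJoint lam0 μ).snd {n} := by
  rw [joint_snd_singleton hlam0 hA hsupp n, pos_iff_ne_zero]
  intro h0
  have hm : Measurable fun x : ℝ => ENNReal.ofReal (pp (x + lam0) n) :=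
    ENNReal.measurable_ofReal.comp ((continuous_pp n).measurable.comp
      (measurable_id.add_const lam0))
  have h1 := (lintegral_eq_zero_iff hm).mp h0
  haveI : (ae μ).NeBot := ae_neBot.mpr (IsProbabilityMeasure.ne_zero μ)
  have h2 : ∀ᵐ x ∂μ, False := by
    filter_upwards [h1, hsupp] with x hx1 hx2
    have hpos : 0 < pp (x + lam0) n := pp_pos (by linarith [hx2.1]) n
    rw [Pi.zero_apply] at hx1
    exact (ENNReal.ofReal_pos.mpr hpos).ne' hx1
  obtain ⟨x, hx⟩ := h2.exists
  exact hx

/-- The density of the joint law w.r.t. the product of marginals. -/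
noncomputable def dens (lam0 : ℝ) (μ : Measure ℝ) : ℝ × ℕ → ℝ≥0∞ := fun z =>
  ENNReal.ofReal (pp (z.1 + lam0) z.2) / (poissonJoint lam0 μ).snd {z.2}

lemma measurable_dens : Measurable (dens lam0 μ) := by
  apply measurable_from_prod_countable_left
  intro n
  have h : (fun x : ℝ => dens lam0 μ (x, n))
      = fun x : ℝ => ENNReal.ofReal (pp (x + lam0) n) / (poissonJoint lam0 μ).snd {n} := rfl
  rw [h]
  exact Measurable.div (ENNReal.measurable_ofReal.comp ((continuous_pp n).measurable.comp
    (measurable_id.add_const lam0))) measurable_const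

lemma joint_withDensity (hlam0 : 0 < lam0) (hA : 0 < A)
    (hsupp : ∀ᵐ x ∂μ, x ∈ Set.Icc 0 A) :
    poissonJoint lam0 μ
      = (μ.prod ((poissonJoint lam0 μ).snd)).withDensity (dens lam0 μ) := by
  haveI := joint_prob hlam0 hA hsupp
  set ν := (poissonJoint lam0 μ).snd with hν
  haveI : IsProbabilityMeasure ν := by rw [hν]; infer_instance
  ext E hE
  have hR : (μ.prod ν).withDensity (dens lam0 μ) E
      = ∫⁻ x, ∑' n, E.indicator (dens lam0 μ) (x, n) * ν {n} ∂μ := by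
    rw [withDensity_apply _ hE, ← lintegral_indicator hE,
      lintegral_prod _ ((measurable_dens.indicator hE).aemeasurable)]
    simp_rw [lintegral_countable']
  have hL : poissonJoint lam0 μ E
      = ∫⁻ x, ∑' n, ENNReal.ofReal (pp (x + lam0) n) * E.indicator 1 (x, n) ∂μ := by
    rw [poissonJoint, Measure.bind_apply hE (measurable_jointfun lam0).aemeasurable]
    exact lintegral_congr fun x => jointfun_apply lam0 x hE
  rw [hL, hR]
  apply lintegral_congr fun x => ?_
  apply tsum_congr fun n => ?_
  by_cases hmem : (x, n) ∈ E
  · rw [Set.indicator_of_mem hmem, Set.indicator_of_mem hmem, Pi.one_apply, mul_one, dens,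
      ENNReal.div_mul_cancel (joint_snd_pos hlam0 hA hsupp n).ne' (measure_ne_top _ _)]
  · rw [Set.indicator_of_notMem hmem, Set.indicator_of_notMem hmem, zero_mul, mul_zero]

lemma joint_ac (hlam0 : 0 < lam0) (hA : 0 < A) (hsupp : ∀ᵐ x ∂μ, x ∈ Set.Icc 0 A) :
    poissonJoint lam0 μ ≪ ((poissonJoint lam0 μ).fst).prod ((poissonJoint lam0 μ).snd) := by
  rw [joint_fst hlam0 hA hsupp]
  have h0 := withDensity_absolutelyContinuous (μ.prod ((poissonJoint lam0 μ).snd)) (dens lam0 μ)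
  rwa [← joint_withDensity hlam0 hA hsupp] at h0

lemma joint_rnDeriv (hlam0 : 0 < lam0) (hA : 0 < A) (hsupp : ∀ᵐ x ∂μ, x ∈ Set.Icc 0 A) :
    (poissonJoint lam0 μ).rnDeriv (μ.prod ((poissonJoint lam0 μ).snd))
      =ᵐ[poissonJoint lam0 μ] dens lam0 μ := by
  haveI := joint_prob hlam0 hA hsupp
  have h1 : (poissonJoint lam0 μ).rnDeriv (μ.prod ((poissonJoint lam0 μ).snd))
      =ᵐ[μ.prod ((poissonJoint lam0 μ).snd)] dens lam0 μ := by
    have h0 := Measure.rnDeriv_withDensity (μ.prod ((poissonJoint lam0 μ).snd))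
      (measurable_dens (lam0 := lam0) (μ := μ))
    rwa [← joint_withDensity hlam0 hA hsupp] at h0
  have hac : poissonJoint lam0 μ ≪ μ.prod ((poissonJoint lam0 μ).snd) := by
    have h0 := withDensity_absolutelyContinuous (μ.prod ((poissonJoint lam0 μ).snd)) (dens lam0 μ)
    rwa [← joint_withDensity hlam0 hA hsupp] at h0
  exact h1.filter_mono hac.ae_le

variable (lam0 A) (μ) in
/-- Real-valued pmf values of the marginal of `Y`. -/
noncomputable def tt (n : ℕ) : ℝ := ((poissonJoint lam0 μ).snd {n}).toReal

lemma abs_log_le (hlam0 : 0 < lam0) {x : ℝ} (hx : x ∈ Set.Icc 0 A) :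
    |Real.log (x + lam0)| ≤ max |Real.log lam0| |Real.log (A + lam0)| :=
  abs_le_max_abs_abs (Real.log_le_log hlam0 (by linarith [hx.1]))
    (Real.log_le_log (by linarith [hx.1]) (by linarith [hx.2]))

section Analysis

variable (hlam0 : 0 < lam0) (hA : 0 < A) (hsupp : ∀ᵐ x ∂μ, x ∈ Set.Icc 0 A)

include hlam0 hsupp in
lemma int_log : Integrable (fun x => Real.log (x + lam0)) μ := by
  refine Integrable.mono' (integrable_const (max |Real.log lam0| |Real.log (A + lam0)|))
    ((Real.measurable_log.comp (measurable_id.add_const lam0)).aestronglyMeasurable) ?_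
  filter_upwards [hsupp] with x hx
  exact abs_log_le hlam0 hx

include hsupp in
lemma int_id : Integrable (fun x => x) μ := by
  refine Integrable.mono' (integrable_const (max |(0:ℝ)| |A|))
    measurable_id.aestronglyMeasurable ?_
  filter_upwards [hsupp] with x hx
  exact abs_le_max_abs_abs hx.1 hx.2

include hlam0 hsupp in
lemma int_xlog : Integrable (fun x => x * Real.log (x + lam0)) μ := by
  refine Integrable.mono'
    (integrable_const (A * max |Real.log lam0| |Real.log (A + lam0)|))
    (measurable_id.mul (Real.measurable_log.comp
      (measurable_id.add_const lam0))).aestronglyMeasurable ?_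
  filter_upwards [hsupp] with x hx
  rw [Real.norm_eq_abs, abs_mul]
  have h1 : |x| ≤ A := by rw [abs_of_nonneg hx.1]; exact hx.2
  exact mul_le_mul h1 (abs_log_le hlam0 hx) (abs_nonneg _) (hx.1.trans hx.2)

lemma measurable_ppx (lam0 : ℝ) (n : ℕ) : Measurable fun x : ℝ => pp (x + lam0) n := by
  exact (continuous_pp n).measurable.comp (measurable_id.add_const lam0)

include hlam0 hsupp in
lemma int_pp (n : ℕ) : Integrable (fun x => pp (x + lam0) n) μ := by
  refine Integrable.mono' (integrable_const ((A + lam0) ^ n / Nat.factorial n))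
    (measurable_ppx lam0 n).aestronglyMeasurable ?_
  filter_upwards [hsupp] with x hx
  have h1 : 0 < x + lam0 := by linarith [hx.1]
  rw [Real.norm_eq_abs, abs_of_nonneg (pp_pos h1 n).le, pp]
  have h2 : Real.exp (-(x + lam0)) ≤ 1 := Real.exp_le_one_iff.mpr (by linarith)
  have h3 : (x + lam0) ^ n ≤ (A + lam0) ^ n := pow_le_pow_left₀ h1.le (by linarith [hx.2]) n
  have h4 : (0:ℝ) < (Nat.factorial n : ℝ) := by positivity
  have h5 : Real.exp (-(x + lam0)) * (x + lam0) ^ n ≤ (A + lam0) ^ n := by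
    calc Real.exp (-(x + lam0)) * (x + lam0) ^ n ≤ 1 * (A + lam0) ^ n :=
      mul_le_mul h2 h3 (by positivity) zero_le_one
    _ = (A + lam0) ^ n := one_mul _
  exact (div_le_div_iff_of_pos_right h4).mpr h5

include hlam0 hA hsupp in
lemma tt_eq [IsProbabilityMeasure μ] (n : ℕ) :
    tt lam0 μ n = ∫ x, pp (x + lam0) n ∂μ := by
  rw [tt, joint_snd_singleton hlam0 hA hsupp n,
    integral_eq_lintegral_of_nonneg_ae ?_ (measurable_ppx lam0 n).aestronglyMeasurable]
  filter_upwards [hsupp] with x hx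
  exact pp_nonneg (by linarith [hx.1]) n

include hlam0 hA hsupp in
lemma tt_pos [IsProbabilityMeasure μ] (n : ℕ) : 0 < tt lam0 μ n := by
  haveI := joint_prob hlam0 hA hsupp
  exact ENNReal.toReal_pos (joint_snd_pos hlam0 hA hsupp n).ne' (measure_ne_top _ _)

include hlam0 hA hsupp in
lemma int_logpp [IsProbabilityMeasure μ] (n : ℕ) :
    Integrable (fun x => Real.log (pp (x + lam0) n)) μ ∧
    ∫ x, Real.log (pp (x + lam0) n) ∂μ
      = -((∫ x, x ∂μ) + lam0) + n * (∫ x, Real.log (x + lam0) ∂μ)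
        - Real.log (Nat.factorial n) := by
  have hae : (fun x => Real.log (pp (x + lam0) n))
      =ᵐ[μ] fun x => -(x + lam0) + n * Real.log (x + lam0) - Real.log (Nat.factorial n) := by
    filter_upwards [hsupp] with x hx
    exact log_pp (by linarith [hx.1]) n
  have hint2 : Integrable
      (fun x => -(x + lam0) + n * Real.log (x + lam0) - Real.log (Nat.factorial n)) μ :=
    ((((int_id hsupp).add (integrable_const lam0)).neg).add
      ((int_log hlam0 hsupp).const_mul n)).sub (integrable_const _)
  refine ⟨hint2.congr hae.symm, ?_⟩
  have i0 : Integrable (fun x => -(x + lam0)) μ :=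
    ((int_id hsupp).add (integrable_const lam0)).neg
  have i1 : Integrable (fun x => -(x + lam0) + n * Real.log (x + lam0)) μ :=
    i0.add ((int_log hlam0 hsupp).const_mul n)
  have i2 : Integrable (fun x => x + lam0) μ := (int_id hsupp).add (integrable_const lam0)
  rw [integral_congr_ae hae, integral_sub i1 (integrable_const _),
    integral_add i0 ((int_log hlam0 hsupp).const_mul n),
    integral_neg, integral_add (int_id hsupp) (integrable_const lam0),
    integral_const, integral_const, integral_const_mul]
  simp [measure_univ]

include hlam0 hA hsupp in
lemma jensen_log [IsProbabilityMeasure μ] (n : ℕ) :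
    ∫ x, Real.log (pp (x + lam0) n) ∂μ ≤ Real.log (tt lam0 μ n) := by
  have htp := tt_pos hlam0 hA hsupp (μ := μ) n
  have hb : (fun x => Real.log (pp (x + lam0) n))
      ≤ᵐ[μ] fun x => pp (x + lam0) n / tt lam0 μ n - 1 + Real.log (tt lam0 μ n) := by
    filter_upwards [hsupp] with x hx
    have hppos : 0 < pp (x + lam0) n := pp_pos (by linarith [hx.1]) n
    have h1 : Real.log (pp (x + lam0) n / tt lam0 μ n) ≤ pp (x + lam0) n / tt lam0 μ n - 1 :=
      Real.log_le_sub_one_of_pos (by positivity)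
    rw [Real.log_div hppos.ne' htp.ne'] at h1
    linarith
  have hi2 : Integrable
      (fun x => pp (x + lam0) n / tt lam0 μ n - 1 + Real.log (tt lam0 μ n)) μ :=
    (((int_pp hlam0 hsupp n).div_const _).sub (integrable_const 1)).add (integrable_const _)
  calc ∫ x, Real.log (pp (x + lam0) n) ∂μ
      ≤ ∫ x, (pp (x + lam0) n / tt lam0 μ n - 1 + Real.log (tt lam0 μ n)) ∂μ :=
        integral_mono_ae (int_logpp hlam0 hA hsupp n).1 hi2 hb
    _ = Real.log (tt lam0 μ n) := by
        have ic : Integrable (fun x => pp (x + lam0) n / tt lam0 μ n) μ :=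
          (int_pp hlam0 hsupp n).div_const _
        have ia : Integrable (fun x => pp (x + lam0) n / tt lam0 μ n - 1) μ :=
          ic.sub (integrable_const 1)
        rw [integral_add ia (integrable_const _), integral_sub ic (integrable_const 1),
          integral_div, ← tt_eq hlam0 hA hsupp n, integral_const, integral_const]
        simp [measure_univ, div_self htp.ne']


include hlam0 hA hsupp in
lemma cov_bound :
    (∫ x, x * Real.log (x + lam0) ∂μ)
        - (∫ x, x ∂μ) * (∫ x, Real.log (x + lam0) ∂μ)
      ≤ Real.log (A / lam0 + 1) / A * ((∫ x, x ∂μ) * (A - ∫ x, x ∂μ)) := by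
  set m := ∫ x, x ∂μ with hm
  set cb := ∫ x, Real.log (x + lam0) ∂μ with hcb
  set D := ∫ x, x * Real.log (x + lam0) ∂μ with hD
  set L := Real.log (A / lam0 + 1) with hLdef
  have hL0 : 0 ≤ L := Real.log_nonneg (by
    have : 0 ≤ A / lam0 := by positivity
    linarith)
  have hLrw : L = Real.log (A + lam0) - Real.log lam0 := by
    rw [hLdef, show A / lam0 + 1 = (A + lam0) / lam0 by field_simp,
      Real.log_div (by positivity) hlam0.ne']
  have hae2 : ∀ᵐ z ∂(μ.prod μ), z.1 ∈ Set.Icc 0 A ∧ z.2 ∈ Set.Icc 0 A := by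
    refine (MeasureTheory.Measure.ae_prod_iff_ae_ae ?_).mpr ?_
    · exact (measurableSet_Icc.preimage measurable_fst).inter
        (measurableSet_Icc.preimage measurable_snd)
    · filter_upwards [hsupp] with x hx
      filter_upwards [hsupp] with y hy
      exact ⟨hx, hy⟩
  -- integrable pieces
  have j1 : Integrable (fun z : ℝ × ℝ => z.1 * Real.log (z.1 + lam0)) (μ.prod μ) := by
    have h := (int_xlog hlam0 hsupp).mul_prod (integrable_const (1 : ℝ) (μ := μ))
    simpa using h
  have j2 : Integrable (fun z : ℝ × ℝ => z.2 * Real.log (z.2 + lam0)) (μ.prod μ) := by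
    have h := (integrable_const (1 : ℝ) (μ := μ)).mul_prod (int_xlog hlam0 hsupp)
    simpa using h
  have j3 : Integrable (fun z : ℝ × ℝ => z.1 * Real.log (z.2 + lam0)) (μ.prod μ) :=
    (int_id hsupp).mul_prod (int_log hlam0 hsupp)
  have j4 : Integrable (fun z : ℝ × ℝ => Real.log (z.1 + lam0) * z.2) (μ.prod μ) :=
    (int_log hlam0 hsupp).mul_prod (int_id hsupp)
  have hFe : (fun z : ℝ × ℝ => (z.1 - z.2) * (Real.log (z.1 + lam0) - Real.log (z.2 + lam0)))
      = fun z : ℝ × ℝ => (z.1 * Real.log (z.1 + lam0) + z.2 * Real.log (z.2 + lam0))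
        - (z.1 * Real.log (z.2 + lam0) + Real.log (z.1 + lam0) * z.2) := by
    funext z; ring
  have hFint : Integrable
      (fun z : ℝ × ℝ => (z.1 - z.2) * (Real.log (z.1 + lam0) - Real.log (z.2 + lam0)))
      (μ.prod μ) := by
    rw [hFe]; exact (j1.add j2).sub (j3.add j4)
  have e1 : ∫ z : ℝ × ℝ, z.1 * Real.log (z.1 + lam0) ∂(μ.prod μ) = D := by
    have h := integral_prod_mul (μ := μ) (ν := μ)
      (fun x : ℝ => x * Real.log (x + lam0)) (fun _ : ℝ => (1 : ℝ))
    simpa using h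
  have e2 : ∫ z : ℝ × ℝ, z.2 * Real.log (z.2 + lam0) ∂(μ.prod μ) = D := by
    have h := integral_prod_mul (μ := μ) (ν := μ)
      (fun _ : ℝ => (1 : ℝ)) (fun y : ℝ => y * Real.log (y + lam0))
    simpa using h
  have e3 : ∫ z : ℝ × ℝ, z.1 * Real.log (z.2 + lam0) ∂(μ.prod μ) = m * cb := by
    have h := integral_prod_mul (μ := μ) (ν := μ)
      (fun x : ℝ => x) (fun y : ℝ => Real.log (y + lam0))
    exact h
  have e4 : ∫ z : ℝ × ℝ, Real.log (z.1 + lam0) * z.2 ∂(μ.prod μ) = cb * m := by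
    have h := integral_prod_mul (μ := μ) (ν := μ)
      (fun x : ℝ => Real.log (x + lam0)) (fun y : ℝ => y)
    exact h
  have jA : Integrable (fun z : ℝ × ℝ =>
      z.1 * Real.log (z.1 + lam0) + z.2 * Real.log (z.2 + lam0)) (μ.prod μ) :=
    j1.add j2
  have jB : Integrable (fun z : ℝ × ℝ =>
      z.1 * Real.log (z.2 + lam0) + Real.log (z.1 + lam0) * z.2) (μ.prod μ) :=
    j3.add j4
  have hFval : ∫ z, (z.1 - z.2) * (Real.log (z.1 + lam0) - Real.log (z.2 + lam0)) ∂(μ.prod μ)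
      = 2 * (D - m * cb) := by
    rw [hFe, integral_sub jA jB, integral_add j1 j2, integral_add j3 j4, e1, e2, e3, e4]
    ring
  have j5 : Integrable (fun z : ℝ × ℝ => z.1 * (A - z.2)) (μ.prod μ) :=
    (int_id hsupp).mul_prod ((integrable_const A).sub (int_id hsupp))
  have j6 : Integrable (fun z : ℝ × ℝ => (A - z.1) * z.2) (μ.prod μ) :=
    ((integrable_const A).sub (int_id hsupp)).mul_prod (int_id hsupp)
  have hGint : Integrable
      (fun z : ℝ × ℝ => L / A * (z.1 * (A - z.2) + (A - z.1) * z.2)) (μ.prod μ) :=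
    (j5.add j6).const_mul _
  have hAm : ∫ x, (A - x) ∂μ = A - m := by
    rw [integral_sub (integrable_const A) (int_id hsupp), integral_const]
    simp [hm]
  have e5 : ∫ z : ℝ × ℝ, z.1 * (A - z.2) ∂(μ.prod μ) = m * (A - m) := by
    have h := integral_prod_mul (μ := μ) (ν := μ) (fun x : ℝ => x) (fun y : ℝ => A - y)
    rw [hAm] at h
    exact h
  have e6 : ∫ z : ℝ × ℝ, (A - z.1) * z.2 ∂(μ.prod μ) = (A - m) * m := by
    have h := integral_prod_mul (μ := μ) (ν := μ) (fun x : ℝ => A - x) (fun y : ℝ => y)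
    rw [hAm] at h
    exact h
  have hGval : ∫ z, L / A * (z.1 * (A - z.2) + (A - z.1) * z.2) ∂(μ.prod μ)
      = L / A * (2 * (m * (A - m))) := by
    rw [integral_const_mul, integral_add j5 j6, e5, e6]
    ring
  have hFG : (fun z : ℝ × ℝ => (z.1 - z.2) * (Real.log (z.1 + lam0) - Real.log (z.2 + lam0)))
      ≤ᵐ[μ.prod μ] fun z : ℝ × ℝ => L / A * (z.1 * (A - z.2) + (A - z.1) * z.2) := by
    have key : ∀ a b : ℝ, 0 ≤ a → a ≤ A → 0 ≤ b → b ≤ A → b ≤ a →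
        (a - b) * (Real.log (a + lam0) - Real.log (b + lam0))
          ≤ L / A * (a * (A - b) + b * (A - a)) := by
      intro a b ha0 haA hb0 hbA hba
      have h1 : Real.log (a + lam0) - Real.log (b + lam0) ≤ L := by
        have e1 : Real.log (a + lam0) ≤ Real.log (A + lam0) :=
          Real.log_le_log (by linarith) (by linarith)
        have e2 : Real.log lam0 ≤ Real.log (b + lam0) :=
          Real.log_le_log hlam0 (by linarith)
        rw [hLrw]; linarith
      have h2 : 0 ≤ Real.log (a + lam0) - Real.log (b + lam0) :=
        sub_nonneg.mpr (Real.log_le_log (by linarith) (by linarith))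
      have h3 : (a - b) * (Real.log (a + lam0) - Real.log (b + lam0)) ≤ (a - b) * L :=
        mul_le_mul_of_nonneg_left h1 (by linarith)
      have h5 : (a - b) * L ≤ L / A * (a * (A - b) + b * (A - a)) := by
        rw [div_mul_eq_mul_div, le_div_iff₀ hA]
        nlinarith [mul_nonneg (mul_nonneg hb0 (sub_nonneg.mpr haA)) hL0]
      linarith
    filter_upwards [hae2] with z hz
    obtain ⟨⟨hx0, hxA⟩, hy0, hyA⟩ := hz
    rcases le_total z.2 z.1 with hc | hc
    · have := key z.1 z.2 hx0 hxA hy0 hyA hc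
      calc (z.1 - z.2) * (Real.log (z.1 + lam0) - Real.log (z.2 + lam0))
          ≤ L / A * (z.1 * (A - z.2) + z.2 * (A - z.1)) := this
        _ = L / A * (z.1 * (A - z.2) + (A - z.1) * z.2) := by ring
    · have := key z.2 z.1 hy0 hyA hx0 hxA hc
      calc (z.1 - z.2) * (Real.log (z.1 + lam0) - Real.log (z.2 + lam0))
          = (z.2 - z.1) * (Real.log (z.2 + lam0) - Real.log (z.1 + lam0)) := by ring
        _ ≤ L / A * (z.2 * (A - z.1) + z.1 * (A - z.2)) := this
        _ = L / A * (z.1 * (A - z.2) + (A - z.1) * z.2) := by ring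
  have := integral_mono_ae hFint hGint hFG
  rw [hFval, hGval] at this
  linarith

include hlam0 hA hsupp in
lemma g_int_val :
    Integrable (fun z : ℝ × ℕ => ((∫ x, x ∂μ) - z.1)
        + (z.2 : ℝ) * (Real.log (z.1 + lam0) - ∫ x, Real.log (x + lam0) ∂μ))
      (poissonJoint lam0 μ) ∧
    ∫ z, (((∫ x, x ∂μ) - z.1)
        + (z.2 : ℝ) * (Real.log (z.1 + lam0) - ∫ x, Real.log (x + lam0) ∂μ))
        ∂(poissonJoint lam0 μ)
      = (∫ x, x * Real.log (x + lam0) ∂μ)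
        - (∫ x, x ∂μ) * (∫ x, Real.log (x + lam0) ∂μ) := by
  haveI := poiK_markov hlam0
  set m := ∫ x, x ∂μ with hm
  set cb := ∫ x, Real.log (x + lam0) ∂μ with hcb
  have hr : ∀ x : ℝ, 0 < max x 0 + lam0 := fun x => by
    have := le_max_right x 0; linarith
  have hgm : Measurable (fun z : ℝ × ℕ =>
      (m - z.1) + (z.2 : ℝ) * (Real.log (z.1 + lam0) - cb)) := by
    apply measurable_from_prod_countable_left
    intro n
    exact (measurable_const.sub measurable_id).add
      (((Real.measurable_log.comp (measurable_id.add_const lam0)).sub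
        measurable_const).const_mul n)
  set Clog := max |Real.log lam0| |Real.log (A + lam0)| with hClog
  have hgint : Integrable (fun z : ℝ × ℕ =>
      (m - z.1) + (z.2 : ℝ) * (Real.log (z.1 + lam0) - cb)) (μ ⊗ₘ poiK lam0) := by
    rw [Measure.integrable_compProd_iff hgm.aestronglyMeasurable]
    constructor
    · apply Filter.Eventually.of_forall
      intro x
      rw [poiK_apply]
      exact integrable_affine (hr x) (m - x) (Real.log (x + lam0) - cb)
    · refine Integrable.mono'
        (integrable_const ((|m| + A) + (A + lam0) * (Clog + |cb|))) ?_ ?_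
      · exact (((hgm.stronglyMeasurable).norm).integral_kernel_prod_right'
          (κ := poiK lam0)).aestronglyMeasurable
      · filter_upwards [hsupp] with x hx
        have h0 : 0 ≤ ∫ n, ‖(m - x) + (n : ℝ) * (Real.log (x + lam0) - cb)‖
            ∂(poiK lam0 x) := integral_nonneg fun n => norm_nonneg _
        rw [Real.norm_eq_abs, abs_of_nonneg h0]
        have h1 : ∫ n, ‖(m - x) + (n : ℝ) * (Real.log (x + lam0) - cb)‖ ∂(poiK lam0 x)
            ≤ |m - x| + (max x 0 + lam0) * |Real.log (x + lam0) - cb| := by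
          rw [poiK_apply]
          simpa [Real.norm_eq_abs] using
            integral_abs_affine_le (hr x) (m - x) (Real.log (x + lam0) - cb)
        have h2 : |m - x| ≤ |m| + A := by
          have := abs_sub_abs_le_abs_sub m x
          have h3 : |x| ≤ A := by rw [abs_of_nonneg hx.1]; exact hx.2
          calc |m - x| ≤ |m| + |x| := abs_sub _ _
            _ ≤ |m| + A := by linarith
        have h4 : |Real.log (x + lam0) - cb| ≤ Clog + |cb| := by
          calc |Real.log (x + lam0) - cb| ≤ |Real.log (x + lam0)| + |cb| := abs_sub _ _
            _ ≤ Clog + |cb| := by linarith [abs_log_le hlam0 hx]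
        have h5 : max x 0 + lam0 ≤ A + lam0 := by
          have : max x 0 ≤ A := max_le hx.2 hA.le
          linarith
        have h6 : (max x 0 + lam0) * |Real.log (x + lam0) - cb|
            ≤ (A + lam0) * (Clog + |cb|) :=
          mul_le_mul h5 h4 (abs_nonneg _) (by linarith)
        linarith
  constructor
  · rw [joint_eq hlam0 hA hsupp]; exact hgint
  · rw [joint_eq hlam0 hA hsupp, Measure.integral_compProd hgint]
    have hstep : ∫ x, (∫ n, ((m - x) + (n : ℝ) * (Real.log (x + lam0) - cb))
          ∂(poiK lam0 x)) ∂μ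
        = ∫ x, ((m - x) + (x + lam0) * (Real.log (x + lam0) - cb)) ∂μ := by
      apply integral_congr_ae
      filter_upwards [hsupp] with x hx
      rw [poiK_apply, integral_affine (hr x), max_eq_left hx.1]
    rw [hstep]
    have hfe : (fun x => (m - x) + (x + lam0) * (Real.log (x + lam0) - cb))
        = fun x => x * Real.log (x + lam0)
          + (lam0 * Real.log (x + lam0) + ((-(1 + cb)) * x + (m - lam0 * cb))) := by
      funext x; ring
    have i1 : Integrable (fun x => (-(1 + cb)) * x + (m - lam0 * cb)) μ :=
      ((int_id hsupp).const_mul _).add (integrable_const _)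
    have i2 : Integrable (fun x => lam0 * Real.log (x + lam0)
        + ((-(1 + cb)) * x + (m - lam0 * cb))) μ :=
      ((int_log hlam0 hsupp).const_mul _).add i1
    rw [hfe, integral_add (int_xlog hlam0 hsupp) i2,
      integral_add ((int_log hlam0 hsupp).const_mul _) i1,
      integral_add ((int_id hsupp).const_mul _) (integrable_const _),
      integral_const_mul, integral_const_mul, integral_const]
    simp only [probReal_univ, measure_univ, ENNReal.toReal_one, one_smul, smul_eq_mul]
    rw [← hm, ← hcb]
    ring


include hlam0 hA hsupp in
lemma main_bound :
    klDivM (poissonJoint lam0 μ) (((poissonJoint lam0 μ).fst).prod ((poissonJoint lam0 μ).snd))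
      ≤ ENNReal.ofReal (Real.log (A / lam0 + 1) / A
          * ((∫ x, x ∂μ) * (A - ∫ x, x ∂μ))) := by
  haveI := joint_prob hlam0 hA hsupp
  have hsuppP : ∀ᵐ z ∂(poissonJoint lam0 μ), z.1 ∈ Set.Icc 0 A := by
    rw [ae_iff]
    have hset : {z : ℝ × ℕ | ¬ z.1 ∈ Set.Icc 0 A} = Prod.fst ⁻¹' (Set.Icc 0 A)ᶜ := rfl
    rw [hset, ← Measure.fst_apply (measurableSet_Icc.compl), joint_fst hlam0 hA hsupp]
    exact ae_iff.mp hsupp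
  rw [klDivM, if_pos (joint_ac hlam0 hA hsupp), joint_fst hlam0 hA hsupp]
  have hcong : ∫ z, Real.log (((poissonJoint lam0 μ).rnDeriv
        (μ.prod (poissonJoint lam0 μ).snd) z).toReal) ∂(poissonJoint lam0 μ)
      = ∫ z : ℝ × ℕ, Real.log (pp (z.1 + lam0) z.2 / tt lam0 μ z.2)
          ∂(poissonJoint lam0 μ) := by
    apply integral_congr_ae
    filter_upwards [joint_rnDeriv hlam0 hA hsupp, hsuppP] with z hz hz1
    rw [hz]
    have hd : dens lam0 μ z
        = ENNReal.ofReal (pp (z.1 + lam0) z.2) / (poissonJoint lam0 μ).snd {z.2} := rfl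
    rw [hd, ENNReal.toReal_div, ENNReal.toReal_ofReal (pp_nonneg (by linarith [hz1.1]) _)]
    rfl
  rw [hcong]
  by_cases hint : Integrable
      (fun z : ℝ × ℕ => Real.log (pp (z.1 + lam0) z.2 / tt lam0 μ z.2))
      (poissonJoint lam0 μ)
  · apply ENNReal.ofReal_le_ofReal
    obtain ⟨hgint, hgval⟩ := g_int_val hlam0 hA hsupp
    have hle : (fun z : ℝ × ℕ => Real.log (pp (z.1 + lam0) z.2 / tt lam0 μ z.2))
        ≤ᵐ[poissonJoint lam0 μ] fun z : ℝ × ℕ => ((∫ x, x ∂μ) - z.1)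
          + (z.2 : ℝ) * (Real.log (z.1 + lam0) - ∫ x, Real.log (x + lam0) ∂μ) := by
      filter_upwards [hsuppP] with z hz
      have hp : 0 < pp (z.1 + lam0) z.2 := pp_pos (by linarith [hz.1]) _
      rw [Real.log_div hp.ne' (tt_pos hlam0 hA hsupp z.2).ne',
        log_pp (by linarith [hz.1]) z.2]
      have hj := jensen_log hlam0 hA hsupp z.2
      rw [(int_logpp hlam0 hA hsupp z.2).2] at hj
      linarith
    calc ∫ z : ℝ × ℕ, Real.log (pp (z.1 + lam0) z.2 / tt lam0 μ z.2)
          ∂(poissonJoint lam0 μ)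
        ≤ ∫ z : ℝ × ℕ, (((∫ x, x ∂μ) - z.1)
            + (z.2 : ℝ) * (Real.log (z.1 + lam0) - ∫ x, Real.log (x + lam0) ∂μ))
            ∂(poissonJoint lam0 μ) := integral_mono_ae hint hgint hle
      _ = (∫ x, x * Real.log (x + lam0) ∂μ)
            - (∫ x, x ∂μ) * (∫ x, Real.log (x + lam0) ∂μ) := hgval
      _ ≤ _ := cov_bound hlam0 hA hsupp
  · rw [integral_undef hint]
    simp

end Analysis
end Joint
end Stmt8

/-- For the Poisson channel `Y ~ Poisson(X + λ₀)` with input law `μ` supported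
on `[0, A]` and mean at most `α`, the mutual information `I(X;Y)`, i.e. the KL divergence of the
joint law from the product of its marginals, satisfies
`I(X;Y) ≤ (α/A)(A-α) log (A/λ₀ + 1)` if `α ≤ A/2`, and
`I(X;Y) ≤ (A/4) log (A/λ₀ + 1)` if `α ≥ A/2`. -/
theorem stmt_8 (lam0 A α : ℝ) (hlam0 : 0 < lam0) (hA : 0 < A) (hα : 0 < α) (hαA : α ≤ A)
    (μ : Measure ℝ) [IsProbabilityMeasure μ]
    (hsupp : ∀ᵐ x ∂μ, x ∈ Set.Icc 0 A)
    (hmean : ∫ x, x ∂μ ≤ α) :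
    (α ≤ A / 2 →
      klDivM (poissonJoint lam0 μ)
          (((poissonJoint lam0 μ).fst).prod ((poissonJoint lam0 μ).snd))
        ≤ ENNReal.ofReal (α / A * (A - α) * Real.log (A / lam0 + 1))) ∧
    (A / 2 ≤ α →
      klDivM (poissonJoint lam0 μ)
          (((poissonJoint lam0 μ).fst).prod ((poissonJoint lam0 μ).snd))
        ≤ ENNReal.ofReal (A / 4 * Real.log (A / lam0 + 1))) := by
  have key := Stmt8.main_bound hlam0 hA hsupp
  set m := ∫ x, x ∂μ with hm
  have hm0 : 0 ≤ m := integral_nonneg_of_ae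
    (by filter_upwards [hsupp] with x hx using hx.1)
  have hL0 : 0 ≤ Real.log (A / lam0 + 1) := Real.log_nonneg (by
    have : 0 ≤ A / lam0 := by positivity
    linarith)
  constructor
  · intro hhalf
    refine key.trans (ENNReal.ofReal_le_ofReal ?_)
    rw [show α / A * (A - α) * Real.log (A / lam0 + 1)
        = Real.log (A / lam0 + 1) / A * (α * (A - α)) by ring]
    refine mul_le_mul_of_nonneg_left ?_ (div_nonneg hL0 hA.le)
    nlinarith [mul_nonneg (sub_nonneg.mpr hmean) (show (0:ℝ) ≤ A - α - m by linarith)]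
  · intro hhalf
    refine key.trans (ENNReal.ofReal_le_ofReal ?_)
    have hAeq : A / 4 * Real.log (A / lam0 + 1)
        = Real.log (A / lam0 + 1) / A * (A * A / 4) := by
      field_simp
    rw [hAeq]
    refine mul_le_mul_of_nonneg_left ?_ (div_nonneg hL0 hA.le)
    nlinarith [sq_nonneg (A - 2 * m)]
end

section
/- Let 𝒳₁, 𝒴₁, 𝒳₂, 𝒴₂ be finite sets, W₁ a strictly positive channel from 𝒳₁ to 𝒴₁, and W₂ a strictly positive channel from 𝒳₂ to 𝒴₂. For a channel W from 𝒳 to 𝒴 define A(W) to be the maximum over input pmfs p_X on 𝒳 of Σ_{x,y} [p_X(x)W(y|x) − p_X(x)·p_Y(y)]·log W(y|x), where p_Y(y) = Σ_x p_X(x)W(y|x). Let W₁ ⊗ W₂ be the product channel from 𝒳₁ × 𝒳₂ to 𝒴₁ × 𝒴₂ given by (W₁ ⊗ W₂)((y₁,y₂)|(x₁,x₂)) = W₁(y₁|x₁)·W₂(y₂|x₂), where the maximum defining A(W₁ ⊗ W₂) is over all joint input pmfs on 𝒳₁ × 𝒳₂ (not only product pmfs). Then A(W₁ ⊗ W₂)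 = A(W₁) + A(W₂), and the maximum for the product channel is attained at a product input pmf. -/
open scoped BigOperators

/-- A probability mass function on a finite set. -/
def IsPmf {S : Type*} [Fintype S] (p : S → ℝ) : Prop :=
  (∀ s, 0 ≤ p s) ∧ (∀ s, p s ≤ 1) ∧ ∑ s, p s = 1

/-- The symmetrized KL divergence between the joint pmf `pX(x) W(y|x)` and the product of its
marginals, in its simplified form `∑ (x,y), (p(x,y) - pX x * pY y) * log (W x y)`. -/
noncomputable def symKL {X Y : Type*} [Fintype X] [Fintype Y]
    (pX : X → ℝ) (W : X → Y → ℝ) : ℝ :=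
  ∑ x, ∑ y, (pX x * W x y - pX x * (∑ x', pX x' * W x' y)) * Real.log (W x y)

/-- `Abound W` is the maximum over input pmfs of the symmetrized KL divergence between the joint
pmf and the product of its marginals. -/
noncomputable def Abound {X Y : Type*} [Fintype X] [Fintype Y] (W : X → Y → ℝ) : ℝ :=
  sSup {a | ∃ p, IsPmf p ∧ a = symKL p W}

lemma pmf_compact {X : Type*} [Fintype X] : IsCompact {p : X → ℝ | IsPmf p} := by
  rw [Metric.isCompact_iff_isClosed_bounded]
  constructor
  · have h1 : IsClosed {p : X → ℝ | ∀ s, 0 ≤ p s} := by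
      simpa [Set.setOf_forall] using isClosed_iInter fun s =>
        isClosed_le continuous_const (continuous_apply s)
    have h2 : IsClosed {p : X → ℝ | ∀ s, p s ≤ 1} := by
      simpa [Set.setOf_forall] using isClosed_iInter fun s =>
        isClosed_le (continuous_apply s) continuous_const
    have h3 : IsClosed {p : X → ℝ | ∑ s, p s = 1} :=
      isClosed_eq (by continuity) continuous_const
    have : {p : X → ℝ | IsPmf p} =
        ({p : X → ℝ | ∀ s, 0 ≤ p s} ∩ {p | ∀ s, p s ≤ 1}) ∩ {p | ∑ s, p s = 1} := by
      ext p; simp [IsPmf, Set.mem_setOf_eq, and_assoc]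
    rw [this]; exact ((h1.inter h2).inter h3)
  · apply (Metric.isBounded_closedBall (x := (0 : X → ℝ)) (r := 1)).subset
    intro p hp
    simp only [Metric.mem_closedBall, dist_zero_right]
    refine pi_norm_le_iff_of_nonneg zero_le_one |>.2 fun s => ?_
    rw [Real.norm_eq_abs, abs_le]
    exact ⟨by linarith [hp.1 s], hp.2.1 s⟩

lemma symKL_continuous {X Y : Type*} [Fintype X] [Fintype Y] (W : X → Y → ℝ) :
    Continuous fun p : X → ℝ => symKL p W := by
  unfold symKL
  continuity

lemma exists_max {X Y : Type*} [Fintype X] [Fintype Y] [Nonempty X] (W : X → Y → ℝ) :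
    ∃ p, IsPmf p ∧ ∀ q, IsPmf q → symKL q W ≤ symKL p W := by
  have hcard : (0 : ℝ) < (Fintype.card X : ℝ) := by
    exact_mod_cast Fintype.card_pos
  have hne : ({p : X → ℝ | IsPmf p}).Nonempty := by
    refine ⟨fun _ => (Fintype.card X : ℝ)⁻¹, fun s => by positivity, fun s => ?_, ?_⟩
    · rw [inv_le_one_iff₀]; right; exact_mod_cast Fintype.card_pos
    · rw [Finset.sum_const, Finset.card_univ, nsmul_eq_mul, mul_inv_cancel₀ (ne_of_gt hcard)]
  obtain ⟨p, hp, hmax⟩ := pmf_compact.exists_isMaxOn hne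
    ((symKL_continuous W).continuousOn)
  exact ⟨p, hp, fun q hq => hmax hq⟩

lemma helper {X₁ Y₁ X₂ Y₂ : Type*} [Fintype X₁] [Fintype Y₁] [Fintype X₂] [Fintype Y₂]
    (W₁ : X₁ → Y₁ → ℝ) (W₂ : X₂ → Y₂ → ℝ) (hW₂sum : ∀ x, ∑ y, W₂ x y = 1)
    (p : X₁ × X₂ → ℝ) :
    (∑ x : X₁ × X₂, ∑ y : Y₁ × Y₂,
        (p x * (W₁ x.1 y.1 * W₂ x.2 y.2)
          - p x * (∑ x', p x' * (W₁ x'.1 y.1 * W₂ x'.2 y.2))) * Real.log (W₁ x.1 y.1))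
      = symKL (fun x₁ => ∑ x₂, p (x₁, x₂)) W₁ := by
  unfold symKL
  rw [Fintype.sum_prod_type]
  refine Finset.sum_congr rfl fun x₁ _ => ?_
  -- now goal : ∑ x₂, ∑ y : Y₁ × Y₂, ... = ∑ y₁, ...
  have step1 : ∀ x₂ : X₂, (∑ y : Y₁ × Y₂,
      (p (x₁, x₂) * (W₁ x₁ y.1 * W₂ x₂ y.2)
        - p (x₁, x₂) * (∑ x', p x' * (W₁ x'.1 y.1 * W₂ x'.2 y.2))) * Real.log (W₁ x₁ y.1))
      = ∑ y₁, ∑ y₂, (p (x₁, x₂) * (W₁ x₁ y₁ * W₂ x₂ y₂)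
        - p (x₁, x₂) * (∑ x', p x' * (W₁ x'.1 y₁ * W₂ x'.2 y₂))) * Real.log (W₁ x₁ y₁) := by
    intro x₂; rw [Fintype.sum_prod_type]
  simp only [step1]
  rw [Finset.sum_comm]
  refine Finset.sum_congr rfl fun y₁ _ => ?_
  -- goal: ∑ x₂, ∑ y₂, (p (x₁,x₂)*(W₁ x₁ y₁ * W₂ x₂ y₂) - p (x₁,x₂) * S y₂) * L = (...)*L
  have hT : (∑ y₂, ∑ x' : X₁ × X₂, p x' * (W₁ x'.1 y₁ * W₂ x'.2 y₂))
      = ∑ x₁', (∑ x₂', p (x₁', x₂')) * W₁ x₁' y₁ := by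
    simp only [Fintype.sum_prod_type]
    rw [Finset.sum_comm]
    refine Finset.sum_congr rfl fun x₁' _ => ?_
    rw [Finset.sum_comm, Finset.sum_mul]
    refine Finset.sum_congr rfl fun x₂' _ => ?_
    calc ∑ y₂, p (x₁', x₂') * (W₁ x₁' y₁ * W₂ x₂' y₂)
        = ∑ y₂, (p (x₁', x₂') * W₁ x₁' y₁) * W₂ x₂' y₂ := by
          refine Finset.sum_congr rfl fun y₂ _ => by ring
      _ = (p (x₁', x₂') * W₁ x₁' y₁) * ∑ y₂, W₂ x₂' y₂ := (Finset.mul_sum _ _ _).symm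
      _ = p (x₁', x₂') * W₁ x₁' y₁ := by rw [hW₂sum, mul_one]
  have hRow : ∀ x₂ : X₂, (∑ y₂, (p (x₁, x₂) * (W₁ x₁ y₁ * W₂ x₂ y₂)
        - p (x₁, x₂) * (∑ x' : X₁ × X₂, p x' * (W₁ x'.1 y₁ * W₂ x'.2 y₂)))
          * Real.log (W₁ x₁ y₁))
      = p (x₁, x₂) * ((W₁ x₁ y₁ - ∑ x₁', (∑ x₂', p (x₁', x₂')) * W₁ x₁' y₁)
          * Real.log (W₁ x₁ y₁)) := by
    intro x₂
    have e1 : (∑ y₂, (p (x₁, x₂) * (W₁ x₁ y₁ * W₂ x₂ y₂)) * Real.log (W₁ x₁ y₁))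
        = p (x₁, x₂) * W₁ x₁ y₁ * Real.log (W₁ x₁ y₁) := by
      calc (∑ y₂, (p (x₁, x₂) * (W₁ x₁ y₁ * W₂ x₂ y₂)) * Real.log (W₁ x₁ y₁))
          = ∑ y₂, (p (x₁, x₂) * W₁ x₁ y₁ * Real.log (W₁ x₁ y₁)) * W₂ x₂ y₂ := by
            refine Finset.sum_congr rfl fun y₂ _ => by ring
        _ = (p (x₁, x₂) * W₁ x₁ y₁ * Real.log (W₁ x₁ y₁)) * ∑ y₂, W₂ x₂ y₂ :=
            (Finset.mul_sum _ _ _).symm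
        _ = _ := by rw [hW₂sum, mul_one]
    have e2 : (∑ y₂, (p (x₁, x₂) * (∑ x' : X₁ × X₂, p x' * (W₁ x'.1 y₁ * W₂ x'.2 y₂)))
          * Real.log (W₁ x₁ y₁))
        = p (x₁, x₂) * Real.log (W₁ x₁ y₁)
            * ∑ x₁', (∑ x₂', p (x₁', x₂')) * W₁ x₁' y₁ := by
      calc (∑ y₂, (p (x₁, x₂) * (∑ x' : X₁ × X₂, p x' * (W₁ x'.1 y₁ * W₂ x'.2 y₂)))
            * Real.log (W₁ x₁ y₁))
          = ∑ y₂, (p (x₁, x₂) * Real.log (W₁ x₁ y₁))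
              * (∑ x' : X₁ × X₂, p x' * (W₁ x'.1 y₁ * W₂ x'.2 y₂)) := by
            refine Finset.sum_congr rfl fun y₂ _ => by ring
        _ = (p (x₁, x₂) * Real.log (W₁ x₁ y₁))
              * ∑ y₂, ∑ x' : X₁ × X₂, p x' * (W₁ x'.1 y₁ * W₂ x'.2 y₂) :=
            (Finset.mul_sum _ _ _).symm
        _ = _ := by rw [hT]
    calc (∑ y₂, (p (x₁, x₂) * (W₁ x₁ y₁ * W₂ x₂ y₂)
          - p (x₁, x₂) * (∑ x' : X₁ × X₂, p x' * (W₁ x'.1 y₁ * W₂ x'.2 y₂)))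
            * Real.log (W₁ x₁ y₁))
        = (∑ y₂, (p (x₁, x₂) * (W₁ x₁ y₁ * W₂ x₂ y₂)) * Real.log (W₁ x₁ y₁))
          - ∑ y₂, (p (x₁, x₂) * (∑ x' : X₁ × X₂, p x' * (W₁ x'.1 y₁ * W₂ x'.2 y₂)))
              * Real.log (W₁ x₁ y₁) := by
          rw [← Finset.sum_sub_distrib]
          refine Finset.sum_congr rfl fun y₂ _ => by ring
      _ = _ := by rw [e1, e2]; ring
  simp only [hRow]
  rw [← Finset.sum_mul]
  ring

lemma symKL_prod {X₁ Y₁ X₂ Y₂ : Type*} [Fintype X₁] [Fintype Y₁] [Fintype X₂] [Fintype Y₂]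
    (W₁ : X₁ → Y₁ → ℝ) (W₂ : X₂ → Y₂ → ℝ)
    (hW₁pos : ∀ x y, 0 < W₁ x y) (hW₁sum : ∀ x, ∑ y, W₁ x y = 1)
    (hW₂pos : ∀ x y, 0 < W₂ x y) (hW₂sum : ∀ x, ∑ y, W₂ x y = 1)
    (p : X₁ × X₂ → ℝ) :
    symKL p (fun (x : X₁ × X₂) (y : Y₁ × Y₂) => W₁ x.1 y.1 * W₂ x.2 y.2)
      = symKL (fun x₁ => ∑ x₂, p (x₁, x₂)) W₁ + symKL (fun x₂ => ∑ x₁, p (x₁, x₂)) W₂ := by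
  have hsplit : symKL p (fun (x : X₁ × X₂) (y : Y₁ × Y₂) => W₁ x.1 y.1 * W₂ x.2 y.2)
      = (∑ x : X₁ × X₂, ∑ y : Y₁ × Y₂,
          (p x * (W₁ x.1 y.1 * W₂ x.2 y.2)
            - p x * (∑ x', p x' * (W₁ x'.1 y.1 * W₂ x'.2 y.2))) * Real.log (W₁ x.1 y.1))
        + (∑ x : X₁ × X₂, ∑ y : Y₁ × Y₂,
          (p x * (W₁ x.1 y.1 * W₂ x.2 y.2)
            - p x * (∑ x', p x' * (W₁ x'.1 y.1 * W₂ x'.2 y.2))) * Real.log (W₂ x.2 y.2)) := by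
    unfold symKL
    rw [← Finset.sum_add_distrib]
    refine Finset.sum_congr rfl fun x _ => ?_
    rw [← Finset.sum_add_distrib]
    refine Finset.sum_congr rfl fun y _ => ?_
    rw [Real.log_mul (hW₁pos x.1 y.1).ne' (hW₂pos x.2 y.2).ne', mul_add]
  rw [hsplit, helper W₁ W₂ hW₂sum p]
  congr 1
  -- second term: reduce to helper with swapped roles
  have h2 := helper W₂ W₁ hW₁sum (fun z : X₂ × X₁ => p (z.2, z.1))
  refine Eq.trans ?_ h2
  refine Fintype.sum_equiv (Equiv.prodComm X₁ X₂) _ _ fun x => ?_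
  obtain ⟨a, b⟩ := x
  simp only [Equiv.prodComm_apply, Prod.swap_prod_mk]
  refine Fintype.sum_equiv (Equiv.prodComm Y₁ Y₂) _ _ fun y => ?_
  obtain ⟨c, d⟩ := y
  simp only [Equiv.prodComm_apply, Prod.swap_prod_mk]
  have hinner : (∑ x' : X₂ × X₁, p (x'.2, x'.1) * (W₂ x'.1 d * W₁ x'.2 c))
      = ∑ x' : X₁ × X₂, p x' * (W₁ x'.1 c * W₂ x'.2 d) := by
    refine (Fintype.sum_equiv (Equiv.prodComm X₂ X₁) _ _ fun x' => ?_)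
    obtain ⟨u, v⟩ := x'
    simp only [Equiv.prodComm_apply, Prod.swap_prod_mk]
    ring
  rw [hinner]
  ring

lemma marginal1_isPmf {X₁ X₂ : Type*} [Fintype X₁] [Fintype X₂] {p : X₁ × X₂ → ℝ}
    (hp : IsPmf p) : IsPmf (fun x₁ => ∑ x₂, p (x₁, x₂)) := by
  obtain ⟨h0, h1, hs⟩ := hp
  have hsum : ∑ x₁, ∑ x₂, p (x₁, x₂) = 1 := by
    rw [← Fintype.sum_prod_type]; exact hs
  refine ⟨fun x₁ => Finset.sum_nonneg fun x₂ _ => h0 _, fun x₁ => ?_, hsum⟩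
  calc (∑ x₂, p (x₁, x₂)) ≤ ∑ x₁', ∑ x₂, p (x₁', x₂) :=
        Finset.single_le_sum (fun x₁' _ => Finset.sum_nonneg fun x₂ _ => h0 _)
          (Finset.mem_univ x₁)
    _ = 1 := hsum

lemma marginal2_isPmf {X₁ X₂ : Type*} [Fintype X₁] [Fintype X₂] {p : X₁ × X₂ → ℝ}
    (hp : IsPmf p) : IsPmf (fun x₂ => ∑ x₁, p (x₁, x₂)) := by
  have := marginal1_isPmf (p := fun z : X₂ × X₁ => p (z.2, z.1)) ?_
  · exact this
  · obtain ⟨h0, h1, hs⟩ := hp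
    refine ⟨fun z => h0 _, fun z => h1 _, ?_⟩
    rw [← hs]
    exact Fintype.sum_equiv (Equiv.prodComm X₂ X₁) _ _ fun z => by obtain ⟨u,v⟩ := z; rfl

lemma abound_eq {X Y : Type*} [Fintype X] [Fintype Y] {W : X → Y → ℝ} {p : X → ℝ}
    (hp : IsPmf p) (hmax : ∀ q, IsPmf q → symKL q W ≤ symKL p W) :
    Abound W = symKL p W := by
  apply IsGreatest.csSup_eq
  constructor
  · exact ⟨p, hp, rfl⟩
  · rintro a ⟨q, hq, rfl⟩
    exact hmax q hq


/-- For strictly positive channels `W₁` and `W₂`, the symmetrized-KL upper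
bound is additive over the product channel, `A(W₁ ⊗ W₂) = A(W₁) + A(W₂)` (where the maximum for
the product channel is over all joint input pmfs), and the maximum for the product channel is
attained at a product input pmf. -/
theorem stmt_10 {𝒳₁ 𝒴₁ 𝒳₂ 𝒴₂ : Type*}
    [Fintype 𝒳₁] [Fintype 𝒴₁] [Fintype 𝒳₂] [Fintype 𝒴₂]
    [Nonempty 𝒳₁] [Nonempty 𝒳₂]
    (W₁ : 𝒳₁ → 𝒴₁ → ℝ) (W₂ : 𝒳₂ → 𝒴₂ → ℝ)
    (hW₁pos : ∀ x y, 0 < W₁ x y) (hW₁le : ∀ x y, W₁ x y ≤ 1) (hW₁sum : ∀ x, ∑ y, W₁ x y = 1)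
    (hW₂pos : ∀ x y, 0 < W₂ x y) (hW₂le : ∀ x y, W₂ x y ≤ 1) (hW₂sum : ∀ x, ∑ y, W₂ x y = 1) :
    Abound (fun (x : 𝒳₁ × 𝒳₂) (y : 𝒴₁ × 𝒴₂) => W₁ x.1 y.1 * W₂ x.2 y.2)
        = Abound W₁ + Abound W₂ ∧
      ∃ p₁ : 𝒳₁ → ℝ, ∃ p₂ : 𝒳₂ → ℝ, IsPmf p₁ ∧ IsPmf p₂ ∧
        symKL (fun x : 𝒳₁ × 𝒳₂ => p₁ x.1 * p₂ x.2)
            (fun (x : 𝒳₁ × 𝒳₂) (y : 𝒴₁ × 𝒴₂) => W₁ x.1 y.1 * W₂ x.2 y.2)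
          = Abound (fun (x : 𝒳₁ × 𝒳₂) (y : 𝒴₁ × 𝒴₂) => W₁ x.1 y.1 * W₂ x.2 y.2) := by
  obtain ⟨q₁, hq₁, hmax₁⟩ := exists_max W₁
  obtain ⟨q₂, hq₂, hmax₂⟩ := exists_max W₂
  set Wp := fun (x : 𝒳₁ × 𝒳₂) (y : 𝒴₁ × 𝒴₂) => W₁ x.1 y.1 * W₂ x.2 y.2 with hWp
  -- the product pmf
  have hqprod : IsPmf (fun x : 𝒳₁ × 𝒳₂ => q₁ x.1 * q₂ x.2) := by
    refine ⟨fun x => mul_nonneg (hq₁.1 _) (hq₂.1 _),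
      fun x => mul_le_one₀ (hq₁.2.1 _) (hq₂.1 _) (hq₂.2.1 _), ?_⟩
    rw [Fintype.sum_prod_type]
    simp only [← Finset.mul_sum, hq₂.2.2, mul_one]
    exact hq₁.2.2
  -- marginals of the product pmf
  have hm1 : (fun x₁ => ∑ x₂, (fun x : 𝒳₁ × 𝒳₂ => q₁ x.1 * q₂ x.2) (x₁, x₂)) = q₁ := by
    funext x₁; simp only [← Finset.mul_sum, hq₂.2.2, mul_one]
  have hm2 : (fun x₂ => ∑ x₁, (fun x : 𝒳₁ × 𝒳₂ => q₁ x.1 * q₂ x.2) (x₁, x₂)) = q₂ := by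
    funext x₂; simp only
    rw [← Finset.sum_mul, hq₁.2.2, one_mul]
  have hqval : symKL (fun x : 𝒳₁ × 𝒳₂ => q₁ x.1 * q₂ x.2) Wp = symKL q₁ W₁ + symKL q₂ W₂ := by
    rw [hWp, symKL_prod W₁ W₂ hW₁pos hW₁sum hW₂pos hW₂sum, hm1, hm2]
  -- the product-channel Abound
  have hAp : Abound Wp = symKL q₁ W₁ + symKL q₂ W₂ := by
    apply IsGreatest.csSup_eq
    constructor
    · exact ⟨fun x : 𝒳₁ × 𝒳₂ => q₁ x.1 * q₂ x.2, hqprod, hqval.symm⟩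
    · rintro a ⟨p, hp, rfl⟩
      rw [hWp, symKL_prod W₁ W₂ hW₁pos hW₁sum hW₂pos hW₂sum]
      exact add_le_add (hmax₁ _ (marginal1_isPmf hp)) (hmax₂ _ (marginal2_isPmf hp))
  refine ⟨?_, q₁, q₂, hq₁, hq₂, ?_⟩
  · rw [hAp, abound_eq hq₁ hmax₁, abound_eq hq₂ hmax₂]
  · rw [hqval, hAp]
end

section
/- Let 𝒳 and 𝒴 be finite sets and p_X a fixed input pmf on 𝒳. For a strictly positive channel W from 𝒳 to 𝒴, let F(W) = D_sym(p ‖ p_X ⊗ p_Y), the symmetrized KL divergence between the joint pmf p(x,y) = p_X(x)W(y|x) and the product of its marginals. Then F is convex in the channel: for strictly positive channels W₀, W₁ and t ∈ [0,1], F(t·W₁ + (1−t)·W₀) ≤ t·F(W₁) + (1−t)·F(W₀), where (t·W₁ + (1−t)·W₀)(y|x) = t·W₁(y|x) + (1−t)·W₀(y|x). -/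
open scoped BigOperators

/-- For a fixed input pmf `pX` and channel `W`, the symmetrized KL divergence
`D_sym(p ‖ pX ⊗ pY) = D(p ‖ pX ⊗ pY) + D(pX ⊗ pY ‖ p)` between the joint pmf
`p(x,y) = pX x * W x y` and the product of its marginals. -/
noncomputable def FsymKL {X Y : Type*} [Fintype X] [Fintype Y]
    (pX : X → ℝ) (W : X → Y → ℝ) : ℝ :=
  (∑ x, ∑ y, pX x * W x y *
      Real.log (pX x * W x y / (pX x * (∑ x', pX x' * W x' y))))
    + ∑ x, ∑ y, pX x * (∑ x', pX x' * W x' y) *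
        Real.log (pX x * (∑ x', pX x' * W x' y) / (pX x * W x y))

noncomputable def fD (a b : ℝ) : ℝ := a * Real.log (a/b) + b * Real.log (b/a)

set_option linter.unreachableTactic false
set_option linter.unnecessarySeqFocus false
set_option linter.unusedTactic false

-- two-point log-sum inequality (joint convexity of a*log(a/b))
lemma klconv (a₀ a₁ b₀ b₁ t : ℝ) (ha₀ : 0 < a₀) (ha₁ : 0 < a₁)
    (hb₀ : 0 < b₀) (hb₁ : 0 < b₁) (ht0 : 0 ≤ t) (ht1 : t ≤ 1) :
    (t*a₁+(1-t)*a₀) * Real.log ((t*a₁+(1-t)*a₀)/(t*b₁+(1-t)*b₀))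
      ≤ t * (a₁ * Real.log (a₁/b₁)) + (1-t) * (a₀ * Real.log (a₀/b₀)) := by
  have hbt : 0 < t*b₁ + (1-t)*b₀ := by
    rcases eq_or_lt_of_le ht1 with h|h
    · rw [← h]; ring_nf; nlinarith
    · have h1 : 0 < (1-t)*b₀ := by nlinarith
      nlinarith [mul_nonneg ht0 hb₁.le]
  have h1 : (0:ℝ) ≤ t*b₁/(t*b₁+(1-t)*b₀) := by positivity
  have h0 : (0:ℝ) ≤ (1-t)*b₀/(t*b₁+(1-t)*b₀) := by
    apply div_nonneg _ hbt.le; nlinarith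
  have hsum : t*b₁/(t*b₁+(1-t)*b₀) + (1-t)*b₀/(t*b₁+(1-t)*b₀) = 1 := by
    field_simp
  have key := Real.convexOn_mul_log.2 (Set.mem_Ici.2 (div_pos ha₁ hb₁).le)
    (Set.mem_Ici.2 (div_pos ha₀ hb₀).le) h1 h0 hsum
  simp only [smul_eq_mul] at key
  have hx : t*b₁/(t*b₁+(1-t)*b₀) * (a₁/b₁) + (1-t)*b₀/(t*b₁+(1-t)*b₀) * (a₀/b₀)
      = (t*a₁+(1-t)*a₀)/(t*b₁+(1-t)*b₀) := by
    field_simp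
    try ring
  rw [hx] at key
  have key2 := mul_le_mul_of_nonneg_left key hbt.le
  calc (t*a₁+(1-t)*a₀) * Real.log ((t*a₁+(1-t)*a₀)/(t*b₁+(1-t)*b₀))
      = (t*b₁+(1-t)*b₀) * ((t*a₁+(1-t)*a₀)/(t*b₁+(1-t)*b₀) *
          Real.log ((t*a₁+(1-t)*a₀)/(t*b₁+(1-t)*b₀))) := by
        field_simp <;> ring_nf
    _ ≤ (t*b₁+(1-t)*b₀) * (t*b₁/(t*b₁+(1-t)*b₀) * (a₁/b₁ * Real.log (a₁/b₁))
          + (1-t)*b₀/(t*b₁+(1-t)*b₀) * (a₀/b₀ * Real.log (a₀/b₀))) := key2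
    _ = t * (a₁ * Real.log (a₁/b₁)) + (1-t) * (a₀ * Real.log (a₀/b₀)) := by
        field_simp <;> ring_nf

lemma fD_convex (a₀ a₁ b₀ b₁ t : ℝ) (ha₀ : 0 < a₀) (ha₁ : 0 < a₁)
    (hb₀ : 0 < b₀) (hb₁ : 0 < b₁) (ht0 : 0 ≤ t) (ht1 : t ≤ 1) :
    fD (t*a₁+(1-t)*a₀) (t*b₁+(1-t)*b₀) ≤ t * fD a₁ b₁ + (1-t) * fD a₀ b₀ := by
  have h1 := klconv a₀ a₁ b₀ b₁ t ha₀ ha₁ hb₀ hb₁ ht0 ht1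
  have h2 := klconv b₀ b₁ a₀ a₁ t hb₀ hb₁ ha₀ ha₁ ht0 ht1
  unfold fD
  linarith

lemma FsymKL_eq_sum {X Y : Type*} [Fintype X] [Fintype Y]
    (pX : X → ℝ) (W : X → Y → ℝ) :
    FsymKL pX W = ∑ x, ∑ y, fD (pX x * W x y) (pX x * ∑ x', pX x' * W x' y) := by
  simp [FsymKL, fD, Finset.sum_add_distrib]

/-- For a fixed input pmf, the symmetrized KL divergence between the joint pmf
and the product of its marginals is a convex function of the (strictly positive) channel. -/
theorem stmt_11 {𝒳 𝒴 : Type*} [Fintype 𝒳] [Fintype 𝒴]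
    (pX : 𝒳 → ℝ)
    (hpX0 : ∀ x, 0 ≤ pX x) (hpX1 : ∀ x, pX x ≤ 1) (hpXsum : ∑ x, pX x = 1)
    (W₀ W₁ : 𝒳 → 𝒴 → ℝ)
    (hW₀pos : ∀ x y, 0 < W₀ x y) (hW₀le : ∀ x y, W₀ x y ≤ 1) (hW₀sum : ∀ x, ∑ y, W₀ x y = 1)
    (hW₁pos : ∀ x y, 0 < W₁ x y) (hW₁le : ∀ x y, W₁ x y ≤ 1) (hW₁sum : ∀ x, ∑ y, W₁ x y = 1)
    (t : ℝ) (ht0 : 0 ≤ t) (ht1 : t ≤ 1) :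
    FsymKL pX (fun x y => t * W₁ x y + (1 - t) * W₀ x y)
      ≤ t * FsymKL pX W₁ + (1 - t) * FsymKL pX W₀ := by
  classical
  obtain ⟨x₀, hx₀⟩ : ∃ x₀, 0 < pX x₀ := by
    by_contra h
    push_neg at h
    have hz : ∑ x, pX x = 0 :=
      Finset.sum_eq_zero fun x _ => le_antisymm (h x) (hpX0 x)
    rw [hpXsum] at hz; norm_num at hz
  rw [FsymKL_eq_sum, FsymKL_eq_sum, FsymKL_eq_sum,
    Finset.mul_sum, Finset.mul_sum, ← Finset.sum_add_distrib]
  apply Finset.sum_le_sum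
  intro x _
  rw [Finset.mul_sum, Finset.mul_sum, ← Finset.sum_add_distrib]
  apply Finset.sum_le_sum
  intro y _
  have hY : (∑ x', pX x' * (t * W₁ x' y + (1-t) * W₀ x' y))
      = t * (∑ x', pX x' * W₁ x' y) + (1-t) * (∑ x', pX x' * W₀ x' y) := by
    rw [Finset.mul_sum, Finset.mul_sum, ← Finset.sum_add_distrib]
    exact Finset.sum_congr rfl fun x _ => by ring
  rcases eq_or_lt_of_le (hpX0 x) with hx|hx
  · simp [fD, ← hx]
  · have hb₀ : 0 < ∑ x', pX x' * W₀ x' y :=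
      Finset.sum_pos' (fun i _ => mul_nonneg (hpX0 i) (hW₀pos i y).le)
        ⟨x₀, Finset.mem_univ _, mul_pos hx₀ (hW₀pos x₀ y)⟩
    have hb₁ : 0 < ∑ x', pX x' * W₁ x' y :=
      Finset.sum_pos' (fun i _ => mul_nonneg (hpX0 i) (hW₁pos i y).le)
        ⟨x₀, Finset.mem_univ _, mul_pos hx₀ (hW₁pos x₀ y)⟩
    have key := fD_convex (pX x * W₀ x y) (pX x * W₁ x y)
      (pX x * ∑ x', pX x' * W₀ x' y) (pX x * ∑ x', pX x' * W₁ x' y) t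
      (mul_pos hx (hW₀pos x y)) (mul_pos hx (hW₁pos x y))
      (mul_pos hx hb₀) (mul_pos hx hb₁) ht0 ht1
    have e1 : pX x * (t * W₁ x y + (1-t) * W₀ x y)
        = t * (pX x * W₁ x y) + (1-t) * (pX x * W₀ x y) := by ring
    have e2 : pX x * (∑ x', pX x' * (t * W₁ x' y + (1-t) * W₀ x' y))
        = t * (pX x * ∑ x', pX x' * W₁ x' y)
          + (1-t) * (pX x * ∑ x', pX x' * W₀ x' y) := by
      rw [hY]; ring
    calc fD (pX x * (t * W₁ x y + (1-t) * W₀ x y))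
          (pX x * ∑ x', pX x' * (t * W₁ x' y + (1-t) * W₀ x' y))
        = fD (t * (pX x * W₁ x y) + (1-t) * (pX x * W₀ x y))
            (t * (pX x * ∑ x', pX x' * W₁ x' y)
              + (1-t) * (pX x * ∑ x', pX x' * W₀ x' y)) := by rw [e1, e2]
      _ ≤ t * fD (pX x * W₁ x y) (pX x * ∑ x', pX x' * W₁ x' y)
            + (1-t) * fD (pX x * W₀ x y) (pX x * ∑ x', pX x' * W₀ x' y) := key
end

section
/- Let 0 < p < 1 and let W be the binary symmetric channel on {0,1} with crossover probability p, i.e., W(y|x) = 1 − p if y = x and W(y|x) = p if y ≠ x. For q ∈ [0,1], let the input be Bernoulli(q), let the joint pmf be P(x,y) = p_X(x)W(y|x) with p_X(1) = q, and let E(q) = Σ_{x,y} [P(x,y) − p_X(x)·p_Y(y)]·log W(y|x), where p_Y is the output pmf. Then for all q ∈ [0,1], E(q) ≤ −(1/2)·log(p(1−p)) − h(p), where h(p) = −p·log p − (1−p)·log(1−p), and equality holds at q = 1/2. -/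
open scoped BigOperators

/-- The symmetrized-KL expression `E(q)` for the binary symmetric channel with crossover
probability `p` and Bernoulli(`q`) input:
`E(q) = ∑ (x,y), (P(x,y) - pX x * pY y) * log (W x y)` with `pX 1 = q`, `pX 0 = 1 - q`,
`W(y|x) = 1 - p` if `y = x` and `p` otherwise, `P(x,y) = pX x * W x y`,
`pY y = ∑ x, pX x * W x y`. -/
noncomputable def bscE (p q : ℝ) : ℝ :=
  ∑ x : Bool, ∑ y : Bool,
    ((if x then q else 1 - q) * (if y = x then 1 - p else p)
        - (if x then q else 1 - q) *
            (∑ x' : Bool, (if x' then q else 1 - q) * (if y = x' then 1 - p else p)))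
      * Real.log (if y = x then 1 - p else p)

lemma bscE_eq (p q : ℝ) :
    bscE p q = 2 * q * (1 - q) * (1 - 2 * p) * (Real.log (1 - p) - Real.log p) := by
  simp [bscE, Fintype.sum_bool]
  ring

/-- For the binary symmetric channel with crossover probability `0 < p < 1`,
`E(q) ≤ -(1/2) log (p(1-p)) - h(p)` for all `q ∈ [0,1]`, with equality at `q = 1/2`,
where `h` is the binary entropy function in nats. -/
theorem stmt_12 (p : ℝ) (hp0 : 0 < p) (hp1 : p < 1) :
    (∀ q : ℝ, 0 ≤ q → q ≤ 1 →
      bscE p q ≤ -(1 / 2) * Real.log (p * (1 - p))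
        - (-(p * Real.log p) - (1 - p) * Real.log (1 - p))) ∧
    bscE p (1 / 2) = -(1 / 2) * Real.log (p * (1 - p))
        - (-(p * Real.log p) - (1 - p) * Real.log (1 - p)) := by
  have h1p : (0:ℝ) < 1 - p := by linarith
  have hlog : Real.log (p * (1 - p)) = Real.log p + Real.log (1 - p) :=
    Real.log_mul (ne_of_gt hp0) (ne_of_gt h1p)
  have htarget : -(1 / 2) * Real.log (p * (1 - p))
        - (-(p * Real.log p) - (1 - p) * Real.log (1 - p))
      = (1 / 2) * (1 - 2 * p) * (Real.log (1 - p) - Real.log p) := by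
    rw [hlog]; ring
  have hK : 0 ≤ (1 - 2 * p) * (Real.log (1 - p) - Real.log p) := by
    rcases le_or_gt p (1/2) with h | h
    · have : Real.log p ≤ Real.log (1 - p) :=
        Real.log_le_log hp0 (by linarith)
      have h2 : 0 ≤ 1 - 2 * p := by linarith
      exact mul_nonneg h2 (by linarith)
    · have : Real.log (1 - p) ≤ Real.log p :=
        Real.log_le_log h1p (by linarith)
      nlinarith
  constructor
  · intro q hq0 hq1
    rw [bscE_eq, htarget]
    nlinarith [mul_nonneg hK (sq_nonneg (1 - 2 * q))]
  · rw [bscE_eq, htarget]; ring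
end

section
/- Let A > 0, α > 0, and n ∈ ℕ with n ≥ 1. Let p = (p₀, p₁, …), p′ = (p′₀, p′₁, …), q = (q₀, q₁, …) be nonnegative sequences with Σᵢ pᵢ = 1, Σᵢ p′ᵢ = 1, and p′ = p ⋆ q (i.e., p′ᵢ = Σ_{j=0}^{i} p_j q_{i−j} for all i ≥ 0). Define P_n(A, α) = {(x₁,…,x_n) ∈ ℝⁿ : 0 ≤ xᵢ ≤ A for each i, (1/n)Σᵢ xᵢ ≤ α} and S_n(A, α, p) = { s ∈ ℝⁿ : sᵢ = Σ_{j=1}^{i} x_j p_{i−j} for 1 ≤ i ≤ n, for some x ∈ P_n(A, α) }. Then S_n(A, α, p′) ⊆ S_n(A, α, p). -/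
open scoped BigOperators
open Finset

/-- The constraint set `P_n(A, α)` of nonnegative inputs bounded by `A` with average at
most `α`. -/
def PnSet (n : ℕ) (A α : ℝ) : Set (Fin n → ℝ) :=
  {x | (∀ i, 0 ≤ x i ∧ x i ≤ A) ∧ (1 / (n : ℝ)) * ∑ i, x i ≤ α}

/-- The set `S_n(A, α, p)` of truncated convolutions `(x ⋆ p)_n` of inputs `x ∈ P_n(A, α)`
with the sequence `p`. -/
def SnSet (n : ℕ) (A α : ℝ) (p : ℕ → ℝ) : Set (Fin n → ℝ) :=
  {s | ∃ x ∈ PnSet n A α, ∀ i : Fin n,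
    s i = ∑ j ∈ Finset.Iic i, x j * p ((i : ℕ) - (j : ℕ))}

lemma fin_Iic_sum (n : ℕ) (i : Fin n) (F : ℕ → ℝ) :
    ∑ j ∈ Finset.Iic i, F (j : ℕ) = ∑ j ∈ Finset.range ((i:ℕ)+1), F j := by
  rw [show Finset.range ((i:ℕ)+1) = Finset.Iic (i:ℕ) by ext x; simp [Nat.lt_succ_iff],
    ← Fin.map_valEmbedding_Iic, Finset.sum_map]
  rfl

lemma swapconv (f g : ℕ → ℝ) (M : ℕ) :
    ∑ i ∈ range M, ∑ j ∈ range (i+1), f j * g (i - j)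
      = ∑ j ∈ range M, f j * ∑ k ∈ range (M - j), g k := by
  rw [Finset.sum_comm' (s' := fun j => Finset.Ico j M) (t' := range M)
    (by intro i j
        simp only [mem_range, mem_Ico, Nat.lt_succ_iff]
        omega)]
  refine Finset.sum_congr rfl fun j hj => ?_
  rw [Finset.mul_sum, Finset.sum_Ico_eq_sum_range]
  refine Finset.sum_congr rfl fun k hk => ?_
  simp

lemma qbound (p p' q : ℕ → ℝ)
    (hp : ∀ i, 0 ≤ p i) (hp' : ∀ i, 0 ≤ p' i) (hq : ∀ i, 0 ≤ q i)
    (hpsum : ∑' i, p i = 1) (hp'sum : ∑' i, p' i = 1)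
    (hconv : ∀ i, p' i = ∑ j ∈ Finset.range (i + 1), p j * q (i - j))
    (m : ℕ) : ∑ k ∈ range m, q k ≤ 1 := by
  have hsp : Summable p := by
    by_contra h; rw [tsum_eq_zero_of_not_summable h] at hpsum; norm_num at hpsum
  have hsp' : Summable p' := by
    by_contra h; rw [tsum_eq_zero_of_not_summable h] at hp'sum; norm_num at hp'sum
  have hQ : 0 ≤ ∑ k ∈ range m, q k := Finset.sum_nonneg fun k _ => hq k
  have key : ∀ N : ℕ, (∑ j ∈ range N, p j) * (∑ k ∈ range m, q k) ≤ 1 := by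
    intro N
    have h1 : (∑ j ∈ range N, p j) * (∑ k ∈ range m, q k)
        ≤ ∑ j ∈ range (N + m), p j * ∑ k ∈ range (N + m - j), q k := by
      rw [Finset.sum_mul]
      refine le_trans (Finset.sum_le_sum (fun j hj => ?_))
        (Finset.sum_le_sum_of_subset_of_nonneg
          (Finset.range_subset_range.2 (Nat.le_add_right _ _)) (fun j _ _ => ?_))
      · refine mul_le_mul_of_nonneg_left ?_ (hp j)
        refine Finset.sum_le_sum_of_subset_of_nonneg
          (Finset.range_subset_range.2 ?_) (fun k _ _ => hq k)
        simp at hj; omega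
      · exact mul_nonneg (hp j) (Finset.sum_nonneg fun k _ => hq k)
    have h2 : ∑ j ∈ range (N + m), p j * ∑ k ∈ range (N + m - j), q k
        = ∑ i ∈ range (N + m), p' i := by
      rw [← swapconv]
      exact Finset.sum_congr rfl fun i _ => (hconv i).symm
    have h3 : ∑ i ∈ range (N + m), p' i ≤ 1 := by
      rw [← hp'sum]
      exact hsp'.sum_le_tsum _ (fun i _ => hp' i)
    linarith
  have htd : Filter.Tendsto (fun N => (∑ j ∈ range N, p j) * (∑ k ∈ range m, q k))
      Filter.atTop (nhds (1 * (∑ k ∈ range m, q k))) := by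
    exact (hpsum ▸ hsp.hasSum.tendsto_sum_nat).mul_const _
  have := le_of_tendsto htd (Filter.Eventually.of_forall key)
  linarith

lemma coeff_mul_range (φ ψ : PowerSeries ℝ) (i : ℕ) :
    PowerSeries.coeff i (φ * ψ)
      = ∑ j ∈ range (i+1), PowerSeries.coeff j φ * PowerSeries.coeff (i-j) ψ := by
  rw [PowerSeries.coeff_mul, Finset.Nat.sum_antidiagonal_eq_sum_range_succ_mk]

lemma convassoc (p p' q X : ℕ → ℝ)
    (hconv : ∀ i, p' i = ∑ j ∈ Finset.range (i + 1), p j * q (i - j)) (i : ℕ) :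
    ∑ j ∈ range (i+1), X j * p' (i-j)
      = ∑ j ∈ range (i+1), (∑ l ∈ range (j+1), X l * q (j-l)) * p (i-j) := by
  have hP' : PowerSeries.mk p' = PowerSeries.mk p * PowerSeries.mk q := by
    ext k
    rw [coeff_mul_range]
    simpa using hconv k
  have e1 : ∑ j ∈ range (i+1), X j * p' (i-j)
      = PowerSeries.coeff i (PowerSeries.mk X * PowerSeries.mk p') := by
    rw [coeff_mul_range]; simp
  have e2 : ∑ j ∈ range (i+1), (∑ l ∈ range (j+1), X l * q (j-l)) * p (i-j)
      = PowerSeries.coeff i ((PowerSeries.mk X * PowerSeries.mk q) * PowerSeries.mk p) := by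
    rw [coeff_mul_range]
    refine Finset.sum_congr rfl fun j _ => ?_
    rw [coeff_mul_range]
    simp
  rw [e1, e2, hP']
  ring_nf

/-- If `p`, `p'` are nonnegative sequences summing to one with
`p' = p ⋆ q` for some nonnegative sequence `q`, then `S_n(A, α, p') ⊆ S_n(A, α, p)`. -/
theorem stmt_14 (n : ℕ) (hn : 1 ≤ n) (A α : ℝ) (hA : 0 < A) (hα : 0 < α)
    (p p' q : ℕ → ℝ)
    (hp : ∀ i, 0 ≤ p i) (hp' : ∀ i, 0 ≤ p' i) (hq : ∀ i, 0 ≤ q i)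
    (hpsum : ∑' i, p i = 1) (hp'sum : ∑' i, p' i = 1)
    (hconv : ∀ i, p' i = ∑ j ∈ Finset.range (i + 1), p j * q (i - j)) :
    SnSet n A α p' ⊆ SnSet n A α p := by
  have hQ := qbound p p' q hp hp' hq hpsum hp'sum hconv
  rintro s ⟨x, ⟨hx01, hxavg⟩, hsx⟩
  set X : ℕ → ℝ := fun j => if h : j < n then x ⟨j, h⟩ else 0 with hXdef
  have hxX : ∀ j : Fin n, X (j : ℕ) = x j := by
    intro j; simp [hXdef, j.isLt]
  have hX0 : ∀ j, 0 ≤ X j := by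
    intro j; by_cases h : j < n
    · simpa [hXdef, h] using (hx01 ⟨j, h⟩).1
    · simp [hXdef, h]
  have hXA : ∀ j, X j ≤ A := by
    intro j; by_cases h : j < n
    · simpa [hXdef, h] using (hx01 ⟨j, h⟩).2
    · simp [hXdef, h, hA.le]
  set Y : ℕ → ℝ := fun i => ∑ l ∈ range (i+1), X l * q (i-l) with hYdef
  refine ⟨fun i => Y i, ⟨fun i => ⟨?_, ?_⟩, ?_⟩, ?_⟩
  · exact Finset.sum_nonneg fun l _ => mul_nonneg (hX0 l) (hq _)
  · -- Y i ≤ A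
    calc Y (i : ℕ) ≤ ∑ l ∈ range ((i:ℕ)+1), A * q ((i:ℕ)-l) :=
          Finset.sum_le_sum fun l _ => mul_le_mul_of_nonneg_right (hXA l) (hq _)
      _ = A * ∑ l ∈ range ((i:ℕ)+1), q ((i:ℕ)-l) := by rw [Finset.mul_sum]
      _ = A * ∑ l ∈ range ((i:ℕ)+1), q l := by
          congr 1
          exact Finset.sum_range_reflect q ((i:ℕ)+1)
      _ ≤ A * 1 := mul_le_mul_of_nonneg_left (hQ _) hA.le
      _ = A := mul_one A
  · -- average bound
    have hsum : ∑ i : Fin n, Y (i : ℕ) ≤ ∑ i : Fin n, x i := by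
      rw [Fin.sum_univ_eq_sum_range (fun i => Y i) n]
      have : ∑ i ∈ range n, Y i = ∑ j ∈ range n, X j * ∑ k ∈ range (n - j), q k :=
        swapconv X q n
      rw [this]
      have h2 : ∑ j ∈ range n, X j * ∑ k ∈ range (n - j), q k ≤ ∑ j ∈ range n, X j :=
        Finset.sum_le_sum fun j _ => by
          calc X j * ∑ k ∈ range (n - j), q k ≤ X j * 1 :=
                mul_le_mul_of_nonneg_left (hQ _) (hX0 j)
            _ = X j := mul_one _
      refine le_trans h2 (le_of_eq ?_)
      rw [← Fin.sum_univ_eq_sum_range (fun j => X j) n]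
      exact Finset.sum_congr rfl fun j _ => hxX j
    have hn' : (0:ℝ) < (n:ℝ) := by exact_mod_cast hn
    have : (1 / (n:ℝ)) * ∑ i : Fin n, Y (i : ℕ) ≤ (1 / (n:ℝ)) * ∑ i : Fin n, x i := by
      apply mul_le_mul_of_nonneg_left hsum
      positivity
    linarith
  · -- convolution identity
    intro i
    have e1 : ∑ j ∈ Finset.Iic i, x j * p' ((i:ℕ) - (j:ℕ))
        = ∑ j ∈ range ((i:ℕ)+1), X j * p' ((i:ℕ) - j) := by
      rw [← fin_Iic_sum n i (fun j => X j * p' ((i:ℕ) - j))]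
      exact Finset.sum_congr rfl fun j _ => by rw [hxX j]
    have e2 : ∑ j ∈ Finset.Iic i, Y (j:ℕ) * p ((i:ℕ) - (j:ℕ))
        = ∑ j ∈ range ((i:ℕ)+1), Y j * p ((i:ℕ) - j) :=
      fin_Iic_sum n i (fun j => Y j * p ((i:ℕ) - j))
    rw [hsx i, e1, e2]
    exact convassoc p p' q X hconv (i:ℕ)
end

section
/- Let k ∈ ℕ, let X = (X₁, …, X_{k+1}) be a random vector taking finitely many values in [0, ∞)^{k+1}, let p₀, …, p_k ≥ 0, set S = Σ_{j=0}^{k} p_j · X_{k+1−j}, and assume E[S] > 0. Let λ₀ > 0 and let Y be ℕ-valued and, conditionally on X, Poisson with parameter λ₀ + S. Define βᵢ = E[Xᵢ]/E[S] and X̃ᵢ = βᵢ · S for i = 1, …, k+1, and let Ỹ be ℕ-valued and, conditionally on (X̃₁,…,X̃_{k+1}), Poisson with parameter λ₀ + Σ_{j=0}^{k} p_j · X̃_{k+1−j}. Then: (i) Σ_{j=0}^{k} p_j · X̃_{k+1−j} = S almost surely; (ii) E[X̃ᵢ] = E[Xᵢ] for each i; and (iii) I(X̃₁, …, X̃_{k+1};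 Ỹ) = I(X₁, …, X_{k+1}; Y). In particular, to maximize I(X₁,…,X_{k+1}; Y) over input distributions subject to given means, it suffices to consider inputs of the form Xᵢ = βᵢ · X for a single random variable X and nonnegative reals βᵢ. -/
open MeasureTheory ProbabilityTheory
open scoped BigOperators ENNReal

/-- Mutual information of two discrete random variables, with the convention `0 log 0 = 0`
(automatic from Lean's conventions `0/0 = 0`, `log 0 = 0`). -/
noncomputable def miDiscrete {Ω U V : Type*} [MeasureSpace Ω]
    (X : Ω → U) (Y : Ω → V) : ℝ :=
  ∑' (u : U) (v : V),
    (ℙ {ω | X ω = u ∧ Y ω = v}).toReal *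
      Real.log ((ℙ {ω | X ω = u ∧ Y ω = v}).toReal /
        ((ℙ {ω | X ω = u}).toReal * (ℙ {ω | Y ω = v}).toReal))

lemma key_mi {Ω : Type*} [MeasureSpace Ω] [IsProbabilityMeasure (ℙ : Measure Ω)]
    {n : ℕ} (Z : Ω → (Fin n → ℝ)) (hZmeas : Measurable Z)
    (hZfin : (Set.range Z).Finite) (Y : Ω → ℕ) (hY : Measurable Y)
    (Sv : (Fin n → ℝ) → ℝ) (pois : ℝ → ℕ → ℝ)
    (hpois : ∀ u ∈ Set.range Z, ∀ y, 0 ≤ pois (Sv u) y)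
    (hcond : ∀ u y, ℙ {ω | Z ω = u ∧ Y ω = y}
      = ℙ {ω | Z ω = u} * ENNReal.ofReal (pois (Sv u) y)) :
    miDiscrete Z Y = ∑' (s : ℝ), (ℙ {ω | Sv (Z ω) = s}).toReal *
      ∑' (y : ℕ), pois s y * Real.log (pois s y /
        (∑' (t : ℝ), (ℙ {ω | Sv (Z ω) = t}).toReal * pois t y)) := by
  classical
  set T : Finset (Fin n → ℝ) := hZfin.toFinset with hT
  have hZT : ∀ ω, Z ω ∈ T := fun ω => hZfin.mem_toFinset.2 ⟨ω, rfl⟩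
  set PZ : (Fin n → ℝ) → ℝ := fun u => (ℙ {ω | Z ω = u}).toReal with hPZ
  set PW : ℝ → ℝ := fun s => (ℙ {ω | Sv (Z ω) = s}).toReal with hPWdef
  set PYr : ℕ → ℝ := fun y => (ℙ {ω | Y ω = y}).toReal with hPYr
  have hmeasZ : ∀ u, MeasurableSet {ω | Z ω = u} := fun u =>
    hZmeas (measurableSet_singleton u)
  have hne : ∀ u, ℙ {ω | Z ω = u} ≠ ⊤ := fun u => measure_ne_top _ _
  have hPZ0 : ∀ u ∉ T, ℙ {ω | Z ω = u} = 0 := by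
    intro u hu
    have : {ω | Z ω = u} = ∅ := by
      ext ω; simp only [Set.mem_setOf_eq, Set.mem_empty_iff_false, iff_false]
      intro h; exact hu (h ▸ hZT ω)
    simp [this]
  -- fiber decomposition of {Sv ∘ Z = s}
  have hWset : ∀ s : ℝ, {ω | Sv (Z ω) = s}
      = ⋃ u ∈ T.filter (fun u => Sv u = s), {ω | Z ω = u} := by
    intro s; ext ω
    simp only [Set.mem_setOf_eq, Set.mem_iUnion, Finset.mem_filter]
    constructor
    · intro h; exact ⟨Z ω, ⟨⟨hZT ω, h⟩, rfl⟩⟩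
    · rintro ⟨u, ⟨⟨_, hsu⟩, rfl⟩⟩; exact hsu
  have hPWm : ∀ s : ℝ, ℙ {ω | Sv (Z ω) = s}
      = ∑ u ∈ T.filter (fun u => Sv u = s), ℙ {ω | Z ω = u} := by
    intro s
    rw [hWset s]
    refine measure_biUnion_finset ?_ (fun u _ => hmeasZ u)
    intro u _ v _ huv
    refine Set.disjoint_left.2 ?_
    intro ω h1 h2
    exact huv ((h1 : Z ω = u) ▸ (h2 : Z ω = v))
  have hPWr : ∀ s : ℝ, PW s = ∑ u ∈ T.filter (fun u => Sv u = s), PZ u := by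
    intro s
    rw [hPWdef]; simp only [hPWm s]
    exact ENNReal.toReal_sum (fun u _ => hne u)
  have hPW0 : ∀ s ∉ T.image Sv, PW s = 0 := by
    intro s hs
    rw [hPWr s]
    have : T.filter (fun u => Sv u = s) = ∅ := by
      refine Finset.filter_eq_empty_iff.2 ?_
      intro u hu hsu
      exact hs (Finset.mem_image.2 ⟨u, hu, hsu⟩)
    simp [this]
  -- toReal of joint
  have hjoint : ∀ u ∈ T, ∀ y, (ℙ {ω | Z ω = u ∧ Y ω = y}).toReal
      = PZ u * pois (Sv u) y := by
    intro u hu y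
    rw [hcond u y, ENNReal.toReal_mul, ENNReal.toReal_ofReal
      (hpois u (hZfin.mem_toFinset.1 hu) y)]
  -- marginal of Y
  have hYset : ∀ y : ℕ, {ω | Y ω = y} = ⋃ u ∈ T, {ω | Z ω = u ∧ Y ω = y} := by
    intro y; ext ω
    simp only [Set.mem_setOf_eq, Set.mem_iUnion]
    constructor
    · intro h; exact ⟨Z ω, hZT ω, rfl, h⟩
    · rintro ⟨u, _, _, h⟩; exact h
  have hmeasZY : ∀ u y, MeasurableSet {ω | Z ω = u ∧ Y ω = y} := by
    intro u y
    have : {ω | Z ω = u ∧ Y ω = y} = {ω | Z ω = u} ∩ {ω | Y ω = y} := rfl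
    rw [this]
    exact (hmeasZ u).inter (hY (measurableSet_singleton y))
  have hPY : ∀ y : ℕ, PYr y = ∑ u ∈ T, PZ u * pois (Sv u) y := by
    intro y
    have : ℙ {ω | Y ω = y} = ∑ u ∈ T, ℙ {ω | Z ω = u ∧ Y ω = y} := by
      rw [hYset y]
      refine measure_biUnion_finset ?_ (fun u _ => hmeasZY u y)
      intro u _ v _ huv
      refine Set.disjoint_left.2 ?_
      intro ω h1 h2
      exact huv (h1.1 ▸ h2.1)
    rw [hPYr]; simp only [this]
    rw [ENNReal.toReal_sum (fun u _ => measure_ne_top _ _)]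
    exact Finset.sum_congr rfl (fun u hu => hjoint u hu y)
  -- regrouping a sum over T by fibers of Sv
  have hregroup : ∀ g : ℝ → ℝ, ∑ u ∈ T, PZ u * g (Sv u)
      = ∑ s ∈ T.image Sv, PW s * g s := by
    intro g
    rw [← Finset.sum_fiberwise_of_maps_to (fun u hu => Finset.mem_image_of_mem Sv hu)
      (fun u => PZ u * g (Sv u))]
    refine Finset.sum_congr rfl ?_
    intro s _
    rw [hPWr s, Finset.sum_mul]
    refine Finset.sum_congr rfl ?_
    intro u hu
    rw [(Finset.mem_filter.1 hu).2]
  have hq : ∀ y : ℕ, PYr y = ∑' (t : ℝ), PW t * pois t y := by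
    intro y
    rw [tsum_eq_sum (s := T.image Sv) (fun t ht => by rw [hPW0 t ht, zero_mul]),
      ← hregroup (fun s => pois s y), hPY y]
  -- the per-u inner sum
  have hterm : ∀ u : (Fin n → ℝ),
      (∑' y : ℕ, (ℙ {ω | Z ω = u ∧ Y ω = y}).toReal *
        Real.log ((ℙ {ω | Z ω = u ∧ Y ω = y}).toReal /
          ((ℙ {ω | Z ω = u}).toReal * (ℙ {ω | Y ω = y}).toReal)))
      = PZ u * ∑' y : ℕ, pois (Sv u) y * Real.log (pois (Sv u) y / PYr y) := by
    intro u
    by_cases h0 : ℙ {ω | Z ω = u} = 0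
    · have hz : ∀ y : ℕ, ℙ {ω | Z ω = u ∧ Y ω = y} = 0 := by
        intro y; rw [hcond u y, h0, zero_mul]
      have : PZ u = 0 := by rw [hPZ]; simp [h0]
      simp [hz, this]
    · have hu : u ∈ T := by
        by_contra hu; exact h0 (hPZ0 u hu)
      have hPZne : PZ u ≠ 0 := by
        rw [hPZ]
        simp only [ne_eq, ENNReal.toReal_eq_zero_iff]
        push_neg
        exact ⟨h0, hne u⟩
      rw [← tsum_mul_left]
      refine tsum_congr ?_
      intro y
      rw [hjoint u hu y, mul_div_mul_left _ _ hPZne, mul_assoc]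
  -- now compute miDiscrete
  rw [miDiscrete]
  calc (∑' (u : Fin n → ℝ) (y : ℕ), (ℙ {ω | Z ω = u ∧ Y ω = y}).toReal *
        Real.log ((ℙ {ω | Z ω = u ∧ Y ω = y}).toReal /
          ((ℙ {ω | Z ω = u}).toReal * (ℙ {ω | Y ω = y}).toReal)))
      = ∑' (u : Fin n → ℝ), PZ u * ∑' y : ℕ,
          pois (Sv u) y * Real.log (pois (Sv u) y / PYr y) := tsum_congr hterm
    _ = ∑ u ∈ T, PZ u * ∑' y : ℕ,
          pois (Sv u) y * Real.log (pois (Sv u) y / PYr y) := by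
        refine tsum_eq_sum ?_
        intro u hu
        have : PZ u = 0 := by simp only [hPZ]; rw [hPZ0 u hu]; simp
        rw [this, zero_mul]
    _ = ∑ s ∈ T.image Sv, PW s * ∑' y : ℕ,
          pois s y * Real.log (pois s y / PYr y) :=
        hregroup (fun s => ∑' y : ℕ, pois s y * Real.log (pois s y / PYr y))
    _ = ∑' (s : ℝ), PW s * ∑' y : ℕ,
          pois s y * Real.log (pois s y / PYr y) := by
        refine (tsum_eq_sum ?_).symm
        intro s hs
        rw [hPW0 s hs, zero_mul]
    _ = _ := by
        refine tsum_congr ?_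
        intro s
        congr 1
        refine tsum_congr ?_
        intro y
        rw [← hq y]

/-- With `S = ∑_{j=0}^{k} p_j X_{k+1-j}`, `E[S] > 0`, `βᵢ = E[Xᵢ]/E[S]`,
`X̃ᵢ = βᵢ S`, and `Ỹ` conditionally Poisson with parameter `λ₀ + ∑_j p_j X̃_{k+1-j}` given `X̃`:
(i) `∑_j p_j X̃_{k+1-j} = S` a.s.; (ii) `E[X̃ᵢ] = E[Xᵢ]`; (iii) `I(X̃; Ỹ) = I(X; Y)`.
In particular, to maximize `I(X₁,…,X_{k+1}; Y)` subject to given means it suffices to consider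
inputs of the form `Xᵢ = βᵢ X`. -/
theorem stmt_16 {Ω : Type*} [MeasureSpace Ω] [IsProbabilityMeasure (ℙ : Measure Ω)]
    (k : ℕ) (X : Ω → (Fin (k + 1) → ℝ))
    (hXmeas : Measurable X) (hXfin : (Set.range X).Finite)
    (hXpos : ∀ ω i, 0 ≤ X ω i)
    (p : Fin (k + 1) → ℝ) (hp : ∀ j, 0 ≤ p j)
    (lam0 : ℝ) (hlam0 : 0 < lam0)
    (Y : Ω → ℕ) (hY : Measurable Y)
    (S : Ω → ℝ) (hS : S = fun ω => ∑ j, p j * X ω j.rev)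
    (hES : 0 < ∫ ω, S ω ∂ℙ)
    (hcond : ∀ (u : Fin (k + 1) → ℝ) (y : ℕ),
      ℙ {ω | X ω = u ∧ Y ω = y}
        = ℙ {ω | X ω = u} *
            ENNReal.ofReal (Real.exp (-(lam0 + ∑ j, p j * u j.rev)) *
              (lam0 + ∑ j, p j * u j.rev) ^ y / (Nat.factorial y)))
    (β : Fin (k + 1) → ℝ) (hβ : ∀ i, β i = (∫ ω, X ω i ∂ℙ) / (∫ ω, S ω ∂ℙ))
    (Xt : Ω → (Fin (k + 1) → ℝ)) (hXt : Xt = fun ω i => β i * S ω)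
    (Yt : Ω → ℕ) (hYt : Measurable Yt)
    (hcondt : ∀ (u : Fin (k + 1) → ℝ) (y : ℕ),
      ℙ {ω | Xt ω = u ∧ Yt ω = y}
        = ℙ {ω | Xt ω = u} *
            ENNReal.ofReal (Real.exp (-(lam0 + ∑ j, p j * u j.rev)) *
              (lam0 + ∑ j, p j * u j.rev) ^ y / (Nat.factorial y))) :
    (∀ᵐ ω ∂ℙ, ∑ j, p j * Xt ω j.rev = S ω) ∧
    (∀ i, ∫ ω, Xt ω i ∂ℙ = ∫ ω, X ω i ∂ℙ) ∧
    miDiscrete Xt Yt = miDiscrete X Y := by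
  classical
  set Sv : (Fin (k + 1) → ℝ) → ℝ := fun u => ∑ j, p j * u j.rev with hSv
  set pois : ℝ → ℕ → ℝ := fun s y =>
    Real.exp (-(lam0 + s)) * (lam0 + s) ^ y / (Nat.factorial y) with hpoisdef
  have hSX : ∀ ω, S ω = Sv (X ω) := fun ω => by rw [hS]
  -- integrability of components
  have hint : ∀ i, Integrable (fun ω => X ω i) ℙ := by
    intro i
    obtain ⟨C, hC⟩ := (hXfin.image fun u => |u i|).bddAbove
    refine ⟨((measurable_pi_apply i).comp hXmeas).aestronglyMeasurable, ?_⟩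
    refine HasFiniteIntegral.of_bounded (C := C) (ae_of_all _ fun ω => ?_)
    rw [Real.norm_eq_abs]
    exact hC ⟨X ω, ⟨ω, rfl⟩, rfl⟩
  have hSint : Integrable S ℙ := by
    rw [hS]
    exact integrable_finset_sum _ fun j _ => (hint j.rev).const_mul (p j)
  set ES := ∫ ω, S ω ∂ℙ with hESdef
  have hESne : ES ≠ 0 := ne_of_gt hES
  have hESsum : ES = ∑ j, p j * ∫ ω, X ω j.rev ∂ℙ := by
    rw [hESdef, hS]
    rw [integral_finset_sum _ fun j _ => (hint j.rev).const_mul (p j)]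
    exact Finset.sum_congr rfl fun j _ => integral_const_mul (p j) _
  have hsum1 : ∑ j, p j * β j.rev = 1 := by
    have : ∀ j : Fin (k + 1), p j * β j.rev = p j * (∫ ω, X ω j.rev ∂ℙ) / ES := by
      intro j; rw [hβ j.rev, mul_div_assoc]
    rw [Finset.sum_congr rfl fun j _ => this j, ← Finset.sum_div, ← hESsum,
      div_self hESne]
  -- part (i), pointwise
  have hpt : ∀ ω, ∑ j, p j * Xt ω j.rev = S ω := by
    intro ω
    simp only [hXt]
    have : ∑ j, p j * (β j.rev * S ω) = (∑ j, p j * β j.rev) * S ω := by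
      rw [Finset.sum_mul]
      exact Finset.sum_congr rfl fun j _ => (mul_assoc _ _ _).symm
    rw [this, hsum1, one_mul]
  refine ⟨ae_of_all _ hpt, ?_, ?_⟩
  · -- part (ii)
    intro i
    rw [hXt]
    simp only []
    rw [integral_const_mul, hβ i, div_mul_cancel₀ _ hESne]
  · -- part (iii)
    have hSmeas : Measurable S := by
      rw [hS]
      exact Finset.measurable_sum _ fun j _ =>
        ((measurable_pi_apply j.rev).comp hXmeas).const_mul (p j)
    have hXtmeas : Measurable Xt := by
      rw [hXt]
      exact measurable_pi_lambda _ fun i => hSmeas.const_mul (β i)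
    have hSfin : (Set.range S).Finite := by
      refine (hXfin.image Sv).subset ?_
      rintro _ ⟨ω, rfl⟩
      exact ⟨X ω, ⟨ω, rfl⟩, (hSX ω).symm⟩
    have hXtfin : (Set.range Xt).Finite := by
      refine (hSfin.image (fun s => fun i => β i * s)).subset ?_
      rintro _ ⟨ω, rfl⟩
      exact ⟨S ω, ⟨ω, rfl⟩, by rw [hXt]⟩
    have hβpos : ∀ i, 0 ≤ β i := by
      intro i
      rw [hβ i]
      exact div_nonneg (integral_nonneg fun ω => hXpos ω i) hES.le
    have hSpos : ∀ ω, 0 ≤ S ω := by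
      intro ω
      rw [hS]
      exact Finset.sum_nonneg fun j _ => mul_nonneg (hp j) (hXpos ω j.rev)
    have hpoisnn : ∀ s : ℝ, 0 ≤ s → ∀ y, 0 ≤ pois s y := by
      intro s hs y
      have h1 : (0 : ℝ) ≤ lam0 + s := add_nonneg hlam0.le hs
      rw [hpoisdef]
      exact div_nonneg (mul_nonneg (Real.exp_nonneg _) (pow_nonneg h1 _))
        (Nat.cast_nonneg _)
    have hpois1 : ∀ u ∈ Set.range X, ∀ y, 0 ≤ pois (Sv u) y := by
      rintro _ ⟨ω, rfl⟩ y
      exact hpoisnn _ (by rw [← hSX ω]; exact hSpos ω) y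
    have hSXt : ∀ ω, Sv (Xt ω) = S ω := fun ω => hpt ω
    have hpois2 : ∀ u ∈ Set.range Xt, ∀ y, 0 ≤ pois (Sv u) y := by
      rintro _ ⟨ω, rfl⟩ y
      exact hpoisnn _ (by rw [hSXt ω]; exact hSpos ω) y
    have h1 := key_mi X hXmeas hXfin Y hY Sv pois hpois1 (fun u y => hcond u y)
    have h2 := key_mi Xt hXtmeas hXtfin Yt hYt Sv pois hpois2 (fun u y => hcondt u y)
    rw [h1, h2]
    have hSS : ∀ ω, Sv (Xt ω) = Sv (X ω) := fun ω => (hSXt ω).trans (hSX ω)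
    simp only [hSS]
end

section
/- Let S be a finite set, k ≥ 1, r ≥ 1, and let q be a pmf on S^{k+1} whose marginal on the first k coordinates equals its marginal on the last k coordinates, i.e., Σ_{a} q(x₁,…,x_k, a) = Σ_{a} q(a, x₁,…,x_k) for all (x₁,…,x_k) ∈ S^k. Define a process X₁, …, X_{k+r} by: (X₁,…,X_{k+1}) is distributed according to q, and for k+2 ≤ i ≤ k+r, conditionally on (X₁,…,X_{i−1}), the variable Xᵢ depends only on (X_{i−k},…,X_{i−1}) and P(Xᵢ = a | X_{i−k} = x₁, …, X_{i−1} = x_k) = q(x₁,…,x_k,a) / Σ_{b} q(x₁,…,x_k,b) whenever the denominator is positive. Then for every i with k+1 ≤ i ≤ k+r, the random vector (X_{i−k}, X_{i−k+1}, …, Xᵢ) is distributed according to q. -/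
open MeasureTheory ProbabilityTheory
open scoped BigOperators ENNReal

section Aux
variable {S : Type*} [Fintype S] [MeasurableSpace S] [MeasurableSingletonClass S]
    {Ω : Type*} [MeasureSpace Ω]

omit [Fintype S] in
lemma aux_hist_meas (X : ℕ → Ω → S) (hX : ∀ i, Measurable (X i)) {c : ℕ → ℕ} (n : ℕ)
    (g : Fin n → S) :
    MeasurableSet {ω | ∀ t : Fin n, X (c (t : ℕ)) ω = g t} := by
  have : {ω | ∀ t : Fin n, X (c (t : ℕ)) ω = g t}
      = ⋂ t : Fin n, X (c (t : ℕ)) ⁻¹' {g t} := by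
    ext ω; simp [Set.mem_iInter]
  rw [this]
  exact MeasurableSet.iInter fun t => (hX _) (measurableSet_singleton _)

lemma aux_partition (X : ℕ → Ω → S) (hX : ∀ i, Measurable (X i)) (n : ℕ)
    (A : Set Ω) (hA : MeasurableSet A) :
    ℙ A = ∑ g : Fin n → S, ℙ (A ∩ {ω | ∀ t : Fin n, X (1 + (t : ℕ)) ω = g t}) := by
  have hcover : A = ⋃ g : Fin n → S, A ∩ {ω | ∀ t : Fin n, X (1 + (t:ℕ)) ω = g t} := by
    ext ω
    constructor
    · intro hω
      exact Set.mem_iUnion.2 ⟨fun t => X (1 + (t:ℕ)) ω, hω, fun t => rfl⟩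
    · intro hω; rcases Set.mem_iUnion.1 hω with ⟨g, hg, _⟩; exact hg
  have hdisj : Pairwise (Function.onFun Disjoint
      fun g : Fin n → S => A ∩ {ω | ∀ t : Fin n, X (1 + (t:ℕ)) ω = g t}) := by
    intro g g' hgg'
    refine Set.disjoint_left.2 ?_
    rintro ω ⟨_, hg⟩ ⟨_, hg'⟩
    exact hgg' (funext fun t => (hg t).symm.trans (hg' t))
  conv_lhs => rw [hcover]
  rw [measure_iUnion hdisj (fun g => hA.inter (aux_hist_meas X hX (c := fun j => 1 + j) n g)),
    tsum_fintype]

end Aux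

/-- Let `q` be a pmf on `S^{k+1}` whose marginal on the first `k` coordinates
equals its marginal on the last `k` coordinates. Consider the order-`k` Markov process
`X₁, …, X_{k+r}` started from `q` on `(X₁, …, X_{k+1})` and evolving with the conditional
distribution of the last coordinate of `q` given the first `k` (depending only on the last `k`
symbols of the history). Then for every `k+1 ≤ i ≤ k+r`, the vector `(X_{i-k}, …, X_i)` is
distributed according to `q`. -/
theorem stmt_17 {S : Type*} [Fintype S] [MeasurableSpace S] [MeasurableSingletonClass S]
    {Ω : Type*} [MeasureSpace Ω] [IsProbabilityMeasure (ℙ : Measure Ω)]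
    (k r : ℕ) (hk : 1 ≤ k) (hr : 1 ≤ r)
    (q : (Fin (k + 1) → S) → ℝ)
    (hq0 : ∀ v, 0 ≤ q v) (hq1 : ∀ v, q v ≤ 1) (hqsum : ∑ v, q v = 1)
    (hstat : ∀ w : Fin k → S, ∑ a, q (Fin.snoc w a) = ∑ a, q (Fin.cons a w))
    (X : ℕ → Ω → S) (hX : ∀ i, Measurable (X i))
    (hinit : ∀ v : Fin (k + 1) → S,
      ℙ {ω | ∀ t : Fin (k + 1), X (1 + (t : ℕ)) ω = v t} = ENNReal.ofReal (q v))
    (hmarkov : ∀ i, k + 2 ≤ i → i ≤ k + r → ∀ (h : ℕ → S) (a : S),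
      0 < ∑ b, q (Fin.snoc (fun t : Fin k => h (i - k + (t : ℕ))) b) →
      ℙ {ω | (∀ j, 1 ≤ j → j ≤ i - 1 → X j ω = h j) ∧ X i ω = a}
        = ℙ {ω | ∀ j, 1 ≤ j → j ≤ i - 1 → X j ω = h j}
          * ENNReal.ofReal (q (Fin.snoc (fun t : Fin k => h (i - k + (t : ℕ))) a)
              / ∑ b, q (Fin.snoc (fun t : Fin k => h (i - k + (t : ℕ))) b))) :
    ∀ i, k + 1 ≤ i → i ≤ k + r → ∀ v : Fin (k + 1) → S,
      ℙ {ω | ∀ t : Fin (k + 1), X (i - k + (t : ℕ)) ω = v t} = ENNReal.ofReal (q v) := by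
  intro i hi
  induction i, hi using Nat.le_induction with
  | base =>
    intro _ v
    rw [show k + 1 - k = 1 by omega]
    exact hinit v
  | succ i hik IH =>
    intro hile v
    have hik1 : k ≤ i := by omega
    have IH' := IH (by omega)
    rw [show i + 1 - k = i - k + 1 by omega]
    set w : Fin k → S := fun t => v t.castSucc with hw
    set a₀ : S := v (Fin.last k) with ha₀
    have hv : v = Fin.snoc w a₀ := by
      funext t
      refine Fin.lastCases ?_ ?_ t
      · simp [ha₀]
      · intro s; simp [hw]
    set D : ℝ := ∑ b, q (Fin.snoc w b) with hD
    set E : Set Ω := {ω | ∀ t : Fin (k + 1), X (i - k + 1 + (t : ℕ)) ω = v t} with hEdef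
    set K : Set Ω := {ω | ∀ t : Fin k, X (i - k + 1 + (t : ℕ)) ω = w t} with hKdef
    have hEmeas : MeasurableSet E :=
      aux_hist_meas X hX (c := fun j => i - k + 1 + j) (k + 1) v
    have hKmeas : MeasurableSet K :=
      aux_hist_meas X hX (c := fun j => i - k + 1 + j) k w
    have hEK : E ⊆ K := by
      intro ω hω t
      have h1 := hω t.castSucc
      rwa [Fin.coe_castSucc] at h1
    -- Step A : ℙ K = ofReal D
    have hK : ℙ K = ENNReal.ofReal D := by
      have hcover : K = ⋃ a : S,
          {ω | ∀ t : Fin (k + 1), X (i - k + (t : ℕ)) ω = (Fin.cons a w : Fin (k + 1) → S) t} := by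
        ext ω
        constructor
        · intro hω
          refine Set.mem_iUnion.2 ⟨X (i - k) ω, ?_⟩
          show ∀ t : Fin (k + 1), X (i - k + (t : ℕ)) ω = (Fin.cons (X (i - k) ω) w : Fin (k + 1) → S) t
          intro t
          induction t using Fin.cases with
          | zero => simp
          | succ s =>
            rw [show i - k + ((s.succ : Fin (k + 1)) : ℕ) = i - k + 1 + (s : ℕ) by
              simp [Fin.val_succ]; omega]
            simpa using hω s
        · intro hω t
          rcases Set.mem_iUnion.1 hω with ⟨a, ha⟩
          have h1 := ha t.succ
          rw [show i - k + ((t.succ : Fin (k + 1)) : ℕ) = i - k + 1 + (t : ℕ) by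
            simp [Fin.val_succ]; omega] at h1
          simpa using h1
      rw [hcover, measure_iUnion ?_ ?_]
      · rw [tsum_fintype]
        have hterm : ∀ a : S,
            ℙ {ω | ∀ t : Fin (k + 1), X (i - k + (t : ℕ)) ω = (Fin.cons a w : Fin (k + 1) → S) t}
              = ENNReal.ofReal (q (Fin.cons a w)) := fun a => IH' (Fin.cons a w)
        rw [Finset.sum_congr rfl fun a _ => hterm a,
          ← ENNReal.ofReal_sum_of_nonneg (fun a _ => hq0 _), hD, hstat w]
      · intro a a' haa'
        refine Set.disjoint_left.2 ?_
        intro ω ha ha'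
        have h1 := ha 0
        have h2 := ha' 0
        simp at h1 h2
        exact haa' (h1.symm.trans h2)
      · exact fun a => aux_hist_meas X hX (c := fun j => i - k + j) (k + 1) (Fin.cons a w)
    by_cases hDpos : 0 < D
    · -- positive denominator case
      have hper : ∀ g : Fin i → S,
          ℙ (E ∩ {ω | ∀ t : Fin i, X (1 + (t : ℕ)) ω = g t})
            = ℙ (K ∩ {ω | ∀ t : Fin i, X (1 + (t : ℕ)) ω = g t})
              * ENNReal.ofReal (q v / D) := by
        intro g
        set H : Set Ω := {ω | ∀ t : Fin i, X (1 + (t : ℕ)) ω = g t} with hHdef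
        set hg : ℕ → S := fun j => if hj : j - 1 < i then g ⟨j - 1, hj⟩ else v 0 with hhg
        have hgH : ∀ ω, (∀ j, 1 ≤ j → j ≤ i → X j ω = hg j) ↔ ω ∈ H := by
          intro ω
          constructor
          · intro hbig t
            have h1 := hbig (1 + (t : ℕ)) (by omega) (by omega)
            have ht : 1 + (t : ℕ) - 1 < i := by omega
            simp only [hhg] at h1
            rw [dif_pos ht] at h1
            convert h1 using 2
            exact Fin.ext (show (t : ℕ) = 1 + (t : ℕ) - 1 by omega)
          · intro hω j hj1 hj2
            have h1 := hω ⟨j - 1, by omega⟩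
            rw [show 1 + ((⟨j - 1, by omega⟩ : Fin i) : ℕ) = j by simp; omega] at h1
            rw [h1]
            simp only [hhg]
            rw [dif_pos (show j - 1 < i by omega)]
        by_cases hC : ∀ t : Fin k, hg (i - k + 1 + (t : ℕ)) = w t
        · -- compatible history
          have hfun : (fun t : Fin k => hg (i + 1 - k + (t : ℕ))) = w := by
            funext t
            rw [show i + 1 - k + (t : ℕ) = i - k + 1 + (t : ℕ) by omega]
            exact hC t
          have hm := hmarkov (i + 1) (by omega) (by omega) hg a₀
            (by rw [hfun]; exact hDpos)
          rw [hfun] at hm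
          simp only [Nat.add_sub_cancel] at hm
          have hHsub : ∀ ω, ω ∈ H → (∀ t : Fin k, X (i - k + 1 + (t : ℕ)) ω = w t) := by
            intro ω hω t
            have h1 := ((hgH ω).2 hω) (i - k + 1 + (t : ℕ)) (by omega)
              (by have := t.isLt; omega)
            rw [h1, hC t]
          have hset1 : {ω | (∀ j, 1 ≤ j → j ≤ i → X j ω = hg j) ∧ X (i + 1) ω = a₀}
              = E ∩ H := by
            ext ω
            simp only [Set.mem_setOf_eq, Set.mem_inter_iff]
            constructor
            · rintro ⟨hhist, hlast⟩
              have hH1 : ω ∈ H := (hgH ω).1 hhist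
              refine ⟨?_, hH1⟩
              intro t
              refine Fin.lastCases ?_ ?_ t
              · rw [show i - k + 1 + ((Fin.last k : Fin (k + 1)) : ℕ) = i + 1 by
                  simp [Fin.val_last]; omega]
                rw [hlast, ha₀]
              · intro s
                rw [Fin.coe_castSucc]
                rw [hHsub ω hH1 s]
            · rintro ⟨hE', hH1⟩
              refine ⟨(hgH ω).2 hH1, ?_⟩
              have h1 := hE' (Fin.last k)
              rw [show i - k + 1 + ((Fin.last k : Fin (k + 1)) : ℕ) = i + 1 by
                simp [Fin.val_last]; omega] at h1
              rw [h1, ha₀]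
          have hset2 : {ω | ∀ j, 1 ≤ j → j ≤ i → X j ω = hg j} = H := by
            ext ω; exact hgH ω
          rw [hset1, hset2] at hm
          have hKH : K ∩ H = H := Set.inter_eq_right.2 (fun ω hω => hHsub ω hω)
          rw [hm, hKH, hv]
        · -- incompatible history
          push_neg at hC
          obtain ⟨t, ht⟩ := hC
          have hKH : K ∩ H = ∅ := by
            ext ω
            simp only [Set.mem_inter_iff, Set.mem_empty_iff_false, iff_false, not_and]
            intro hωK hωH
            have h1 := ((hgH ω).2 hωH) (i - k + 1 + (t : ℕ)) (by omega)
              (by have := t.isLt; omega)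
            exact ht (h1.symm.trans (hωK t))
          have hEH : E ∩ H = ∅ := by
            apply Set.eq_empty_of_subset_empty
            rw [← hKH]
            exact Set.inter_subset_inter_left _ hEK
          rw [hEH, hKH]
          simp
      calc ℙ E = ∑ g : Fin i → S,
            ℙ (E ∩ {ω | ∀ t : Fin i, X (1 + (t : ℕ)) ω = g t}) :=
          aux_partition X hX i E hEmeas
        _ = ∑ g : Fin i → S,
            ℙ (K ∩ {ω | ∀ t : Fin i, X (1 + (t : ℕ)) ω = g t})
              * ENNReal.ofReal (q v / D) := Finset.sum_congr rfl fun g _ => hper g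
        _ = (∑ g : Fin i → S,
            ℙ (K ∩ {ω | ∀ t : Fin i, X (1 + (t : ℕ)) ω = g t}))
              * ENNReal.ofReal (q v / D) := by rw [Finset.sum_mul]
        _ = ℙ K * ENNReal.ofReal (q v / D) := by rw [← aux_partition X hX i K hKmeas]
        _ = ENNReal.ofReal (q v) := by
            rw [hK, ← ENNReal.ofReal_mul hDpos.le, mul_div_cancel₀ _ (ne_of_gt hDpos)]
    · -- zero denominator case
      have hDle : D ≤ 0 := le_of_not_gt hDpos
      have hqv : q v ≤ 0 := by
        rw [hv]
        calc q (Fin.snoc w a₀) ≤ D :=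
            Finset.single_le_sum (fun b _ => hq0 _) (Finset.mem_univ a₀)
          _ ≤ 0 := hDle
      have h1 : ℙ E = 0 := by
        have h2 : ℙ E ≤ ℙ K := measure_mono hEK
        rw [hK, ENNReal.ofReal_eq_zero.2 hDle] at h2
        exact le_antisymm h2 zero_le
      rw [h1, Eq.symm (ENNReal.ofReal_eq_zero.2 hqv)]
end
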